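/- arXiv:1801.03180 — 7 statements merged into one kernel-verified Lean document; each statement's English description precedes it below -/
import Mathlib

section
/- Let p be an odd prime, α ≥ 1, and let a, b ∈ ℤ/p^αℤ with G(a,b) := p^{-α} · Σ_{t ∈ ℤ/p^αℤ} e^{2πi(at + bt²)/p^α}. If p^α/gcd(b, p^α) ≥ p^α/gcd(a, p^α) and gcd(b,p^α) < p^α, then |G(a,b)| = (gcd(b,p^α)/p^α)^{1/2}; and if p^α/gcd(a,p^α) > p^α/gcd(b,p^α) then G(a,b) = 0. -/
open scoped BigOperators

/-- The standard additive character of `ℤ/p^αℤ`. -/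
noncomputable def zchar (p α : ℕ) (x : ZMod (p ^ α)) : ℂ :=
  Complex.exp (2 * Real.pi * Complex.I * (x.val : ℂ) / (p : ℂ) ^ α)

/-- The normalized quadratic Gauss sum `G(a,b)` over `ℤ/p^αℤ`. -/
noncomputable def gaussSumZ (p α : ℕ) [NeZero (p ^ α)] (a b : ZMod (p ^ α)) : ℂ :=
  ((p : ℂ) ^ α)⁻¹ * ∑ t : ZMod (p ^ α), zchar p α (a * t + b * t ^ 2)

namespace GaussAux

/-- Exponential character on integers. -/
noncomputable def echar (p α : ℕ) (m : ℤ) : ℂ :=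
  Complex.exp (2 * Real.pi * Complex.I * (m : ℂ) / (p : ℂ) ^ α)

lemma echar_add (p α : ℕ) (m n : ℤ) :
    echar p α (m + n) = echar p α m * echar p α n := by
  rw [echar, echar, echar, ← Complex.exp_add]
  congr 1
  push_cast
  ring

lemma echar_congr (p α : ℕ) [NeZero (p ^ α)] {m n : ℤ}
    (h : (m : ZMod (p ^ α)) = (n : ZMod (p ^ α))) :
    echar p α m = echar p α n := by
  have hN : ((p : ℂ) ^ α) ≠ 0 := by
    have h0 : ((p ^ α : ℕ) : ℂ) ≠ 0 := Nat.cast_ne_zero.mpr (NeZero.ne _)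
    rwa [Nat.cast_pow] at h0
  rw [ZMod.intCast_eq_intCast_iff] at h
  obtain ⟨k, hk⟩ : ((p ^ α : ℕ) : ℤ) ∣ n - m := Int.ModEq.dvd h
  have hn : n = m + ((p ^ α : ℕ) : ℤ) * k := by omega
  rw [hn, echar_add]
  have h1 : echar p α (((p ^ α : ℕ) : ℤ) * k) = 1 := by
    rw [echar]
    have hpN : ((p ^ α : ℕ) : ℂ) = (p : ℂ) ^ α := by push_cast; ring
    have harg : 2 * (Real.pi : ℂ) * Complex.I * (((((p ^ α : ℕ) : ℤ) * k : ℤ)) : ℂ) / (p : ℂ) ^ α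
        = (k : ℂ) * (2 * (Real.pi : ℂ) * Complex.I) := by
      push_cast
      rw [← hpN]
      have hN' : ((p ^ α : ℕ) : ℂ) ≠ 0 := by rw [hpN]; exact hN
      field_simp
    rw [harg, Complex.exp_int_mul_two_pi_mul_I]
  rw [h1, mul_one]

lemma zchar_eq (p α : ℕ) (x : ZMod (p ^ α)) :
    zchar p α x = echar p α (x.val : ℤ) := by
  simp [zchar, echar]

lemma val_intCast_self (p α : ℕ) [NeZero (p ^ α)] (x : ZMod (p ^ α)) :
    (((x.val : ℤ) : ZMod (p ^ α))) = x := by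
  exact_mod_cast ZMod.natCast_rightInverse (n := p ^ α) x

lemma zchar_intCast (p α : ℕ) [NeZero (p ^ α)] (m : ℤ) :
    zchar p α (m : ZMod (p ^ α)) = echar p α m := by
  rw [zchar_eq]
  exact echar_congr p α (val_intCast_self p α _)

lemma zchar_add (p α : ℕ) [NeZero (p ^ α)] (x y : ZMod (p ^ α)) :
    zchar p α (x + y) = zchar p α x * zchar p α y := by
  have h2 : x + y = (((x.val : ℤ) + (y.val : ℤ) : ℤ) : ZMod (p ^ α)) := by
    push_cast
    simp [ZMod.natCast_val, ZMod.cast_id]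
  rw [h2, zchar_intCast, echar_add, zchar_eq p α x, zchar_eq p α y]

lemma zchar_zero (p α : ℕ) [NeZero (p ^ α)] : zchar p α 0 = 1 := by
  simp [zchar, ZMod.val_zero]

lemma zchar_eq_one_iff (p α : ℕ) [NeZero (p ^ α)] (x : ZMod (p ^ α)) :
    zchar p α x = 1 ↔ x = 0 := by
  have hN : ((p : ℂ) ^ α) ≠ 0 := by
    have h0 : ((p ^ α : ℕ) : ℂ) ≠ 0 := Nat.cast_ne_zero.mpr (NeZero.ne _)
    rwa [Nat.cast_pow] at h0
  constructor
  · intro h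
    rw [zchar, Complex.exp_eq_one_iff] at h
    obtain ⟨n, hn⟩ := h
    have hπ : (2 * (Real.pi : ℂ) * Complex.I) ≠ 0 := by
      simp [Real.pi_ne_zero, Complex.I_ne_zero]
    have hv : ((x.val : ℕ) : ℂ) = (n : ℂ) * ((p : ℂ) ^ α) := by
      generalize hval : ((x.val : ℕ) : ℂ) = v at hn ⊢
      apply mul_left_cancel₀ hπ
      have h2 : 2 * (Real.pi : ℂ) * Complex.I * v
          = (n : ℂ) * (2 * (Real.pi : ℂ) * Complex.I) * ((p : ℂ) ^ α) := by
        have h3 := congrArg (fun z => z * ((p : ℂ) ^ α)) hn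
        rwa [div_mul_cancel₀ _ hN] at h3
      rw [h2]
      ring
    have hvz : (x.val : ℤ) = n * ((p ^ α : ℕ) : ℤ) := by
      have hpN : ((p ^ α : ℕ) : ℂ) = (p : ℂ) ^ α := by push_cast; ring
      rw [← hpN] at hv
      exact_mod_cast hv
    have hdvd : ((p ^ α : ℕ) : ℤ) ∣ (x.val : ℤ) := ⟨n, by linarith [hvz]⟩
    have hdvd' : (p ^ α) ∣ x.val := by exact_mod_cast hdvd
    have := Nat.eq_zero_of_dvd_of_lt hdvd' (ZMod.val_lt x)
    exact (ZMod.val_eq_zero x).mp this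
  · intro h
    rw [h]
    exact zchar_zero p α

lemma zchar_conj (p α : ℕ) [NeZero (p ^ α)] (x : ZMod (p ^ α)) :
    (starRingEnd ℂ) (zchar p α x) = zchar p α (-x) := by
  have h1 : zchar p α x * zchar p α (-x) = 1 := by
    rw [← zchar_add]
    simp [zchar_zero]
  have h2 : (starRingEnd ℂ) (zchar p α x) * zchar p α x = 1 := by
    rw [zchar, ← Complex.exp_conj, ← Complex.exp_add]
    have hc : (starRingEnd ℂ) (2 * (Real.pi : ℂ) * Complex.I * (x.val : ℂ) / (p : ℂ) ^ α)
        = -(2 * (Real.pi : ℂ) * Complex.I * (x.val : ℂ) / (p : ℂ) ^ α) := by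
      simp only [map_div₀, map_mul, map_pow, Complex.conj_I, Complex.conj_ofReal,
        Complex.conj_natCast, map_ofNat]
      ring
    rw [hc]
    simp
  calc (starRingEnd ℂ) (zchar p α x)
      = (starRingEnd ℂ) (zchar p α x) * (zchar p α x * zchar p α (-x)) := by rw [h1, mul_one]
    _ = ((starRingEnd ℂ) (zchar p α x) * zchar p α x) * zchar p α (-x) := by ring
    _ = zchar p α (-x) := by rw [h2, one_mul]

/-- Orthogonality: sum of the character over the full group. -/
lemma sum_zchar_mul (p α : ℕ) [NeZero (p ^ α)] (c : ZMod (p ^ α)) :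
    (∑ s : ZMod (p ^ α), zchar p α (c * s))
      = if c = 0 then ((p ^ α : ℕ) : ℂ) else 0 := by
  split_ifs with hc
  · subst hc
    simp only [zero_mul, zchar_zero, Finset.sum_const, Finset.card_univ, ZMod.card,
      nsmul_eq_mul, mul_one]
  · have hne : zchar p α c ≠ 1 := fun h => hc ((zchar_eq_one_iff p α c).mp h)
    have key : zchar p α c * (∑ s : ZMod (p ^ α), zchar p α (c * s))
        = ∑ s : ZMod (p ^ α), zchar p α (c * s) := by
      rw [Finset.mul_sum]
      have step1 : ∀ s : ZMod (p ^ α),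
          zchar p α c * zchar p α (c * s) = zchar p α (c * (s + 1)) := by
        intro s
        rw [← zchar_add]
        congr 1
        ring
      simp only [step1]
      exact Fintype.sum_equiv (Equiv.addRight (1 : ZMod (p ^ α)))
        (fun s => zchar p α (c * (s + 1))) (fun s => zchar p α (c * s))
        (fun s => rfl)
    have hz : (zchar p α c - 1) * (∑ s : ZMod (p ^ α), zchar p α (c * s)) = 0 := by
      rw [sub_mul, one_mul, key, sub_self]
    rcases mul_eq_zero.mp hz with h | h
    · exact absurd (sub_eq_zero.mp h) hne
    · exact h

end GaussAux

open GaussAux in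
theorem stmt_0 (p α : ℕ) [NeZero (p ^ α)] (hp : p.Prime) (hodd : Odd p) (hα : 1 ≤ α)
    (a b : ZMod (p ^ α)) :
    (p ^ α / Nat.gcd b.val (p ^ α) ≥ p ^ α / Nat.gcd a.val (p ^ α) →
      Nat.gcd b.val (p ^ α) < p ^ α →
      ‖gaussSumZ p α a b‖
        = Real.sqrt ((Nat.gcd b.val (p ^ α) : ℝ) / (p : ℝ) ^ α)) ∧
    (p ^ α / Nat.gcd a.val (p ^ α) > p ^ α / Nat.gcd b.val (p ^ α) →
      gaussSumZ p α a b = 0) := by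
  classical
  have hNpos : 0 < p ^ α := Nat.pos_of_ne_zero (NeZero.ne _)
  set g := Nat.gcd b.val (p ^ α) with hgdef
  set ga := Nat.gcd a.val (p ^ α) with hgadef
  have hgN : g ∣ p ^ α := Nat.gcd_dvd_right _ _
  have hgaN : ga ∣ p ^ α := Nat.gcd_dvd_right _ _
  have hgb : g ∣ b.val := Nat.gcd_dvd_left _ _
  have hgpos : 0 < g := Nat.gcd_pos_of_pos_right _ hNpos
  set d := p ^ α / g with hddef
  have hdg : d * g = p ^ α := Nat.div_mul_cancel hgN
  have hdpos : 0 < d := Nat.div_pos (Nat.le_of_dvd hNpos hgN) hgpos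
  set K : Finset (ZMod (p ^ α)) := Finset.univ.filter (fun u => b * u = 0) with hKdef
  have hcastmul : ∀ (x u : ZMod (p ^ α)), x * u = ((x.val * u.val : ℕ) : ZMod (p ^ α)) := by
    intro x u
    push_cast
    rw [ZMod.natCast_val, ZMod.natCast_val, ZMod.cast_id, ZMod.cast_id]
  have hmemK : ∀ u : ZMod (p ^ α), (b * u = 0 ↔ d ∣ u.val) := by
    intro u
    rw [hcastmul b u, ZMod.natCast_eq_zero_iff]
    constructor
    · intro h
      have hco : (b.val / g).Coprime d := Nat.coprime_div_gcd_div_gcd hgpos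
      have h1 : g * d ∣ g * ((b.val / g) * u.val) := by
        have he : g * ((b.val / g) * u.val) = b.val * u.val := by
          rw [← mul_assoc, Nat.mul_div_cancel' hgb]
        rw [he, mul_comm g d, hdg]
        exact h
      have h2 : d ∣ (b.val / g) * u.val := (Nat.mul_dvd_mul_iff_left hgpos).mp h1
      exact (Nat.Coprime.dvd_of_dvd_mul_left hco.symm h2)
    · intro h
      obtain ⟨m, hm⟩ := hgb
      obtain ⟨k, hk⟩ := h
      rw [hm, hk, ← hdg]
      exact ⟨m * k, by ring⟩
  -- cardinality of the kernel
  have hcardK : K.card = g := by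
    have hcc : (Finset.range g).card = K.card := by
      apply Finset.card_nbij (fun i => ((d * i : ℕ) : ZMod (p ^ α)))
      · intro i hi
        rw [Finset.mem_coe, Finset.mem_range] at hi
        have hlt : d * i < p ^ α := by
          calc d * i < d * g := (Nat.mul_lt_mul_left hdpos).mpr hi
            _ = p ^ α := hdg
        rw [hKdef, Finset.mem_coe, Finset.mem_filter]
        refine ⟨Finset.mem_univ _, ?_⟩
        rw [hmemK, ZMod.val_natCast, Nat.mod_eq_of_lt hlt]
        exact Dvd.intro i rfl
      · intro i hi j hj hij
        simp only [Finset.coe_range, Set.mem_Iio] at hi hj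
        have hi' : d * i < p ^ α := lt_of_lt_of_le ((Nat.mul_lt_mul_left hdpos).mpr hi) hdg.le
        have hj' : d * j < p ^ α := lt_of_lt_of_le ((Nat.mul_lt_mul_left hdpos).mpr hj) hdg.le
        have hv := congrArg ZMod.val hij
        rw [ZMod.val_natCast, ZMod.val_natCast, Nat.mod_eq_of_lt hi',
          Nat.mod_eq_of_lt hj'] at hv
        exact Nat.eq_of_mul_eq_mul_left hdpos hv
      · intro u hu
        simp only [hKdef, Finset.coe_filter, Set.mem_setOf_eq, Finset.mem_univ, true_and] at hu
        obtain ⟨k, hk⟩ := (hmemK u).mp hu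
        have hkg : k < g := by
          by_contra hc
          push_neg at hc
          have hle : p ^ α ≤ u.val := by
            calc p ^ α = d * g := hdg.symm
              _ ≤ d * k := Nat.mul_le_mul_left d hc
              _ = u.val := hk.symm
          exact absurd (ZMod.val_lt u) (not_lt.mpr hle)
        refine ⟨k, by simpa using hkg, ?_⟩
        simp only
        rw [← hk, ZMod.natCast_val, ZMod.cast_id]
    rw [Finset.card_range] at hcc
    exact hcc.symm
  set S := ∑ t : ZMod (p ^ α), zchar p α (a * t + b * t ^ 2) with hSdef
  -- two is invertible
  have h2unit : IsUnit (2 : ZMod (p ^ α)) := by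
    have hcop : Nat.Coprime 2 (p ^ α) := by
      have h2p : ¬ (2 ∣ p) := by
        rw [Nat.odd_iff] at hodd
        omega
      have hc2p : Nat.Coprime 2 p := (Nat.prime_two.coprime_iff_not_dvd).mpr h2p
      exact hc2p.pow_right α
    have := (ZMod.isUnit_iff_coprime 2 (p ^ α)).mpr hcop
    simpa using this
  -- key identity : |S|^2 = (∑_{u ∈ K} e(au)) * p^α
  have hkey : S * (starRingEnd ℂ) S
      = (∑ u ∈ K, zchar p α (a * u)) * ((p ^ α : ℕ) : ℂ) := by
    rw [hSdef, map_sum, Finset.sum_mul_sum]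
    have hterm : ∀ t s : ZMod (p ^ α),
        zchar p α (a * t + b * t ^ 2) * (starRingEnd ℂ) (zchar p α (a * s + b * s ^ 2))
          = zchar p α ((a * t + b * t ^ 2) - (a * s + b * s ^ 2)) := by
      intro t s
      rw [zchar_conj, ← zchar_add]
      congr 1
      ring
    simp only [hterm]
    rw [Finset.sum_comm]
    have hre : ∀ s : ZMod (p ^ α),
        (∑ t : ZMod (p ^ α), zchar p α ((a * t + b * t ^ 2) - (a * s + b * s ^ 2)))
          = ∑ u : ZMod (p ^ α), zchar p α (a * u + b * u ^ 2) * zchar p α ((2 * b * u) * s) := by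
      intro s
      refine (Fintype.sum_equiv (Equiv.addRight s)
        (fun u => zchar p α (a * u + b * u ^ 2) * zchar p α ((2 * b * u) * s))
        (fun t => zchar p α ((a * t + b * t ^ 2) - (a * s + b * s ^ 2)))
        (fun u => ?_)).symm
      simp only [Equiv.coe_addRight]
      rw [← zchar_add]
      congr 1
      ring
    simp only [hre]
    rw [Finset.sum_comm]
    have hin : ∀ u : ZMod (p ^ α),
        (∑ s : ZMod (p ^ α), zchar p α (a * u + b * u ^ 2) * zchar p α ((2 * b * u) * s))
          = zchar p α (a * u + b * u ^ 2)
              * (if 2 * b * u = 0 then ((p ^ α : ℕ) : ℂ) else 0) := by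
      intro u
      rw [← Finset.mul_sum, sum_zchar_mul]
    simp only [hin]
    have h20 : ∀ u : ZMod (p ^ α), (2 * b * u = 0) = (b * u = 0) := by
      intro u
      apply propext
      constructor
      · intro h
        apply h2unit.mul_left_cancel
        rw [mul_zero, ← mul_assoc]
        exact h
      · intro h
        rw [mul_assoc, h, mul_zero]
    simp only [h20, mul_ite, mul_zero]
    rw [← Finset.sum_filter]
    rw [← Finset.sum_mul]
    congr 1
    apply Finset.sum_congr rfl
    intro u hu
    rw [Finset.mem_filter] at hu
    congr 1
    rw [show b * u ^ 2 = (b * u) * u by ring, hu.2, zero_mul, add_zero]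
  -- kernel sums
  have hker_dvd : g ∣ a.val → (∑ u ∈ K, zchar p α (a * u)) = (g : ℂ) := by
    intro hga
    have hone : ∀ u ∈ K, zchar p α (a * u) = 1 := by
      intro u hu
      rw [hKdef, Finset.mem_filter] at hu
      obtain ⟨k, hk⟩ := (hmemK u).mp hu.2
      have hz : a * u = 0 := by
        rw [hcastmul a u, ZMod.natCast_eq_zero_iff, hk]
        obtain ⟨m, hm⟩ := hga
        rw [hm, ← hdg]
        exact ⟨m * k, by ring⟩
      rw [hz, zchar_zero]
    rw [Finset.sum_congr rfl hone, Finset.sum_const, hcardK]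
    simp
  have hker_ndvd : ¬ g ∣ a.val → (∑ u ∈ K, zchar p α (a * u)) = 0 := by
    intro hna
    set u₀ : ZMod (p ^ α) := ((d : ℕ) : ZMod (p ^ α)) with hu₀
    have hdN : d < p ^ α := by
      rcases Nat.lt_or_ge d (p ^ α) with h | h
      · exact h
      · exfalso
        have hg1 : g = 1 := by nlinarith
        exact hna (hg1 ▸ one_dvd _)
    have hvalu₀ : u₀.val = d := by rw [hu₀, ZMod.val_natCast, Nat.mod_eq_of_lt hdN]
    have hbu₀ : b * u₀ = 0 := (hmemK u₀).mpr (hvalu₀ ▸ dvd_refl d)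
    have hau₀ : a * u₀ ≠ 0 := by
      intro h
      rw [hcastmul a u₀, ZMod.natCast_eq_zero_iff, hvalu₀] at h
      have h1 : g * d ∣ a.val * d := by rw [mul_comm g d, hdg]; exact h
      have h2 : g ∣ a.val := by
        have h3 : d * g ∣ d * a.val := by
          rw [mul_comm d g, mul_comm d a.val]
          exact h1
        exact (Nat.mul_dvd_mul_iff_left hdpos).mp h3
      exact hna h2
    have hzne : zchar p α (a * u₀) ≠ 1 := fun h => hau₀ ((zchar_eq_one_iff p α _).mp h)
    have hshift : zchar p α (a * u₀) * (∑ u ∈ K, zchar p α (a * u))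
        = ∑ u ∈ K, zchar p α (a * u) := by
      rw [Finset.mul_sum]
      have hcomb : ∀ u : ZMod (p ^ α),
          zchar p α (a * u₀) * zchar p α (a * u) = zchar p α (a * (u + u₀)) := by
        intro u
        rw [← zchar_add]
        congr 1
        ring
      simp only [hcomb]
      refine Finset.sum_equiv (Equiv.addRight u₀) ?_ ?_
      · intro u
        simp only [hKdef, Finset.mem_filter, Finset.mem_univ, true_and, Equiv.coe_addRight]
        rw [mul_add, hbu₀, add_zero]
      · intro u _
        rfl
    have hz : (zchar p α (a * u₀) - 1) * (∑ u ∈ K, zchar p α (a * u)) = 0 := by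
      rw [sub_mul, one_mul, hshift, sub_self]
    rcases mul_eq_zero.mp hz with h | h
    · exact absurd (sub_eq_zero.mp h) hzne
    · exact h
  -- translate hypotheses via prime powers
  obtain ⟨i, hiα, hgi⟩ := (Nat.dvd_prime_pow hp).mp hgN
  obtain ⟨j, hjα, hgaj⟩ := (Nat.dvd_prime_pow hp).mp hgaN
  have hdivb : d = p ^ (α - i) := by
    rw [hddef, hgi, Nat.pow_div hiα hp.pos]
  have hdiva : p ^ α / ga = p ^ (α - j) := by
    rw [hgaj, Nat.pow_div hjα hp.pos]
  have hNC : ((p : ℂ) ^ α) = ((p ^ α : ℕ) : ℂ) := by push_cast; ring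
  have hNR : ((p : ℝ) ^ α) = ((p ^ α : ℕ) : ℝ) := by push_cast; ring
  have hNRpos : (0 : ℝ) < ((p ^ α : ℕ) : ℝ) := by exact_mod_cast hNpos
  constructor
  · intro hge _hlt
    have hij : i ≤ j := by
      rw [hdivb, hdiva] at hge
      have := (Nat.pow_le_pow_iff_right hp.one_lt).mp hge
      omega
    have hgdvda : g ∣ a.val := by
      refine dvd_trans ?_ (Nat.gcd_dvd_left a.val (p ^ α))
      rw [hgi, ← hgadef, hgaj]
      exact pow_dvd_pow p hij
    have hSsq : S * (starRingEnd ℂ) S = (((g * p ^ α : ℕ) : ℝ) : ℂ) := by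
      rw [hkey, hker_dvd hgdvda]
      push_cast
      ring
    have hnormSq : Complex.normSq S = ((g * p ^ α : ℕ) : ℝ) := by
      have hmc := Complex.mul_conj S
      rw [hSsq] at hmc
      exact_mod_cast hmc.symm
    have habsS : ‖S‖ = Real.sqrt ((g : ℝ) * ((p ^ α : ℕ) : ℝ)) := by
      rw [Complex.norm_def, hnormSq]
      congr 1
      push_cast
      ring
    rw [show ‖gaussSumZ p α a b‖
        = ‖((p : ℂ) ^ α)⁻¹ * S‖ by rw [gaussSumZ, hSdef]]
    rw [norm_mul, norm_inv, hNC, Complex.norm_natCast, habsS, hNR]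
    rw [show (((p ^ α : ℕ) : ℝ))⁻¹ = Real.sqrt (((((p ^ α : ℕ) : ℝ)) ^ 2)⁻¹) by
      rw [Real.sqrt_inv, Real.sqrt_sq hNRpos.le]]
    rw [← Real.sqrt_mul (by positivity)]
    congr 1
    have hX0 : ((p ^ α : ℕ) : ℝ) ≠ 0 := hNRpos.ne'
    have hp0 : ((p : ℝ)) ≠ 0 := Nat.cast_ne_zero.mpr hp.pos.ne'
    field_simp
  · intro hlt
    have hji : j < i := by
      rw [hdiva, hdivb] at hlt
      have := (Nat.pow_lt_pow_iff_right hp.one_lt).mp hlt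
      omega
    have hnd : ¬ g ∣ a.val := by
      intro h
      have hdv : g ∣ ga := Nat.dvd_gcd h hgN
      rw [hgi, hgaj] at hdv
      have := (Nat.pow_dvd_pow_iff_le_right hp.one_lt).mp hdv
      omega
    have hSsq : S * (starRingEnd ℂ) S = 0 := by
      rw [hkey, hker_ndvd hnd, zero_mul]
    have hS0 : S = 0 := by
      have h1 := Complex.mul_conj S
      rw [hSsq] at h1
      have h2 : Complex.normSq S = 0 := by exact_mod_cast h1.symm
      exact Complex.normSq_eq_zero.mp h2
    rw [show gaussSumZ p α a b = ((p : ℂ) ^ α)⁻¹ * S by rw [gaussSumZ, hSdef]]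
    rw [hS0, mul_zero]
end

section
/- Let p be an odd prime, α ≥ 1, n ≥ 2, and let Σ = {(ω, ω₁² + ⋯ + ω_{n-1}²) : ω ∈ (ℤ/p^αℤ)^{n-1}} be the paraboloid in (ℤ/p^αℤ)^n. Let μ̌(x) := p^{-(n-1)α} Σ_{ω ∈ (ℤ/p^αℤ)^{n-1}} e^{2πi(x'·ω + x_n(ω₁²+⋯+ω_{n-1}²))/p^α} for x = (x', x_n). Then |μ̌(x)| ≤ ‖x‖^{-(n-1)/2}, where ‖x‖ := p^α / gcd(x₁, …, x_n, p^α). -/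
open scoped BigOperators

/-- The norm `‖x‖ = p^α / gcd(x₁, …, x_k, p^α)` of a vector over `ℤ/p^αℤ`. -/
def normZ (p α k : ℕ) (x : Fin k → ZMod (p ^ α)) : ℕ :=
  p ^ α / Nat.gcd (Finset.univ.gcd fun j => (x j).val) (p ^ α)

open Finset


lemma addChar_map_sum {ι A M : Type*} [AddCommMonoid A] [CommMonoid M]
    (ψ : AddChar A M) (s : Finset ι) (f : ι → A) :
    ψ (∑ i ∈ s, f i) = ∏ i ∈ s, ψ (f i) := by
  classical
  induction s using Finset.cons_induction with
  | empty => simp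
  | cons a s ha ih => rw [Finset.sum_cons, Finset.prod_cons, AddChar.map_add_eq_mul, ih]

lemma stdAddChar_conj {N : ℕ} [NeZero N] (y : ZMod N) :
    (starRingEnd ℂ) (ZMod.stdAddChar y) = ZMod.stdAddChar (-y) := by
  have h1 : ‖(ZMod.stdAddChar (N := N)) y‖ = 1 := by
    rw [ZMod.stdAddChar_apply]; exact Circle.norm_coe _
  rw [← Complex.inv_eq_conj h1]
  have : ZMod.stdAddChar (-y) * ZMod.stdAddChar y = 1 := by
    rw [← AddChar.map_add_eq_mul, neg_add_cancel, AddChar.map_zero_eq_one]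
  exact (eq_inv_of_mul_eq_one_left this).symm

lemma filter_gauss_sum {N : ℕ} [NeZero N] (a b : ZMod N) :
    ∑ h ∈ Finset.univ.filter (fun h : ZMod N => a * h = 0), ZMod.stdAddChar (b * h)
      = if Nat.gcd a.val N ∣ b.val then ((Nat.gcd a.val N : ℕ) : ℂ) else 0 := by
  classical
  set g : ℕ := Nat.gcd a.val N with hgdef
  set m : ℕ := N / g with hmdef
  have hN0 : N ≠ 0 := NeZero.ne N
  have hg0 : 0 < g := Nat.gcd_pos_of_pos_right _ (Nat.pos_of_ne_zero hN0)
  have hgN : g ∣ N := Nat.gcd_dvd_right _ _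
  have hga : g ∣ a.val := Nat.gcd_dvd_left _ _
  have hm : m * g = N := Nat.div_mul_cancel hgN
  have hm0 : 0 < m := by
    rcases Nat.eq_zero_or_pos m with h | h
    · exact absurd (by rw [← hm, h, zero_mul]) hN0
    · exact h
  -- reindex the filtered sum by range g via k ↦ m * k
  have hsum : ∑ h ∈ Finset.univ.filter (fun h : ZMod N => a * h = 0),
      ZMod.stdAddChar (b * h)
      = ∑ k ∈ Finset.range g, ZMod.stdAddChar (b * ((m * k : ℕ) : ZMod N)) := by
    refine (Finset.sum_bij (fun k _ => ((m * k : ℕ) : ZMod N)) ?_ ?_ ?_ ?_).symm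
    · intro k hk
      simp only [Finset.mem_filter, Finset.mem_univ, true_and]
      obtain ⟨a', ha'⟩ := hga
      have hdvd : N ∣ a.val * (m * k) := ⟨a' * k, by rw [ha', ← hm]; ring⟩
      calc a * ((m * k : ℕ) : ZMod N)
          = ((a.val * (m * k) : ℕ) : ZMod N) := by
            conv_lhs => rw [← ZMod.natCast_zmod_val a]
            push_cast; ring
        _ = 0 := (ZMod.natCast_eq_zero_iff _ _).2 hdvd
    · intro k₁ hk₁ k₂ hk₂ h
      simp only [Finset.mem_range] at hk₁ hk₂
      have hmod : (m * k₁) ≡ (m * k₂) [MOD N] := (ZMod.natCast_eq_natCast_iff _ _ _).1 h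
      have hint : (N : ℤ) ∣ (m * k₂ : ℤ) - (m * k₁ : ℤ) := by
        have := hmod.dvd
        push_cast at this ⊢
        exact this
      have hmne : (m : ℤ) ≠ 0 := by exact_mod_cast hm0.ne'
      have hgdvd : (g : ℤ) ∣ (k₂ : ℤ) - (k₁ : ℤ) := by
        have h1 : (m : ℤ) * (g : ℤ) ∣ (m : ℤ) * ((k₂ : ℤ) - (k₁ : ℤ)) := by
          have : ((m * g : ℕ) : ℤ) = (m : ℤ) * (g : ℤ) := by push_cast; ring
          rw [← this, hm]
          convert hint using 1
          ring
        exact (mul_dvd_mul_iff_left hmne).1 h1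
      have habs : |(k₂ : ℤ) - (k₁ : ℤ)| < (g : ℤ) := by
        rw [abs_lt]; constructor <;> [skip; skip] <;> push_cast <;> omega
      have := Int.eq_zero_of_abs_lt_dvd hgdvd habs
      omega
    · intro h hh
      simp only [Finset.mem_filter, Finset.mem_univ, true_and] at hh
      have hcast : ((a.val * h.val : ℕ) : ZMod N) = 0 := by
        rw [Nat.cast_mul, ZMod.natCast_zmod_val, ZMod.natCast_zmod_val]; exact hh
      have hdvd : N ∣ a.val * h.val := (ZMod.natCast_eq_zero_iff _ _).1 hcast
      obtain ⟨a', ha'⟩ := hga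
      have hcop : Nat.Coprime m (a.val / g) := (Nat.coprime_div_gcd_div_gcd hg0).symm
      have ha'' : a.val / g = a' := by rw [ha']; exact Nat.mul_div_cancel_left _ hg0
      have hmdvd : m ∣ a' * h.val := by
        have h1 : m * g ∣ g * (a' * h.val) := by
          rw [hm]
          convert hdvd using 1
          rw [ha']; ring
        have h2 : g * m ∣ g * (a' * h.val) := by rwa [mul_comm g m]
        exact (mul_dvd_mul_iff_left hg0.ne').1 h2
      have hmh : m ∣ h.val := by
        rw [ha''] at hcop
        exact hcop.dvd_of_dvd_mul_left hmdvd
      obtain ⟨k, hk⟩ := hmh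
      refine ⟨k, Finset.mem_range.2 ?_, ?_⟩
      · have hval : h.val < N := ZMod.val_lt h
        rw [hk, ← hm] at hval
        exact Nat.lt_of_mul_lt_mul_left hval
      · show ((m * k : ℕ) : ZMod N) = h
        rw [← hk]; exact ZMod.natCast_zmod_val h
    · intro k hk
      rfl
  rw [hsum]
  -- geometric series
  have hpow : ∀ k : ℕ, ZMod.stdAddChar (b * ((m * k : ℕ) : ZMod N))
      = ZMod.stdAddChar (b * ((m : ℕ) : ZMod N)) ^ k := by
    intro k
    rw [← AddChar.map_nsmul_eq_pow]
    congr 1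
    simp only [nsmul_eq_mul]
    push_cast
    ring
  simp_rw [hpow]
  set ζ : ℂ := ZMod.stdAddChar (b * ((m : ℕ) : ZMod N)) with hζ
  have hmg0 : ((g : ZMod N)) * ((m : ℕ) : ZMod N) = 0 := by
    rw [← Nat.cast_mul, mul_comm g m, hm, ZMod.natCast_self]
  have hζg : ζ ^ g = 1 := by
    rw [hζ, ← AddChar.map_nsmul_eq_pow]
    have harg : g • (b * ((m : ℕ) : ZMod N)) = 0 := by
      simp only [nsmul_eq_mul]
      calc (g : ZMod N) * (b * ((m : ℕ) : ZMod N))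
          = b * ((g : ZMod N) * ((m : ℕ) : ZMod N)) := by ring
        _ = 0 := by rw [hmg0, mul_zero]
    rw [harg, AddChar.map_zero_eq_one]
  have hζ1 : ζ = 1 ↔ g ∣ b.val := by
    constructor
    · intro h1
      have : ZMod.stdAddChar (b * ((m : ℕ) : ZMod N)) = ZMod.stdAddChar (0 : ZMod N) := by
        rw [AddChar.map_zero_eq_one]; exact h1
      have h0 : b * ((m : ℕ) : ZMod N) = 0 := ZMod.injective_stdAddChar this
      have hcast : ((b.val * m : ℕ) : ZMod N) = 0 := by
        rw [Nat.cast_mul, ZMod.natCast_zmod_val]; exact h0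
      have hdvd : N ∣ b.val * m := (ZMod.natCast_eq_zero_iff _ _).1 hcast
      have h1' : m * g ∣ m * b.val := by
        rw [hm]; convert hdvd using 1; ring
      have := (mul_dvd_mul_iff_left hm0.ne').1 h1'
      exact this
    · intro hgb
      obtain ⟨b', hb'⟩ := hgb
      have hdvd : N ∣ b.val * m := ⟨b', by rw [hb', ← hm]; ring⟩
      have hcast : ((b.val * m : ℕ) : ZMod N) = 0 := (ZMod.natCast_eq_zero_iff _ _).2 hdvd
      have h0 : b * ((m : ℕ) : ZMod N) = 0 := by
        rw [← ZMod.natCast_zmod_val b, ← Nat.cast_mul]; exact hcast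
      rw [hζ, h0, AddChar.map_zero_eq_one]
  by_cases hgb : g ∣ b.val
  · rw [if_pos hgb, hζ1.2 hgb]
    simp
  · rw [if_neg hgb]
    have hζne : ζ ≠ 1 := fun h => hgb (hζ1.1 h)
    rw [geom_sum_eq hζne, hζg, sub_self, zero_div]

lemma gauss_conj_mul {N : ℕ} [NeZero N] (hN : Odd N) (a b : ZMod N) :
    (∑ u : ZMod N, ZMod.stdAddChar (b * u + a * u ^ 2)) *
      (starRingEnd ℂ) (∑ u : ZMod N, ZMod.stdAddChar (b * u + a * u ^ 2)) =
    if Nat.gcd a.val N ∣ b.val then ((N * Nat.gcd a.val N : ℕ) : ℂ) else 0 := by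
  classical
  have h2 : IsUnit (2 : ZMod N) := by
    have : Nat.Coprime 2 N := by
      exact hN.coprime_two_left
    have := (ZMod.isUnit_iff_coprime 2 N).2 this
    simpa using this
  set f : ZMod N → ZMod N := fun u => b * u + a * u ^ 2 with hf
  have step1 : (∑ u : ZMod N, ZMod.stdAddChar (f u)) *
      (starRingEnd ℂ) (∑ u : ZMod N, ZMod.stdAddChar (f u))
      = ∑ v : ZMod N, ∑ h : ZMod N, ZMod.stdAddChar (f (v + h) - f v) := by
    rw [map_sum]
    rw [Finset.sum_mul_sum]
    rw [Finset.sum_comm]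
    refine Finset.sum_congr rfl fun v _ => ?_
    have : ∀ u : ZMod N, ZMod.stdAddChar (f u) * (starRingEnd ℂ) (ZMod.stdAddChar (f v))
        = ZMod.stdAddChar (f u - f v) := by
      intro u
      rw [stdAddChar_conj, ← AddChar.map_add_eq_mul]
      congr 1; ring
    simp_rw [this]
    exact (Equiv.sum_comp (Equiv.addLeft v) fun u => ZMod.stdAddChar (f u - f v)).symm
  have harg : ∀ v h : ZMod N, f (v + h) - f v = (b * h + a * h ^ 2) + v * (2 * a * h) := by
    intro v h; simp only [hf]; ring
  have step2 : ∑ v : ZMod N, ∑ h : ZMod N, ZMod.stdAddChar (f (v + h) - f v)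
      = ∑ h : ZMod N, ZMod.stdAddChar (b * h + a * h ^ 2) *
          (if (2 * a * h : ZMod N) = 0 then ((Fintype.card (ZMod N) : ℕ) : ℂ) else 0) := by
    rw [Finset.sum_comm]
    refine Finset.sum_congr rfl fun h _ => ?_
    have : ∀ v : ZMod N, ZMod.stdAddChar (f (v + h) - f v)
        = ZMod.stdAddChar (b * h + a * h ^ 2) * ZMod.stdAddChar (v * (2 * a * h)) := by
      intro v; rw [harg, AddChar.map_add_eq_mul]
    simp_rw [this, ← Finset.mul_sum]
    congr 1
    rw [AddChar.sum_mulShift _ (ZMod.isPrimitive_stdAddChar N)]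
    split_ifs <;> simp
  rw [step1, step2]
  have hcond : ∀ h : ZMod N, (2 * a * h : ZMod N) = 0 ↔ a * h = 0 := by
    intro h
    rw [mul_assoc, h2.mul_right_eq_zero]
  have step3 : ∑ h : ZMod N, ZMod.stdAddChar (b * h + a * h ^ 2) *
        (if (2 * a * h : ZMod N) = 0 then ((Fintype.card (ZMod N) : ℕ) : ℂ) else 0)
      = (N : ℂ) * ∑ h ∈ Finset.univ.filter (fun h : ZMod N => a * h = 0),
          ZMod.stdAddChar (b * h) := by
    rw [Finset.mul_sum]
    rw [Finset.sum_filter]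
    refine Finset.sum_congr rfl fun h _ => ?_
    by_cases hah : a * h = 0
    · rw [if_pos ((hcond h).2 hah), if_pos hah]
      have : b * h + a * h ^ 2 = b * h := by
        rw [pow_two, ← mul_assoc, hah, zero_mul, add_zero]
      rw [this, ZMod.card]
      ring
    · rw [if_neg (fun hc => hah ((hcond h).1 hc)), if_neg hah, mul_zero]
  rw [step3, filter_gauss_sum a b]
  split_ifs with hd
  · push_cast; ring
  · rw [mul_zero]

lemma gauss_abs_sq {N : ℕ} [NeZero N] (hN : Odd N) (a b : ZMod N) :
    ‖∑ u : ZMod N, ZMod.stdAddChar (b * u + a * u ^ 2)‖ ^ 2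
      = if Nat.gcd a.val N ∣ b.val then ((N * Nat.gcd a.val N : ℕ) : ℝ) else 0 := by
  have h := gauss_conj_mul hN a b
  rw [Complex.mul_conj] at h
  have h2 : ‖∑ u : ZMod N, ZMod.stdAddChar (b * u + a * u ^ 2)‖ ^ 2
      = Complex.normSq (∑ u : ZMod N, ZMod.stdAddChar (b * u + a * u ^ 2)) :=
    Complex.sq_norm _
  rw [h2]
  split_ifs at h ⊢ with hc
  · exact_mod_cast h
  · exact_mod_cast h

lemma zchar_eq (p α : ℕ) [NeZero (p ^ α)] (x : ZMod (p ^ α)) :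
    zchar p α x = ZMod.stdAddChar x := by
  rw [zchar, ZMod.stdAddChar_apply, ZMod.toCircle_apply]
  congr 1
  push_cast
  ring

theorem stmt_1 (p α n : ℕ) [NeZero (p ^ α)] (hp : p.Prime) (hodd : Odd p)
    (hα : 1 ≤ α) (hn : 2 ≤ n) (x : Fin n → ZMod (p ^ α)) :
    ‖((p : ℂ) ^ ((n - 1) * α))⁻¹ *
        ∑ ω : Fin (n - 1) → ZMod (p ^ α),
          zchar p α ((∑ j : Fin (n - 1), x (Fin.castLE (Nat.sub_le n 1) j) * ω j) +
            x ⟨n - 1, by omega⟩ * ∑ j : Fin (n - 1), ω j ^ 2)‖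
      ≤ (normZ p α n x : ℝ) ^ (-((n : ℝ) - 1) / 2) := by
  classical
  have hzc : ∀ y : ZMod (p ^ α), zchar p α y = ZMod.stdAddChar y := fun y => zchar_eq p α y
  have hN0 : 0 < p ^ α := Nat.pos_of_ne_zero (NeZero.ne (p ^ α))
  have hNodd : Odd (p ^ α) := hodd.pow
  set c : Fin (n - 1) → ZMod (p ^ α) := fun j => x (Fin.castLE (Nat.sub_le n 1) j) with hc
  set aa : ZMod (p ^ α) := x ⟨n - 1, by omega⟩ with haa
  set g : ℕ := Nat.gcd aa.val (p ^ α) with hgdef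
  -- factor the sum
  have hsum : ∑ ω : Fin (n - 1) → ZMod (p ^ α),
        zchar p α ((∑ j : Fin (n - 1), c j * ω j) + aa * ∑ j : Fin (n - 1), ω j ^ 2)
      = ∏ j : Fin (n - 1), ∑ u : ZMod (p ^ α), ZMod.stdAddChar (c j * u + aa * u ^ 2) := by
    have h1 : ∀ ω : Fin (n - 1) → ZMod (p ^ α),
        zchar p α ((∑ j : Fin (n - 1), c j * ω j) + aa * ∑ j : Fin (n - 1), ω j ^ 2)
        = ∏ j : Fin (n - 1), ZMod.stdAddChar (c j * ω j + aa * ω j ^ 2) := by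
      intro ω
      rw [hzc]
      rw [show ((∑ j : Fin (n - 1), c j * ω j) + aa * ∑ j : Fin (n - 1), ω j ^ 2)
          = ∑ j : Fin (n - 1), (c j * ω j + aa * ω j ^ 2) by
        rw [Finset.mul_sum, ← Finset.sum_add_distrib]]
      exact addChar_map_sum _ _ _
    simp_rw [h1]
    calc ∑ ω : Fin (n - 1) → ZMod (p ^ α),
          ∏ j : Fin (n - 1), ZMod.stdAddChar (c j * ω j + aa * ω j ^ 2)
        = ∑ ω ∈ Fintype.piFinset (fun _ : Fin (n - 1) => (Finset.univ : Finset (ZMod (p ^ α)))),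
          ∏ j : Fin (n - 1), ZMod.stdAddChar (c j * ω j + aa * ω j ^ 2) := by
          rw [Fintype.piFinset_univ]
      _ = ∏ j : Fin (n - 1), ∑ u : ZMod (p ^ α), ZMod.stdAddChar (c j * u + aa * u ^ 2) :=
          (Finset.prod_univ_sum (fun _ : Fin (n - 1) => (Finset.univ : Finset (ZMod (p ^ α))))
            (fun j u => ZMod.stdAddChar (c j * u + aa * u ^ 2))).symm
  rw [hsum, norm_mul, norm_prod, norm_inv]
  have habsp : ‖(p : ℂ) ^ ((n - 1) * α)‖ = (((p ^ α : ℕ) : ℝ)) ^ (n - 1) := by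
    rw [norm_pow, Complex.norm_natCast]
    rw [mul_comm (n - 1) α, pow_mul]
    congr 1
    push_cast
    ring
  rw [habsp]
  have hTsq : ∀ j : Fin (n - 1),
      ‖∑ u : ZMod (p ^ α), ZMod.stdAddChar (c j * u + aa * u ^ 2)‖ ^ 2
      = if g ∣ (c j).val then (((p ^ α) * g : ℕ) : ℝ) else 0 := fun j => gauss_abs_sq hNodd aa (c j)
  by_cases hcase : ∀ j : Fin (n - 1), g ∣ (c j).val
  · -- main case: equality
    have hgN : g ∣ p ^ α := Nat.gcd_dvd_right _ _
    have hg0 : 0 < g := Nat.gcd_pos_of_pos_right _ hN0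
    -- identify normZ
    have hdg : Nat.gcd (Finset.univ.gcd fun j : Fin n => (x j).val) (p ^ α) = g := by
      apply Nat.dvd_antisymm
      · refine Nat.dvd_gcd ?_ (Nat.gcd_dvd_right _ _)
        exact (Nat.gcd_dvd_left _ _).trans
          (Finset.gcd_dvd (Finset.mem_univ (⟨n - 1, by omega⟩ : Fin n)))
      · refine Nat.dvd_gcd (Finset.dvd_gcd fun i _ => ?_) (Nat.gcd_dvd_right _ _)
        by_cases hi : (i : ℕ) < n - 1
        · have hxi : x i = c ⟨(i : ℕ), hi⟩ := by
            show x i = x (Fin.castLE (Nat.sub_le n 1) ⟨(i : ℕ), hi⟩)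
            congr 1
          rw [hxi]
          exact hcase _
        · have hxi : x i = aa := by
            rw [haa]
            congr 1
            apply Fin.ext
            show (i : ℕ) = n - 1
            omega
          rw [hxi]
          exact Nat.gcd_dvd_left _ _
    have hnorm : normZ p α n x = p ^ α / g := by
      rw [normZ, hdg]
    rw [hnorm]
    have htcast : ((p ^ α / g : ℕ) : ℝ) = ((p ^ α : ℕ) : ℝ) / (g : ℝ) := by
      rw [Nat.cast_div hgN (by exact_mod_cast hg0.ne')]
    have ht0 : (0 : ℝ) < ((p ^ α / g : ℕ) : ℝ) := by
      rw [htcast]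
      have h1 : (0:ℝ) < ((p ^ α : ℕ) : ℝ) := by exact_mod_cast hN0
      have h2 : (0:ℝ) < (g : ℝ) := by exact_mod_cast hg0
      positivity
    have hL0 : (0 : ℝ) ≤ ((((p ^ α : ℕ) : ℝ)) ^ (n - 1))⁻¹ * ∏ j : Fin (n - 1),
        ‖∑ u : ZMod (p ^ α), ZMod.stdAddChar (c j * u + aa * u ^ 2)‖ := by
      have hprod0 : (0:ℝ) ≤ ∏ j : Fin (n - 1),
          ‖∑ u : ZMod (p ^ α), ZMod.stdAddChar (c j * u + aa * u ^ 2)‖ :=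
        Finset.prod_nonneg fun j _ => norm_nonneg _
      have hinv0 : (0:ℝ) ≤ ((((p ^ α : ℕ) : ℝ)) ^ (n - 1))⁻¹ := by positivity
      exact mul_nonneg hinv0 hprod0
    have hR0 : (0 : ℝ) ≤ ((p ^ α / g : ℕ) : ℝ) ^ (-((n : ℝ) - 1) / 2) :=
      Real.rpow_nonneg ht0.le _
    refine (pow_le_pow_iff_left₀ hL0 hR0 (two_ne_zero)).1 ?_
    have hLsq : (((((p ^ α : ℕ) : ℝ)) ^ (n - 1))⁻¹ * ∏ j : Fin (n - 1),
        ‖∑ u : ZMod (p ^ α), ZMod.stdAddChar (c j * u + aa * u ^ 2)‖) ^ 2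
        = (((((p ^ α : ℕ) : ℝ)) ^ (n - 1)) ^ 2)⁻¹ *
            (((p ^ α : ℕ) : ℝ) * (g : ℝ)) ^ (n - 1) := by
      rw [mul_pow, inv_pow, ← Finset.prod_pow]
      congr 1
      calc (∏ j : Fin (n - 1), ‖∑ u : ZMod (p ^ α), ZMod.stdAddChar (c j * u + aa * u ^ 2)‖ ^ 2)
          = ∏ _j : Fin (n - 1), (((p ^ α : ℕ) : ℝ) * (g : ℝ)) := by
            refine Finset.prod_congr rfl fun j _ => ?_
            rw [hTsq j, if_pos (hcase j)]
            push_cast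
            ring
        _ = (((p ^ α : ℕ) : ℝ) * (g : ℝ)) ^ (n - 1) := by
            rw [Finset.prod_const, Finset.card_univ, Fintype.card_fin]
    have hRsq : (((p ^ α / g : ℕ) : ℝ) ^ (-((n : ℝ) - 1) / 2)) ^ 2
        = ((((p ^ α / g : ℕ) : ℝ)) ^ (n - 1))⁻¹ := by
      rw [← Real.rpow_natCast (((p ^ α / g : ℕ) : ℝ) ^ (-((n : ℝ) - 1) / 2)) 2,
        ← Real.rpow_mul ht0.le]
      have hexp : (-((n : ℝ) - 1) / 2) * ((2 : ℕ) : ℝ) = -(((n - 1 : ℕ) : ℕ) : ℝ) := by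
        have hM : (((n - 1 : ℕ) : ℕ) : ℝ) = (n : ℝ) - 1 := by
          push_cast [Nat.cast_sub (by omega : 1 ≤ n)]
          ring
        rw [hM]
        push_cast
        ring
      rw [hexp, Real.rpow_neg ht0.le, Real.rpow_natCast]
    rw [hLsq, hRsq, htcast]
    rw [div_pow]
    have h1 : (0:ℝ) < ((p ^ α : ℕ) : ℝ) := by exact_mod_cast hN0
    have h2 : (0:ℝ) < (g : ℝ) := by exact_mod_cast hg0
    have hNne : (((p ^ α : ℕ) : ℝ)) ^ (n - 1) ≠ 0 := by positivity
    have hgne : ((g : ℝ)) ^ (n - 1) ≠ 0 := by positivity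
    rw [mul_pow]
    apply le_of_eq
    have hpR : (0:ℝ) < (p:ℝ) := by
      have := hp.pos
      exact_mod_cast this
    field_simp [hpR.ne']
  · -- degenerate case: LHS = 0
    push_neg at hcase
    obtain ⟨j, hj⟩ := hcase
    have hTj : ‖∑ u : ZMod (p ^ α), ZMod.stdAddChar (c j * u + aa * u ^ 2)‖ = 0 := by
      have h := hTsq j
      rw [if_neg hj] at h
      exact pow_eq_zero_iff (two_ne_zero).elim |>.mp h
    have hzero : (∏ j : Fin (n - 1),
        ‖∑ u : ZMod (p ^ α), ZMod.stdAddChar (c j * u + aa * u ^ 2)‖) = 0 :=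
      Finset.prod_eq_zero (Finset.mem_univ j) hTj
    rw [hzero, mul_zero]
    exact Real.rpow_nonneg (Nat.cast_nonneg _) _
end

section
/- Let G be a finite abelian group, μ a finite measure (nonnegative function summing against counting measure) on the dual group Ĝ, and let normalized Haar measure on Ĝ be m̂ with total mass making the Fourier inversion formula hold. Suppose balls B^G_ρ and B^{Ĝ}_ρ satisfy the Littlewood-Paley system axioms with constants C₁, C₂, C₃, a, b, A, B where m(B^G_ρ(0)) ≤ C₁ρⁿ, the smooth cutoffs φ_ρ = χ_{B^G_ρ(0)} satisfy |φ̂_ρ(ξ)| ≤ C₂ s^{-n} for -ξ ∉ B^{Ĝ}_s(0), s ≥ 1/ρ, and ∫|φ̂_ρ| dm̂ ≤ C₃; and μ satisfies μ(B^{Ĝ}_ρ(ξ)) ≤ Aρ^a and |μ̌(x)| ≤ Bρ^{-b/2} for x ∉ B^G_ρ(0), with 0 < b ≤ a < n. Then for every Borel set E ⊆ G, ‖χ̂_E‖_{L²(μ)} ≲_{n,a} (C₁+C₂)^{(1-θ)/2} A^{(1-θ)/2} B^{θ/2} m(E)^{1/r₀}, where θ = 2(n-a)/(2(n-a)+b)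 and r₀ = (4(n-a)+2b)/(4(n-a)+b). -/
open scoped BigOperators

lemma le_zero_of_forall_le (S : ℝ) (h : ∀ ε : ℝ, 0 < ε → S ≤ ε) : S ≤ 0 := by
  have := le_of_forall_pos_le_add (a := S) (b := 0) ?_
  · exact this
  · intro ε hε; simpa using h ε hε

lemma opt_aux (s b D B M S : ℝ) (hs : 0 < s) (hb : 0 < b) (hD : 0 ≤ D) (hB : 0 ≤ B)
    (hM : 0 ≤ M) (hS : 0 ≤ S)
    (h : ∀ ρ : ℝ, 0 < ρ → S ≤ D * ρ ^ s * M + 2 * B * ρ ^ (-b / 2) * M ^ 2) :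
    S ≤ 3 * D ^ (1 - 2 * s / (2 * s + b)) * B ^ (2 * s / (2 * s + b)) *
      M ^ (1 + 2 * s / (2 * s + b)) := by
  set θ : ℝ := 2 * s / (2 * s + b) with hθ
  have h2sb : 0 < 2 * s + b := by linarith
  have hrhs0 : 0 ≤ 3 * D ^ (1 - θ) * B ^ θ * M ^ (1 + θ) := by positivity
  rcases eq_or_lt_of_le hM with hM0 | hM0
  · have := h 1 one_pos
    simp [← hM0] at this
    linarith
  rcases eq_or_lt_of_le hB with hB0 | hB0
  · have hS0 : S ≤ 0 := by
      apply le_zero_of_forall_le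
      intro ε hε
      rcases eq_or_lt_of_le hD with hD0 | hD0
      · have := h 1 one_pos
        simp [← hD0, ← hB0] at this
        linarith
      · set ρ : ℝ := (ε / (D * M)) ^ (s⁻¹) with hρ
        have hρpos : 0 < ρ := by positivity
        have hρs : ρ ^ s = ε / (D * M) := by
          rw [hρ, ← Real.rpow_mul (by positivity), inv_mul_cancel₀ (ne_of_gt hs),
            Real.rpow_one]
        have h2 := h ρ hρpos
        rw [hρs, ← hB0] at h2
        have hDM : D * M ≠ 0 := by positivity
        calc S ≤ D * (ε / (D * M)) * M + 2 * 0 * ρ ^ (-b / 2) * M ^ 2 := h2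
          _ = ε := by field_simp; ring
    linarith
  rcases eq_or_lt_of_le hD with hD0 | hD0
  · have hS0 : S ≤ 0 := by
      apply le_zero_of_forall_le
      intro ε hε
      set ρ : ℝ := (2 * B * M ^ 2 / ε) ^ ((2:ℝ) / b) with hρ
      have hρpos : 0 < ρ := by positivity
      have hρs : ρ ^ (-b / 2) = ε / (2 * B * M ^ 2) := by
        rw [hρ, ← Real.rpow_mul (by positivity)]
        have : (2:ℝ) / b * (-b / 2) = -1 := by field_simp
        rw [this, Real.rpow_neg_one, inv_div]
      have h2 := h ρ hρpos
      rw [hρs, ← hD0] at h2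
      have hBM : 2 * B * M ^ 2 ≠ 0 := by positivity
      calc S ≤ 0 * ρ ^ s * M + 2 * B * (ε / (2 * B * M ^ 2)) * M ^ 2 := h2
        _ = ε := by field_simp; ring
    linarith
  · set X : ℝ := B * M / D with hX
    have hXpos : 0 < X := by positivity
    set ρ : ℝ := X ^ ((2:ℝ) / (2 * s + b)) with hρ
    have hρpos : 0 < ρ := by positivity
    have e1 : ρ ^ s = X ^ θ := by
      rw [hρ, ← Real.rpow_mul hXpos.le]
      congr 1
      rw [hθ]; field_simp
    have e2 : ρ ^ (-b / 2) = X ^ (θ - 1) := by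
      rw [hρ, ← Real.rpow_mul hXpos.le]
      congr 1
      rw [hθ]; field_simp; ring
    have k1 : D * X ^ θ * M = D ^ (1 - θ) * B ^ θ * M ^ (1 + θ) := by
      apply Real.log_injOn_pos (Set.mem_Ioi.2 (by positivity))
        (Set.mem_Ioi.2 (by positivity))
      rw [Real.log_mul (by positivity) (by positivity),
        Real.log_mul (by positivity) (by positivity),
        Real.log_mul (by positivity) (by positivity),
        Real.log_mul (by positivity) (by positivity),
        Real.log_rpow hXpos, Real.log_rpow hD0, Real.log_rpow hB0, Real.log_rpow hM0,
        hX, Real.log_div (by positivity) (by positivity),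
        Real.log_mul (by positivity) (by positivity)]
      ring
    have k2 : 2 * B * X ^ (θ - 1) * M ^ 2 = 2 * (D * X ^ θ * M) := by
      rw [Real.rpow_sub hXpos, Real.rpow_one, hX]
      field_simp
    have h2 := h ρ hρpos
    rw [e1, e2, k2] at h2
    calc S ≤ D * X ^ θ * M + 2 * (D * X ^ θ * M) := h2
      _ = 3 * D ^ (1 - θ) * B ^ θ * M ^ (1 + θ) := by rw [k1]; ring

lemma geom_aux (r : ℝ) (h0 : 0 ≤ r) (h1 : r < 1) (N : ℕ) :
    ∑ i ∈ Finset.range N, r ^ i ≤ (1 - r)⁻¹ := by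
  have hs : Summable fun i : ℕ => r ^ i := summable_geometric_of_lt_one h0 h1
  have := Summable.sum_le_tsum (Finset.range N) (fun i _ => pow_nonneg h0 i) hs
  rwa [tsum_geometric_of_lt_one h0 h1] at this

open Finset in
lemma main_est (n a b C₁ C₂ A B : ℝ) (han : a < n)
    (hC₁ : 0 ≤ C₁) (hC₂ : 0 ≤ C₂) (hA : 0 ≤ A) (hB : 0 ≤ B)
    (G H : Type) [AddCommGroup G] [Fintype G] [DecidableEq G] [AddCommGroup H] [Fintype H]
    (e : G → H → ℂ) (BG : ℝ → Set G) (BH : ℝ → Set H) (φ : ℝ → G → ℝ) (w : H → ℝ)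
    (hmul : ∀ (x y : G) (ξ : H), e (x + y) ξ = e x ξ * e y ξ)
    (hmul2 : ∀ (x : G) (ξ η : H), e x (ξ + η) = e x ξ * e x η)
    (habs : ∀ (x : G) (ξ : H), ‖e x ξ‖ = 1)
    (horth : ∀ x : G, ∑ ξ : H, e x ξ = if x = 0 then (Fintype.card G : ℂ) else 0)
    (hBHnest : ∀ ρ ρ' : ℝ, 0 < ρ → ρ ≤ ρ' → BH ρ ⊆ BH ρ')
    (hBHcover : ∀ ξ : H, ∃ ρ : ℝ, 0 < ρ ∧ ξ ∈ BH ρ)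
    (hGcount : ∀ ρ : ℝ, 0 < ρ → ((BG ρ).ncard : ℝ) ≤ C₁ * ρ ^ n)
    (hφ1 : ∀ ρ : ℝ, 0 < ρ → ∀ x ∈ BG ρ, φ ρ x = 1)
    (hφsupp : ∀ ρ : ℝ, 0 < ρ → ∀ x : G, φ ρ x ≠ 0 → x ∈ BG (2 * ρ))
    (hφle1 : ∀ (ρ : ℝ) (x : G), |φ ρ x| ≤ 1)
    (hdecay : ∀ ρ : ℝ, 0 < ρ → ∀ s : ℝ, 1 / ρ ≤ s → ∀ ξ : H, -ξ ∉ BH s →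
      ‖∑ x : G, (φ ρ x : ℂ) * e (-x) ξ‖ ≤ C₂ * s ^ (-n))
    (hw : ∀ ξ : H, 0 ≤ w ξ)
    (hμball : ∀ ρ : ℝ, 0 < ρ → ∀ ξ : H,
      ∑ η : H, Set.indicator (BH ρ) (fun _ => (1 : ℝ)) (η - ξ) * w η ≤ A * ρ ^ a)
    (hK : ∀ ρ : ℝ, 0 < ρ → ∀ x : G, x ∉ BG ρ →
      ‖∑ ξ : H, (w ξ : ℂ) * e x ξ‖ ≤ B * ρ ^ (-b / 2))
    (E : Set G) (ρ : ℝ) (hρ : 0 < ρ) :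
    ∑ ξ : H, w ξ *
        ‖∑ x : G, Set.indicator E (fun _ => (1 : ℂ)) x * e (-x) ξ‖ ^ 2
      ≤ ((2:ℝ) ^ n + (2:ℝ) ^ a * (1 - (2:ℝ) ^ (a - n))⁻¹) * ((C₁ + C₂) * A) *
          ρ ^ (n - a) * (E.ncard : ℝ)
        + 2 * B * ρ ^ (-b / 2) * (E.ncard : ℝ) ^ 2 := by
  classical
  set M : ℝ := (E.ncard : ℝ) with hM
  set f : G → ℂ := fun x => Set.indicator E (fun _ => (1 : ℂ)) x with hf
  set fh : H → ℂ := fun ξ => ∑ x : G, f x * e (-x) ξ with hfh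
  set K : G → ℂ := fun z => ∑ ξ : H, (w ξ : ℂ) * e z ξ with hKdef
  set φh : H → ℂ := fun ζ => ∑ z : G, (φ ρ z : ℂ) * e (-z) ζ with hφh
  set W : H → ℂ := fun ξ => ∑ η : H, (w η : ℂ) * φh (ξ - η) with hWdef
  set cg : ℕ := Fintype.card G with hcg
  -- character basics
  have hene : ∀ (x : G) (ξ : H), e x ξ ≠ 0 := by
    intro x ξ h
    have := habs x ξ
    rw [h] at this; simp at this
  have he0 : ∀ ξ : H, e 0 ξ = 1 := by
    intro ξ
    have h1 : e 0 ξ * e 0 ξ = e 0 ξ * 1 := by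
      rw [← hmul]; simp
    exact (mul_left_cancel₀ (hene 0 ξ) h1)
  have heH0 : ∀ x : G, e x 0 = 1 := by
    intro x
    have h1 : e x 0 * e x 0 = e x 0 * 1 := by
      rw [← hmul2]; simp
    exact (mul_left_cancel₀ (hene x 0) h1)
  have hinvx : ∀ (x : G) (ξ : H), e (-x) ξ = (e x ξ)⁻¹ := by
    intro x ξ
    have h1 : e x ξ * e (-x) ξ = 1 := by rw [← hmul]; simp [he0]
    exact eq_inv_of_mul_eq_one_left (by rw [mul_comm]; exact h1)
  have heneg : ∀ (x : G) (ξ : H), e (-x) ξ = (starRingEnd ℂ) (e x ξ) := by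
    intro x ξ
    rw [hinvx, Complex.inv_def, Complex.normSq_eq_norm_sq, habs]
    simp
  have henegneg : ∀ (u : G) (η : H), e (-u) (-η) = e u η := by
    intro u η
    have h1 : e (-u) (-η) * e (-u) η = 1 := by rw [← hmul2]; simp [heH0]
    have h2 : e u η * e (-u) η = 1 := by rw [← hmul]; simp [he0]
    exact mul_right_cancel₀ (hene (-u) η) (h1.trans h2.symm)
  -- indicator basics
  have hfconj : ∀ x : G, (starRingEnd ℂ) (f x) = f x := by
    intro x
    by_cases hx : x ∈ E <;> simp [hf, hx]
  have habsf : ∀ x : G, (‖f x‖ : ℝ) = Set.indicator E (fun _ => (1:ℝ)) x := by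
    intro x
    by_cases hx : x ∈ E <;> simp [hf, hx]
  have hsum_ind : ∑ x : G, Set.indicator E (fun _ => (1:ℝ)) x = M := by
    have h1 : ∀ x : G, Set.indicator E (fun _ => (1:ℝ)) x = if x ∈ E then 1 else 0 :=
      fun x => Set.indicator_apply E _ x
    rw [hM]
    simp only [h1]
    rw [Finset.sum_boole]
    congr 1
    rw [Set.ncard_eq_toFinset_card']
    congr 1
    ext x
    simp
  have hsumabsf : ∑ x : G, ‖f x‖ = M := by
    simp only [habsf]; exact hsum_ind
  have hsumff : ∑ x : G, f x * (starRingEnd ℂ) (f x) = (M : ℂ) := by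
    have : ∀ x : G, f x * (starRingEnd ℂ) (f x) = ((Set.indicator E (fun _ => (1:ℝ)) x : ℝ) : ℂ) := by
      intro x
      by_cases hx : x ∈ E <;> simp [hf, hx]
    simp only [this]
    rw [← Complex.ofReal_sum, hsum_ind]
  -- expansion of |fh ξ|²
  have hexpand : ∀ ξ : H, fh ξ * (starRingEnd ℂ) (fh ξ)
      = ∑ x : G, ∑ y : G, f x * (starRingEnd ℂ) (f y) * e (y - x) ξ := by
    intro ξ
    rw [hfh]
    simp only
    rw [map_sum, Finset.sum_mul_sum]
    refine Finset.sum_congr rfl fun x _ => Finset.sum_congr rfl fun y _ => ?_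
    have h1 : e (y - x) ξ = e (-x) ξ * e y ξ := by
      rw [sub_eq_neg_add, hmul]
    have h2 : (starRingEnd ℂ) (e (-y) ξ) = e y ξ := by
      rw [heneg y ξ, Complex.conj_conj]
    rw [map_mul, h2, h1]
    ring
  -- Plancherel
  have hswap3 : ∀ (F : H → G → G → ℂ),
      ∑ ξ : H, ∑ x : G, ∑ y : G, F ξ x y = ∑ x : G, ∑ y : G, ∑ ξ : H, F ξ x y := by
    intro F
    rw [Finset.sum_comm]
    exact Finset.sum_congr rfl fun x _ => Finset.sum_comm
  have hcollapse : ∀ c : ℂ, ∑ x : G, ∑ y : G, f x * (starRingEnd ℂ) (f y) *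
      (if y - x = 0 then c else 0) = (M : ℂ) * c := by
    intro c
    have h1 : ∀ x y : G, f x * (starRingEnd ℂ) (f y) * (if y - x = 0 then c else 0)
        = if y = x then f x * (starRingEnd ℂ) (f x) * c else 0 := by
      intro x y
      by_cases hxy : y = x
      · subst hxy; simp
      · rw [if_neg hxy, if_neg (fun hc => hxy (sub_eq_zero.mp hc)), mul_zero]
    calc ∑ x : G, ∑ y : G, f x * (starRingEnd ℂ) (f y) * (if y - x = 0 then c else 0)
        = ∑ x : G, ∑ y : G, if y = x then f x * (starRingEnd ℂ) (f x) * c else 0 := by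
          exact Finset.sum_congr rfl fun x _ => Finset.sum_congr rfl fun y _ => h1 x y
      _ = ∑ x : G, f x * (starRingEnd ℂ) (f x) * c := by
          refine Finset.sum_congr rfl fun x _ => ?_
          rw [Finset.sum_ite_eq' Finset.univ x (fun _ => f x * (starRingEnd ℂ) (f x) * c)]
          simp
      _ = (M : ℂ) * c := by rw [← Finset.sum_mul, hsumff]
  have hplanchC : ∑ ξ : H, (fh ξ * (starRingEnd ℂ) (fh ξ)) = (M : ℂ) * (cg : ℂ) := by
    calc ∑ ξ : H, fh ξ * (starRingEnd ℂ) (fh ξ)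
        = ∑ ξ : H, ∑ x : G, ∑ y : G, f x * (starRingEnd ℂ) (f y) * e (y - x) ξ :=
          Finset.sum_congr rfl fun ξ _ => hexpand ξ
      _ = ∑ x : G, ∑ y : G, ∑ ξ : H, f x * (starRingEnd ℂ) (f y) * e (y - x) ξ := hswap3 _
      _ = ∑ x : G, ∑ y : G, f x * (starRingEnd ℂ) (f y) *
            (if y - x = 0 then (cg : ℂ) else 0) := by
          refine Finset.sum_congr rfl fun x _ => Finset.sum_congr rfl fun y _ => ?_
          rw [← Finset.mul_sum, horth (y - x)]
      _ = (M : ℂ) * (cg : ℂ) := hcollapse _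
  have hplanch : ∑ ξ : H, Complex.normSq (fh ξ) = (cg : ℝ) * M := by
    have h1 : ∀ ξ : H, Complex.normSq (fh ξ) = (fh ξ * (starRingEnd ℂ) (fh ξ)).re := by
      intro ξ; rw [Complex.mul_conj]; simp
    simp only [h1]
    rw [← Complex.re_sum, hplanchC]
    simp [mul_comm]
  -- S = T.re
  have hST : (∑ ξ : H, w ξ * ‖fh ξ‖ ^ 2)
      = (∑ x : G, ∑ y : G, f x * (starRingEnd ℂ) (f y) * K (y - x)).re := by
    have hc : ∑ ξ : H, ((w ξ : ℂ) * (fh ξ * (starRingEnd ℂ) (fh ξ)))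
        = ∑ x : G, ∑ y : G, f x * (starRingEnd ℂ) (f y) * K (y - x) := by
      calc ∑ ξ : H, ((w ξ : ℂ) * (fh ξ * (starRingEnd ℂ) (fh ξ)))
          = ∑ ξ : H, ∑ x : G, ∑ y : G,
              (w ξ : ℂ) * (f x * (starRingEnd ℂ) (f y) * e (y - x) ξ) := by
            refine Finset.sum_congr rfl fun ξ _ => ?_
            rw [hexpand, Finset.mul_sum]
            exact Finset.sum_congr rfl fun x _ => Finset.mul_sum _ _ _
        _ = ∑ x : G, ∑ y : G, ∑ ξ : H,
              (w ξ : ℂ) * (f x * (starRingEnd ℂ) (f y) * e (y - x) ξ) := hswap3 _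
        _ = ∑ x : G, ∑ y : G, f x * (starRingEnd ℂ) (f y) * K (y - x) := by
            refine Finset.sum_congr rfl fun x _ => Finset.sum_congr rfl fun y _ => ?_
            rw [hKdef]
            simp only
            rw [Finset.mul_sum]
            exact Finset.sum_congr rfl fun ξ _ => by ring
    have h1 : ∀ ξ : H, w ξ * ‖fh ξ‖ ^ 2
        = ((w ξ : ℂ) * (fh ξ * (starRingEnd ℂ) (fh ξ))).re := by
      intro ξ
      rw [Complex.mul_conj, ← Complex.ofReal_mul]
      rw [Complex.ofReal_re, Complex.sq_norm]
    simp only [h1]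
    rw [← Complex.re_sum, hc]
  -- split into near and far
  set T₁ : ℂ := ∑ x : G, ∑ y : G, f x * (starRingEnd ℂ) (f y) *
      ((φ ρ (y - x) : ℂ) * K (y - x)) with hT₁def
  set T₂ : ℂ := ∑ x : G, ∑ y : G, f x * (starRingEnd ℂ) (f y) *
      ((1 - (φ ρ (y - x) : ℂ)) * K (y - x)) with hT₂def
  have hsplit : (∑ x : G, ∑ y : G, f x * (starRingEnd ℂ) (f y) * K (y - x)) = T₁ + T₂ := by
    rw [hT₁def, hT₂def, ← Finset.sum_add_distrib]
    refine Finset.sum_congr rfl fun x _ => ?_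
    rw [← Finset.sum_add_distrib]
    exact Finset.sum_congr rfl fun y _ => by ring
  -- far field bound
  have hfar : T₂.re ≤ 2 * B * ρ ^ (-b / 2) * M ^ 2 := by
    have hc0 : 0 ≤ B * ρ ^ (-b / 2) := mul_nonneg hB (Real.rpow_nonneg hρ.le _)
    have habs2 : ∀ x y : G,
        ‖f x * (starRingEnd ℂ) (f y) * ((1 - (φ ρ (y - x) : ℂ)) * K (y - x))‖
        ≤ ‖f x‖ * ‖f y‖ * (2 * (B * ρ ^ (-b / 2))) := by
      intro x y
      by_cases hmem : y - x ∈ BG ρ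
      · rw [hφ1 ρ hρ _ hmem]
        simp only [Complex.ofReal_one, sub_self, zero_mul, mul_zero, norm_zero]
        positivity
      · have hKb := hK ρ hρ _ hmem
        have hφb : ‖1 - (φ ρ (y - x) : ℂ)‖ ≤ 2 := by
          calc ‖1 - (φ ρ (y - x) : ℂ)‖
              ≤ ‖(1:ℂ)‖ + ‖(φ ρ (y - x) : ℂ)‖ := by
                have := norm_sub_le (1 : ℂ) ((φ ρ (y - x) : ℂ))
                simpa using this
            _ ≤ 1 + 1 := by
                simp only [norm_one]
                gcongr
                rw [Complex.norm_real, Real.norm_eq_abs]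
                exact hφle1 ρ (y - x)
            _ = 2 := by norm_num
        have hprod : ‖(1 - (φ ρ (y - x) : ℂ)) * K (y - x)‖
            ≤ 2 * (B * ρ ^ (-b / 2)) := by
          rw [norm_mul]
          exact mul_le_mul hφb hKb (norm_nonneg _) (by norm_num)
        rw [norm_mul, norm_mul, Complex.norm_conj]
        exact mul_le_mul_of_nonneg_left hprod (by positivity)
    have h1 : T₂.re ≤ ‖T₂‖ := Complex.re_le_norm _
    have h2 : ‖T₂‖ ≤ ∑ x : G, ∑ y : G,
        ‖f x‖ * ‖f y‖ * (2 * (B * ρ ^ (-b / 2))) := by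
      calc ‖T₂‖ ≤ ∑ x : G, ‖∑ y : G, f x * (starRingEnd ℂ) (f y) *
            ((1 - (φ ρ (y - x) : ℂ)) * K (y - x))‖ := norm_sum_le _ _
        _ ≤ ∑ x : G, ∑ y : G, ‖f x * (starRingEnd ℂ) (f y) *
            ((1 - (φ ρ (y - x) : ℂ)) * K (y - x))‖ :=
            Finset.sum_le_sum fun x _ => norm_sum_le _ _
        _ ≤ ∑ x : G, ∑ y : G,
            ‖f x‖ * ‖f y‖ * (2 * (B * ρ ^ (-b / 2))) :=
            Finset.sum_le_sum fun x _ => Finset.sum_le_sum fun y _ => habs2 x y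
    have h3 : ∑ x : G, ∑ y : G,
        ‖f x‖ * ‖f y‖ * (2 * (B * ρ ^ (-b / 2)))
        = 2 * B * ρ ^ (-b / 2) * M ^ 2 := by
      calc ∑ x : G, ∑ y : G, ‖f x‖ * ‖f y‖ * (2 * (B * ρ ^ (-b / 2)))
          = ∑ x : G, ∑ y : G, ‖f x‖ *
              (‖f y‖ * (2 * (B * ρ ^ (-b / 2)))) := by
            simp [mul_assoc]
        _ = (∑ x : G, ‖f x‖) *
              (∑ y : G, ‖f y‖ * (2 * (B * ρ ^ (-b / 2)))) :=
            (Finset.sum_mul_sum _ _ _ _).symm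
        _ = M * (M * (2 * (B * ρ ^ (-b / 2)))) := by
            rw [hsumabsf, ← Finset.sum_mul, hsumabsf]
        _ = 2 * B * ρ ^ (-b / 2) * M ^ 2 := by ring
    linarith
  -- near field
  have h2an : (2:ℝ) ^ (a - n) < 1 :=
    Real.rpow_lt_one_of_one_lt_of_neg one_lt_two (by linarith)
  have h2an0 : (0:ℝ) < 1 - (2:ℝ) ^ (a - n) := by linarith
  set c₀ : ℝ := (2:ℝ) ^ n + (2:ℝ) ^ a * (1 - (2:ℝ) ^ (a - n))⁻¹ with hc₀def
  set cb : ℝ := c₀ * ((C₁ + C₂) * A) * ρ ^ (n - a) with hcbdef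
  have hc₀pos : 0 < c₀ := by
    rw [hc₀def]; positivity
  have hcb0 : 0 ≤ cb := by
    rw [hcbdef]
    have : (0:ℝ) ≤ (C₁ + C₂) * A := mul_nonneg (by linarith) hA
    positivity
  have hφhabs : ∀ ζ : H, ‖φh ζ‖ ≤ C₁ * (2 * ρ) ^ n := by
    intro ζ
    have h1 : ‖φh ζ‖ ≤ ∑ z : G, |φ ρ z| := by
      rw [hφh]
      simp only
      refine le_trans (norm_sum_le _ _) (le_of_eq ?_)
      refine Finset.sum_congr rfl fun z _ => ?_
      rw [norm_mul, Complex.norm_real, Real.norm_eq_abs, habs, mul_one]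
    have h2 : ∑ z : G, |φ ρ z| ≤ ((BG (2 * ρ)).ncard : ℝ) := by
      have h3 : ∀ z : G, |φ ρ z| ≤ if z ∈ BG (2 * ρ) then (1:ℝ) else 0 := by
        intro z
        by_cases hz : z ∈ BG (2 * ρ)
        · rw [if_pos hz]; exact hφle1 ρ z
        · rw [if_neg hz]
          have : φ ρ z = 0 := by
            by_contra hc
            exact hz (hφsupp ρ hρ z hc)
          simp [this]
      refine le_trans (Finset.sum_le_sum fun z _ => h3 z) (le_of_eq ?_)
      rw [Finset.sum_boole]
      norm_num
      rw [Set.ncard_eq_toFinset_card']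
      congr 1
      ext z
      simp
    exact le_trans (h1.trans h2) (hGcount (2 * ρ) (by linarith))
  have hballsum : ∀ r : ℝ, 0 < r → ∀ ξ : H,
      ∑ η ∈ Finset.univ.filter (fun η : H => η - ξ ∈ BH r), w η ≤ A * r ^ a := by
    intro r hr ξ
    have h1 : ∑ η ∈ Finset.univ.filter (fun η : H => η - ξ ∈ BH r), w η
        = ∑ η : H, Set.indicator (BH r) (fun _ => (1 : ℝ)) (η - ξ) * w η := by
      rw [Finset.sum_filter]
      refine Finset.sum_congr rfl fun η _ => ?_
      by_cases hη : η - ξ ∈ BH r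
      · rw [if_pos hη, Set.indicator_of_mem hη, one_mul]
      · rw [if_neg hη, Set.indicator_of_notMem hη, zero_mul]
    rw [h1]
    exact hμball r hr ξ
  have hWsum : ∀ ξ : H, ∑ η : H, w η * ‖φh (ξ - η)‖ ≤ cb := by
    intro ξ
    rw [← Finset.sum_filter_add_sum_filter_not Finset.univ
      (fun η : H => η - ξ ∈ BH (1 / ρ)) (fun η => w η * ‖φh (ξ - η)‖)]
    have hpartA : ∑ η ∈ Finset.univ.filter (fun η : H => η - ξ ∈ BH (1 / ρ)),
        w η * ‖φh (ξ - η)‖ ≤ (2:ℝ) ^ n * C₁ * A * ρ ^ (n - a) := by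
      calc ∑ η ∈ Finset.univ.filter (fun η : H => η - ξ ∈ BH (1 / ρ)),
            w η * ‖φh (ξ - η)‖
          ≤ ∑ η ∈ Finset.univ.filter (fun η : H => η - ξ ∈ BH (1 / ρ)),
            w η * (C₁ * (2 * ρ) ^ n) :=
            Finset.sum_le_sum fun η _ =>
              mul_le_mul_of_nonneg_left (hφhabs (ξ - η)) (hw η)
        _ = (∑ η ∈ Finset.univ.filter (fun η : H => η - ξ ∈ BH (1 / ρ)), w η) *
            (C₁ * (2 * ρ) ^ n) := by rw [Finset.sum_mul]
        _ ≤ (A * (1 / ρ) ^ a) * (C₁ * (2 * ρ) ^ n) := by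
            have h0 : (0:ℝ) ≤ C₁ * (2 * ρ) ^ n := by positivity
            exact mul_le_mul_of_nonneg_right (hballsum (1 / ρ) (by positivity) ξ) h0
        _ = (2:ℝ) ^ n * C₁ * A * ρ ^ (n - a) := by
            rw [Real.mul_rpow (by norm_num) hρ.le, one_div, Real.inv_rpow hρ.le,
              Real.rpow_sub hρ]
            field_simp
    have hex : ∀ η : H, ∃ m : ℕ, η - ξ ∈ BH ((2:ℝ) ^ (m + 1) / ρ) := by
      intro η
      obtain ⟨r, hr, hmem⟩ := hBHcover (η - ξ)
      obtain ⟨m, hm⟩ := exists_nat_gt (r * ρ)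
      refine ⟨m, hBHnest r _ hr ?_ hmem⟩
      have h1 : (m:ℝ) ≤ (2:ℝ) ^ (m + 1) := by
        have := Nat.lt_two_pow_self (n := m)
        have h2 : (2:ℕ) ^ m ≤ 2 ^ (m + 1) := Nat.pow_le_pow_right (by norm_num) (by omega)
        exact_mod_cast le_of_lt (lt_of_lt_of_le this h2)
      calc r = r * ρ / ρ := by field_simp
        _ ≤ (2:ℝ) ^ (m + 1) / ρ := by
            apply div_le_div_of_nonneg_right ?_ hρ.le
            linarith
    set k : H → ℕ := fun η => Nat.find (hex η) with hk
    have hkmem : ∀ η : H, η - ξ ∈ BH ((2:ℝ) ^ (k η + 1) / ρ) := fun η => Nat.find_spec (hex η)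
    have hknot : ∀ η : H, η - ξ ∉ BH (1 / ρ) → η - ξ ∉ BH ((2:ℝ) ^ (k η) / ρ) := by
      intro η hη
      rcases Nat.eq_zero_or_pos (k η) with h0 | h0
      · rw [h0]
        simpa using hη
      · have := Nat.find_min (hex η) (show k η - 1 < k η by omega)
        have heq : k η - 1 + 1 = k η := by omega
        rwa [heq] at this
    have hdecayη : ∀ η : H, η - ξ ∉ BH (1 / ρ) →
        ‖φh (ξ - η)‖ ≤ C₂ * ((2:ℝ) ^ (k η) / ρ) ^ (-n) := by
      intro η hη
      have hs : 1 / ρ ≤ (2:ℝ) ^ (k η) / ρ := by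
        apply div_le_div_of_nonneg_right ?_ hρ.le
        exact one_le_pow₀ (by norm_num)
      have hcond : -(ξ - η) ∉ BH ((2:ℝ) ^ (k η) / ρ) := by
        rw [neg_sub]
        exact hknot η hη
      exact hdecay ρ hρ _ hs (ξ - η) hcond
    set N : ℕ := Finset.univ.sup k + 1 with hN
    set Q : Finset H := Finset.univ.filter (fun η : H => ¬ (η - ξ ∈ BH (1 / ρ))) with hQ
    have hfib : ∑ η ∈ Q, w η * ‖φh (ξ - η)‖
        = ∑ m ∈ Finset.range N, ∑ η ∈ Q.filter (fun η => k η = m),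
            w η * ‖φh (ξ - η)‖ := by
      refine (Finset.sum_fiberwise_of_maps_to (fun η _ => ?_) _).symm
      rw [Finset.mem_range, hN]
      exact Nat.lt_succ_of_le (Finset.le_sup (Finset.mem_univ η))
    have hfiber : ∀ m : ℕ, ∑ η ∈ Q.filter (fun η => k η = m),
        w η * ‖φh (ξ - η)‖
        ≤ (C₂ * ((2:ℝ) ^ m / ρ) ^ (-n)) * (A * ((2:ℝ) ^ (m + 1) / ρ) ^ a) := by
      intro m
      have hstep1 : ∑ η ∈ Q.filter (fun η => k η = m), w η * ‖φh (ξ - η)‖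
          ≤ (∑ η ∈ Q.filter (fun η => k η = m), w η) * (C₂ * ((2:ℝ) ^ m / ρ) ^ (-n)) := by
        rw [Finset.sum_mul]
        refine Finset.sum_le_sum fun η hη => ?_
        rw [Finset.mem_filter, hQ, Finset.mem_filter] at hη
        obtain ⟨⟨-, hη1⟩, hη2⟩ := hη
        have := hdecayη η hη1
        rw [hη2] at this
        exact mul_le_mul_of_nonneg_left this (hw η)
      have hstep2 : ∑ η ∈ Q.filter (fun η => k η = m), w η
          ≤ A * ((2:ℝ) ^ (m + 1) / ρ) ^ a := by
        refine le_trans ?_ (hballsum ((2:ℝ) ^ (m + 1) / ρ) (by positivity) ξ)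
        refine Finset.sum_le_sum_of_subset_of_nonneg ?_ (fun η _ _ => hw η)
        intro η hη
        rw [Finset.mem_filter, hQ, Finset.mem_filter] at hη
        obtain ⟨⟨-, -⟩, hη2⟩ := hη
        rw [Finset.mem_filter]
        refine ⟨Finset.mem_univ η, ?_⟩
        have := hkmem η
        rwa [hη2] at this
      calc ∑ η ∈ Q.filter (fun η => k η = m), w η * ‖φh (ξ - η)‖
          ≤ (∑ η ∈ Q.filter (fun η => k η = m), w η) * (C₂ * ((2:ℝ) ^ m / ρ) ^ (-n)) := hstep1
        _ ≤ (A * ((2:ℝ) ^ (m + 1) / ρ) ^ a) * (C₂ * ((2:ℝ) ^ m / ρ) ^ (-n)) := by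
            exact mul_le_mul_of_nonneg_right hstep2 (by positivity)
        _ = (C₂ * ((2:ℝ) ^ m / ρ) ^ (-n)) * (A * ((2:ℝ) ^ (m + 1) / ρ) ^ a) := by ring
    have hpow : ∀ m : ℕ, ((2:ℝ) ^ m / ρ) ^ (-n) * ((2:ℝ) ^ (m + 1) / ρ) ^ a
        = ρ ^ (n - a) * ((2:ℝ) ^ a * ((2:ℝ) ^ (a - n)) ^ m) := by
      intro m
      apply Real.log_injOn_pos (Set.mem_Ioi.2 (by positivity)) (Set.mem_Ioi.2 (by positivity))
      rw [Real.log_mul (by positivity) (by positivity),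
        Real.log_rpow (by positivity), Real.log_rpow (by positivity),
        Real.log_div (by positivity) (by positivity),
        Real.log_div (by positivity) (by positivity),
        Real.log_pow, Real.log_pow,
        Real.log_mul (by positivity) (by positivity),
        Real.log_rpow hρ, Real.log_mul (by positivity) (by positivity),
        Real.log_rpow (by norm_num : (0:ℝ) < 2),
        Real.log_pow, Real.log_rpow (by norm_num : (0:ℝ) < 2)]
      push_cast
      ring
    have hpartB : ∑ η ∈ Q, w η * ‖φh (ξ - η)‖
        ≤ (2:ℝ) ^ a * (1 - (2:ℝ) ^ (a - n))⁻¹ * C₂ * A * ρ ^ (n - a) := by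
      rw [hfib]
      calc ∑ m ∈ Finset.range N, ∑ η ∈ Q.filter (fun η => k η = m),
            w η * ‖φh (ξ - η)‖
          ≤ ∑ m ∈ Finset.range N,
            (C₂ * ((2:ℝ) ^ m / ρ) ^ (-n)) * (A * ((2:ℝ) ^ (m + 1) / ρ) ^ a) :=
            Finset.sum_le_sum fun m _ => hfiber m
        _ = ∑ m ∈ Finset.range N,
            (C₂ * A * ρ ^ (n - a) * (2:ℝ) ^ a) * ((2:ℝ) ^ (a - n)) ^ m := by
            refine Finset.sum_congr rfl fun m _ => ?_
            have := hpow m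
            calc (C₂ * ((2:ℝ) ^ m / ρ) ^ (-n)) * (A * ((2:ℝ) ^ (m + 1) / ρ) ^ a)
                = C₂ * A * (((2:ℝ) ^ m / ρ) ^ (-n) * ((2:ℝ) ^ (m + 1) / ρ) ^ a) := by ring
              _ = C₂ * A * (ρ ^ (n - a) * ((2:ℝ) ^ a * ((2:ℝ) ^ (a - n)) ^ m)) := by rw [this]
              _ = (C₂ * A * ρ ^ (n - a) * (2:ℝ) ^ a) * ((2:ℝ) ^ (a - n)) ^ m := by ring
        _ = (C₂ * A * ρ ^ (n - a) * (2:ℝ) ^ a) *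
            ∑ m ∈ Finset.range N, ((2:ℝ) ^ (a - n)) ^ m := by
            rw [Finset.mul_sum]
        _ ≤ (C₂ * A * ρ ^ (n - a) * (2:ℝ) ^ a) * (1 - (2:ℝ) ^ (a - n))⁻¹ := by
            refine mul_le_mul_of_nonneg_left ?_ (by positivity)
            exact geom_aux _ (by positivity) h2an N
        _ = (2:ℝ) ^ a * (1 - (2:ℝ) ^ (a - n))⁻¹ * C₂ * A * ρ ^ (n - a) := by ring
    have hrest : (2:ℝ) ^ n * C₁ * A * ρ ^ (n - a)
        + (2:ℝ) ^ a * (1 - (2:ℝ) ^ (a - n))⁻¹ * C₂ * A * ρ ^ (n - a) ≤ cb := by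
      have hinvnn : (0:ℝ) ≤ (1 - (2:ℝ) ^ (a - n))⁻¹ := (inv_pos.mpr h2an0).le
      have t1 : (0:ℝ) ≤ ((2:ℝ) ^ n * C₂ + (2:ℝ) ^ a * (1 - (2:ℝ) ^ (a - n))⁻¹ * C₁)
          * A * ρ ^ (n - a) := by
        refine mul_nonneg (mul_nonneg ?_ hA) (Real.rpow_nonneg hρ.le _)
        refine add_nonneg (mul_nonneg (Real.rpow_nonneg (by norm_num) _) hC₂) ?_
        exact mul_nonneg (mul_nonneg (Real.rpow_nonneg (by norm_num) _) hinvnn) hC₁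
      have hexpand : cb = (2:ℝ) ^ n * C₁ * A * ρ ^ (n - a)
          + (2:ℝ) ^ a * (1 - (2:ℝ) ^ (a - n))⁻¹ * C₂ * A * ρ ^ (n - a)
          + ((2:ℝ) ^ n * C₂ + (2:ℝ) ^ a * (1 - (2:ℝ) ^ (a - n))⁻¹ * C₁) * A * ρ ^ (n - a) := by
        rw [hcbdef, hc₀def]; ring
      linarith
    calc (∑ η ∈ Finset.univ.filter (fun η : H => η - ξ ∈ BH (1 / ρ)),
            w η * ‖φh (ξ - η)‖)
        + ∑ η ∈ Finset.univ.filter (fun η : H => ¬ (η - ξ ∈ BH (1 / ρ))),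
            w η * ‖φh (ξ - η)‖
        ≤ (2:ℝ) ^ n * C₁ * A * ρ ^ (n - a)
          + (2:ℝ) ^ a * (1 - (2:ℝ) ^ (a - n))⁻¹ * C₂ * A * ρ ^ (n - a) := by
          refine add_le_add hpartA ?_
          rw [← hQ] at *
          exact hpartB
      _ ≤ cb := hrest
  have hWb : ∀ ξ : H, ‖W ξ‖ ≤ cb := by
    intro ξ
    refine le_trans ?_ (hWsum ξ)
    rw [hWdef]
    simp only
    refine le_trans (norm_sum_le _ _) (le_of_eq ?_)
    refine Finset.sum_congr rfl fun η _ => ?_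
    rw [norm_mul, Complex.norm_real, Real.norm_eq_abs, abs_of_nonneg (hw η)]
  -- inversion identity
  have hinvid : ∀ z : G, ∑ ξ : H, W ξ * e z ξ = (cg : ℂ) * ((φ ρ z : ℂ) * K z) := by
    intro z
    have hkey : ∀ (ξ η : H) (u : G), e (-u) (ξ - η) * e z ξ = e (z - u) ξ * e u η := by
      intro ξ η u
      rw [sub_eq_add_neg ξ η, hmul2, henegneg]
      rw [show z - u = -u + z from sub_eq_neg_add z u, hmul]
      ring
    calc ∑ ξ : H, W ξ * e z ξ
        = ∑ ξ : H, ∑ η : H, ∑ u : G, (w η : ℂ) * (φ ρ u : ℂ) * (e (z - u) ξ * e u η) := by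
          refine Finset.sum_congr rfl fun ξ _ => ?_
          rw [hWdef]
          simp only
          rw [Finset.sum_mul]
          refine Finset.sum_congr rfl fun η _ => ?_
          rw [hφh]
          simp only
          rw [Finset.mul_sum, Finset.sum_mul]
          refine Finset.sum_congr rfl fun u _ => ?_
          rw [← hkey ξ η u]
          ring
      _ = ∑ η : H, ∑ u : G, ∑ ξ : H, (w η : ℂ) * (φ ρ u : ℂ) * (e (z - u) ξ * e u η) := by
          rw [Finset.sum_comm]
          exact Finset.sum_congr rfl fun η _ => Finset.sum_comm
      _ = ∑ η : H, ∑ u : G, (w η : ℂ) * (φ ρ u : ℂ) * e u η *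
            (if z - u = 0 then (cg : ℂ) else 0) := by
          refine Finset.sum_congr rfl fun η _ => Finset.sum_congr rfl fun u _ => ?_
          rw [← horth (z - u), Finset.mul_sum]
          refine Finset.sum_congr rfl fun ξ _ => by ring
      _ = ∑ η : H, (w η : ℂ) * (φ ρ z : ℂ) * e z η * (cg : ℂ) := by
          refine Finset.sum_congr rfl fun η _ => ?_
          have h1 : ∀ u : G, (w η : ℂ) * (φ ρ u : ℂ) * e u η * (if z - u = 0 then (cg : ℂ) else 0)
              = if u = z then (w η : ℂ) * (φ ρ u : ℂ) * e u η * (cg : ℂ) else 0 := by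
            intro u
            by_cases huz : u = z
            · subst huz; simp
            · rw [if_neg huz, if_neg (fun hc => huz (sub_eq_zero.mp hc).symm), mul_zero]
          rw [Finset.sum_congr rfl fun u _ => h1 u]
          rw [Finset.sum_ite_eq' Finset.univ z
            (fun u => (w η : ℂ) * (φ ρ u : ℂ) * e u η * (cg : ℂ))]
          simp
      _ = (cg : ℂ) * ((φ ρ z : ℂ) * K z) := by
          rw [hKdef]
          simp only
          rw [Finset.mul_sum, Finset.mul_sum]
          refine Finset.sum_congr rfl fun η _ => by ring
  -- T₁ Fourier representation
  have hT1 : (cg : ℂ) * T₁ = ∑ ξ : H, W ξ * (fh ξ * (starRingEnd ℂ) (fh ξ)) := by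
    calc (cg : ℂ) * T₁
        = ∑ x : G, ∑ y : G, f x * (starRingEnd ℂ) (f y) *
            ((cg : ℂ) * ((φ ρ (y - x) : ℂ) * K (y - x))) := by
          rw [hT₁def, Finset.mul_sum]
          refine Finset.sum_congr rfl fun x _ => ?_
          rw [Finset.mul_sum]
          exact Finset.sum_congr rfl fun y _ => by ring
      _ = ∑ x : G, ∑ y : G, f x * (starRingEnd ℂ) (f y) * (∑ ξ : H, W ξ * e (y - x) ξ) := by
          refine Finset.sum_congr rfl fun x _ => Finset.sum_congr rfl fun y _ => ?_
          rw [hinvid]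
      _ = ∑ x : G, ∑ y : G, ∑ ξ : H, W ξ * (f x * (starRingEnd ℂ) (f y) * e (y - x) ξ) := by
          refine Finset.sum_congr rfl fun x _ => Finset.sum_congr rfl fun y _ => ?_
          rw [Finset.mul_sum]
          exact Finset.sum_congr rfl fun ξ _ => by ring
      _ = ∑ ξ : H, ∑ x : G, ∑ y : G, W ξ * (f x * (starRingEnd ℂ) (f y) * e (y - x) ξ) :=
          (hswap3 _).symm
      _ = ∑ ξ : H, W ξ * (fh ξ * (starRingEnd ℂ) (fh ξ)) := by
          refine Finset.sum_congr rfl fun ξ _ => ?_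
          rw [hexpand ξ, Finset.mul_sum]
          exact Finset.sum_congr rfl fun x _ => (Finset.mul_sum _ _ _).symm
  have hcgpos : 0 < (cg : ℝ) := by
    have : 0 < cg := Fintype.card_pos_iff.mpr ⟨0⟩
    exact_mod_cast this
  have hnear : T₁.re ≤ cb * M := by
    have h0 : ((cg : ℂ) * T₁).re = (cg : ℝ) * T₁.re := by
      rw [show ((cg : ℕ) : ℂ) = (((cg : ℕ) : ℝ) : ℂ) by push_cast; ring,
        Complex.re_ofReal_mul]
    have h1 : ((cg : ℂ) * T₁).re ≤ cb * ((cg : ℝ) * M) := by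
      rw [hT1]
      calc (∑ ξ : H, W ξ * (fh ξ * (starRingEnd ℂ) (fh ξ))).re
          = ∑ ξ : H, (W ξ * ((Complex.normSq (fh ξ) : ℝ) : ℂ)).re := by
            rw [Complex.re_sum]
            exact Finset.sum_congr rfl fun ξ _ => by rw [Complex.mul_conj]
        _ = ∑ ξ : H, (W ξ).re * Complex.normSq (fh ξ) := by
            refine Finset.sum_congr rfl fun ξ _ => ?_
            rw [mul_comm, Complex.re_ofReal_mul]
            ring
        _ ≤ ∑ ξ : H, cb * Complex.normSq (fh ξ) := by
            refine Finset.sum_le_sum fun ξ _ => ?_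
            have h2 : (W ξ).re ≤ cb := le_trans (Complex.re_le_norm _) (hWb ξ)
            exact mul_le_mul_of_nonneg_right h2 (Complex.normSq_nonneg _)
        _ = cb * ((cg : ℝ) * M) := by rw [← Finset.mul_sum, hplanch]
    rw [h0] at h1
    have := (mul_le_mul_iff_right₀ hcgpos).mp (by linarith : (cg : ℝ) * T₁.re ≤ (cg : ℝ) * (cb * M))
    linarith
  -- combine
  have hgoal : (∑ ξ : H, w ξ * ‖fh ξ‖ ^ 2)
      ≤ cb * M + 2 * B * ρ ^ (-b / 2) * M ^ 2 := by
    rw [hST, hsplit, Complex.add_re]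
    exact add_le_add hnear hfar
  have hfinal : (∑ ξ : H, w ξ *
      ‖∑ x : G, Set.indicator E (fun _ => (1 : ℂ)) x * e (-x) ξ‖ ^ 2)
      = ∑ ξ : H, w ξ * ‖fh ξ‖ ^ 2 := rfl
  rw [hfinal]
  calc ∑ ξ : H, w ξ * ‖fh ξ‖ ^ 2
      ≤ cb * M + 2 * B * ρ ^ (-b / 2) * M ^ 2 := hgoal
    _ = c₀ * ((C₁ + C₂) * A) * ρ ^ (n - a) * M + 2 * B * ρ ^ (-b / 2) * M ^ 2 := by
        rw [hcbdef]

theorem stmt_2 (n a : ℝ) (han : a < n) :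
    ∃ C : ℝ, 0 < C ∧
      ∀ b : ℝ, 0 < b → b ≤ a →
      ∀ C₁ C₂ C₃ A B : ℝ, 0 ≤ C₁ → 0 ≤ C₂ → 0 ≤ C₃ → 0 ≤ A → 0 ≤ B →
      ∀ (G H : Type) [AddCommGroup G] [Fintype G] [DecidableEq G]
        [AddCommGroup H] [Fintype H]
        (e : G → H → ℂ) (BG : ℝ → Set G) (BH : ℝ → Set H)
        (φ : ℝ → G → ℝ) (w : H → ℝ),
        (∀ (x y : G) (ξ : H), e (x + y) ξ = e x ξ * e y ξ) →
        (∀ (x : G) (ξ η : H), e x (ξ + η) = e x ξ * e x η) →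
        (∀ (x : G) (ξ : H), ‖e x ξ‖ = 1) →
        (∀ x : G, ∑ ξ : H, e x ξ = if x = 0 then (Fintype.card G : ℂ) else 0) →
        (∀ ρ ρ' : ℝ, 0 < ρ → ρ ≤ ρ' → BG ρ ⊆ BG ρ') →
        (∀ (ρ : ℝ) (x : G), x ∈ BG ρ → -x ∈ BG ρ) →
        (∀ x : G, ∃ ρ : ℝ, 0 < ρ ∧ x ∈ BG ρ) →
        (∀ ρ ρ' : ℝ, 0 < ρ → ρ ≤ ρ' → BH ρ ⊆ BH ρ') →
        (∀ (ρ : ℝ) (ξ : H), ξ ∈ BH ρ → -ξ ∈ BH ρ) →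
        (∀ ξ : H, ∃ ρ : ℝ, 0 < ρ ∧ ξ ∈ BH ρ) →
        (∀ ρ : ℝ, 0 < ρ → ((BG ρ).ncard : ℝ) ≤ C₁ * ρ ^ n) →
        (∀ ρ : ℝ, 0 < ρ → ∀ x ∈ BG ρ, φ ρ x = 1) →
        (∀ ρ : ℝ, 0 < ρ → ∀ x : G, φ ρ x ≠ 0 → x ∈ BG (2 * ρ)) →
        (∀ (ρ : ℝ) (x : G), |φ ρ x| ≤ 1) →
        (∀ ρ : ℝ, 0 < ρ → ∀ s : ℝ, 1 / ρ ≤ s → ∀ ξ : H, -ξ ∉ BH s →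
          ‖∑ x : G, (φ ρ x : ℂ) * e (-x) ξ‖ ≤ C₂ * s ^ (-n)) →
        (∀ ρ : ℝ, 0 < ρ →
          (Fintype.card G : ℝ)⁻¹ *
              ∑ ξ : H, ‖∑ x : G, (φ ρ x : ℂ) * e (-x) ξ‖ ≤ C₃) →
        (∀ ξ : H, 0 ≤ w ξ) →
        (∀ ρ : ℝ, 0 < ρ → ∀ ξ : H,
          ∑ η : H, Set.indicator (BH ρ) (fun _ => (1 : ℝ)) (η - ξ) * w η ≤ A * ρ ^ a) →
        (∀ ρ : ℝ, 0 < ρ → ∀ x : G, x ∉ BG ρ →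
          ‖∑ ξ : H, (w ξ : ℂ) * e x ξ‖ ≤ B * ρ ^ (-b / 2)) →
        ∀ E : Set G,
          (∑ ξ : H, w ξ *
              ‖∑ x : G, Set.indicator E (fun _ => (1 : ℂ)) x * e (-x) ξ‖ ^ 2)
              ^ ((1 : ℝ) / 2)
            ≤ C * (C₁ + C₂) ^ ((1 - 2 * (n - a) / (2 * (n - a) + b)) / 2) *
                A ^ ((1 - 2 * (n - a) / (2 * (n - a) + b)) / 2) *
                B ^ ((2 * (n - a) / (2 * (n - a) + b)) / 2) *
                (E.ncard : ℝ) ^ ((4 * (n - a) + b) / (4 * (n - a) + 2 * b)) := by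
  have h2an : (2:ℝ) ^ (a - n) < 1 :=
    Real.rpow_lt_one_of_one_lt_of_neg one_lt_two (by linarith)
  have h2an0 : (0:ℝ) < 1 - (2:ℝ) ^ (a - n) := by linarith
  set c₀ : ℝ := (2:ℝ) ^ n + (2:ℝ) ^ a * (1 - (2:ℝ) ^ (a - n))⁻¹ with hc₀def
  have hc₀pos : 0 < c₀ := by rw [hc₀def]; positivity
  refine ⟨3 * c₀, by positivity, ?_⟩
  intro b hb hba C₁ C₂ C₃ A B hC₁ hC₂ hC₃ hA hB G H _ _ _ _ _ e BG BH φ w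
    hmul hmul2 habs horth hBGnest hBGsym hBGcover hBHnest hBHsym hBHcover
    hGcount hφ1 hφsupp hφle1 hdecay hφL1 hw hμball hK E
  have hapos : 0 < a := lt_of_lt_of_le hb hba
  have hnpos : 0 < n := lt_trans hapos han
  have hs : 0 < n - a := by linarith
  set M : ℝ := (E.ncard : ℝ) with hMdef
  have hM0 : 0 ≤ M := by rw [hMdef]; positivity
  set S : ℝ := ∑ ξ : H, w ξ *
      ‖∑ x : G, Set.indicator E (fun _ => (1 : ℂ)) x * e (-x) ξ‖ ^ 2 with hSdef
  have hS0 : 0 ≤ S := by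
    rw [hSdef]
    exact Finset.sum_nonneg fun ξ _ => mul_nonneg (hw ξ) (by positivity)
  set D' : ℝ := c₀ * ((C₁ + C₂) * A) with hD'def
  have hD'0 : 0 ≤ D' := by
    rw [hD'def]
    exact mul_nonneg hc₀pos.le (mul_nonneg (by linarith) hA)
  have hmain : ∀ ρ : ℝ, 0 < ρ → S ≤ D' * ρ ^ (n - a) * M + 2 * B * ρ ^ (-b / 2) * M ^ 2 := by
    intro ρ hρ
    have h := main_est n a b C₁ C₂ A B han hC₁ hC₂ hA hB G H e BG BH φ w
      hmul hmul2 habs horth hBHnest hBHcover hGcount hφ1 hφsupp hφle1 hdecay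
      hw hμball hK E ρ hρ
    rw [hSdef, hD'def, hMdef, hc₀def]
    exact h
  have hopt := opt_aux (n - a) b D' B M S hs hb hD'0 hB hM0 hS0 hmain
  have hθ1 : 2 * (n - a) / (2 * (n - a) + b) < 1 := by
    rw [div_lt_one (by linarith)]; linarith
  have hθ0 : 0 ≤ 2 * (n - a) / (2 * (n - a) + b) := by positivity
  set θ : ℝ := 2 * (n - a) / (2 * (n - a) + b) with hθdef
  have hR0 : 0 ≤ 3 * D' ^ (1 - θ) * B ^ θ * M ^ (1 + θ) := by positivity
  have h12 : S ^ ((1:ℝ)/2) ≤ (3 * D' ^ (1 - θ) * B ^ θ * M ^ (1 + θ)) ^ ((1:ℝ)/2) :=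
    Real.rpow_le_rpow hS0 hopt (by norm_num)
  have hsplit2 : (3 * D' ^ (1 - θ) * B ^ θ * M ^ (1 + θ)) ^ ((1:ℝ)/2)
      = (3:ℝ) ^ ((1:ℝ)/2) * (D' ^ (1 - θ)) ^ ((1:ℝ)/2) * (B ^ θ) ^ ((1:ℝ)/2) *
        (M ^ (1 + θ)) ^ ((1:ℝ)/2) := by
    rw [Real.mul_rpow (by positivity) (Real.rpow_nonneg hM0 _),
        Real.mul_rpow (by positivity) (Real.rpow_nonneg hB _),
        Real.mul_rpow (by norm_num) (Real.rpow_nonneg hD'0 _)]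
  have hDsplit : (D' ^ (1 - θ)) ^ ((1:ℝ)/2)
      = c₀ ^ ((1 - θ)/2) * ((C₁ + C₂) ^ ((1 - θ)/2) * A ^ ((1 - θ)/2)) := by
    rw [← Real.rpow_mul hD'0, show (1 - θ) * ((1:ℝ)/2) = (1 - θ)/2 by ring, hD'def,
      Real.mul_rpow hc₀pos.le (mul_nonneg (by linarith) hA),
      Real.mul_rpow (by linarith) hA]
  have hB2 : (B ^ θ) ^ ((1:ℝ)/2) = B ^ (θ/2) := by
    rw [← Real.rpow_mul hB, show θ * ((1:ℝ)/2) = θ/2 by ring]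
  have hM2 : (M ^ (1 + θ)) ^ ((1:ℝ)/2)
      = M ^ ((4 * (n - a) + b) / (4 * (n - a) + 2 * b)) := by
    rw [← Real.rpow_mul hM0]
    congr 1
    rw [hθdef]
    have h1 : 2 * (n - a) + b ≠ 0 := by positivity
    have h2 : 4 * (n - a) + 2 * b ≠ 0 := by positivity
    field_simp
    ring
  have hc3 : (3:ℝ) ^ ((1:ℝ)/2) * c₀ ^ ((1 - θ)/2) ≤ 3 * c₀ := by
    have h3 : (3:ℝ) ^ ((1:ℝ)/2) ≤ 3 := by
      nth_rewrite 2 [← Real.rpow_one 3]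
      exact Real.rpow_le_rpow_of_exponent_le (by norm_num) (by norm_num)
    have hc1 : (1:ℝ) ≤ c₀ := by
      have h4 : (2:ℝ) ^ (0:ℝ) ≤ (2:ℝ) ^ n :=
        Real.rpow_le_rpow_of_exponent_le (by norm_num) (by linarith)
      rw [Real.rpow_zero] at h4
      have h5 : 0 ≤ (2:ℝ) ^ a * (1 - (2:ℝ) ^ (a - n))⁻¹ :=
        mul_nonneg (Real.rpow_nonneg (by norm_num) _) (inv_pos.mpr h2an0).le
      rw [hc₀def]
      linarith
    have hcc : c₀ ^ ((1 - θ)/2) ≤ c₀ := by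
      nth_rewrite 2 [← Real.rpow_one c₀]
      exact Real.rpow_le_rpow_of_exponent_le hc1 (by linarith)
    exact mul_le_mul h3 hcc (Real.rpow_nonneg hc₀pos.le _) (by norm_num)
  calc S ^ ((1:ℝ)/2)
      ≤ (3 * D' ^ (1 - θ) * B ^ θ * M ^ (1 + θ)) ^ ((1:ℝ)/2) := h12
    _ = ((3:ℝ) ^ ((1:ℝ)/2) * c₀ ^ ((1 - θ)/2)) *
        ((C₁ + C₂) ^ ((1 - θ)/2) * A ^ ((1 - θ)/2) * B ^ (θ/2) *
          M ^ ((4 * (n - a) + b) / (4 * (n - a) + 2 * b))) := by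
        rw [hsplit2, hDsplit, hB2, hM2]; ring
    _ ≤ (3 * c₀) *
        ((C₁ + C₂) ^ ((1 - θ)/2) * A ^ ((1 - θ)/2) * B ^ (θ/2) *
          M ^ ((4 * (n - a) + b) / (4 * (n - a) + 2 * b))) := by
        refine mul_le_mul_of_nonneg_right hc3 ?_
        positivity
    _ = 3 * c₀ * (C₁ + C₂) ^ ((1 - θ)/2) * A ^ ((1 - θ)/2) * B ^ (θ/2) *
          M ^ ((4 * (n - a) + b) / (4 * (n - a) + 2 * b)) := by ring
end

section
/- Let (G, {B^G_ρ}, {B^{Ĝ}_ρ}, {φ_ρ}) be a Littlewood-Paley system, 0 < b ≤ a < n, and μ a probability measure on Ĝ satisfying (Rμ) and (Fμ). Let r₀ := (2(n-a)+b)/(n-a+b) and s₀ := (2(n-a)+b)/(n-a). Then for all Borel sets E, F ⊆ Ĝ, ⟨μ ∗ χ_E, χ_F⟩ ≲_{n,a,b} (C₁+C₂)^{1-θ} A^{1-θ} B^{θ} m̂(E)^{1/r₀} m̂(F)^{1/s₀′}, where θ = 2(n-a)/(2(n-a)+b); consequently the operator f ↦ f ∗ μ is of restricted weak-type (r₀,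 s₀). -/
open scoped BigOperators
open Finset

set_option linter.unusedSectionVars false

section CharAux

variable {G H : Type} [AddCommGroup G] [Fintype G] [DecidableEq G]
  [AddCommGroup H] [Fintype H] (e : G → H → ℂ)

variable (he1 : ∀ (x y : G) (ξ : H), e (x + y) ξ = e x ξ * e y ξ)
  (he2 : ∀ (x : G) (ξ η : H), e x (ξ + η) = e x ξ * e x η)
  (he3 : ∀ (x : G) (ξ : H), ‖e x ξ‖ = 1)
  (he4 : ∀ x : G, ∑ ξ : H, e x ξ = if x = 0 then (Fintype.card G : ℂ) else 0)

section basics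
include he3

lemma e_ne (x : G) (ξ : H) : e x ξ ≠ 0 := by
  intro h
  have := he3 x ξ
  rw [h] at this
  simp at this

include he2 in
lemma e_zero_right (x : G) : e x 0 = 1 := by
  have h := he2 x 0 0
  rw [add_zero] at h
  have hne := e_ne e he3 x 0
  have : e x 0 * 1 = e x 0 * e x 0 := by rw [mul_one]; exact h
  exact (mul_left_cancel₀ hne this).symm

include he1 in
lemma e_zero_left (ξ : H) : e 0 ξ = 1 := by
  have h := he1 0 0 ξ
  rw [add_zero] at h
  have hne := e_ne e he3 0 ξ
  have : e 0 ξ * 1 = e 0 ξ * e 0 ξ := by rw [mul_one]; exact h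
  exact (mul_left_cancel₀ hne this).symm

include he1 in
lemma e_conj (x : G) (ξ : H) : (starRingEnd ℂ) (e x ξ) = e (-x) ξ := by
  have h1 : e x ξ * e (-x) ξ = 1 := by
    rw [← he1, add_neg_cancel, e_zero_left e he1 he3]
  have h2 : e x ξ * (starRingEnd ℂ) (e x ξ) = 1 := by
    rw [Complex.mul_conj]
    norm_cast
    rw [Complex.normSq_eq_norm_sq, he3]
    norm_num
  exact mul_left_cancel₀ (e_ne e he3 x ξ) (h2.trans h1.symm)

include he1 he2 in
lemma e_neg_right (x : G) (ξ : H) : e x (-ξ) = e (-x) ξ := by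
  have h1 : e x ξ * e x (-ξ) = 1 := by
    rw [← he2, add_neg_cancel, e_zero_right e he2 he3]
  have h2 : e x ξ * e (-x) ξ = 1 := by
    rw [← he1, add_neg_cancel, e_zero_left e he1 he3]
  exact mul_left_cancel₀ (e_ne e he3 x ξ) (h1.trans h2.symm)

end basics

include he1 he2 he3 he4 in
lemma card_HG : (Fintype.card H : ℝ) = (Fintype.card G : ℝ) := by
  have h := he4 0
  simp only [if_pos rfl] at h
  rw [Finset.sum_congr rfl (fun ξ _ => e_zero_left e he1 he3 ξ)] at h
  simp at h
  exact_mod_cast h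

include he1 he2 he3 he4 in
lemma e_delta_H [DecidableEq H] (u : H) :
    ∑ x : G, e x u = if u = 0 then (Fintype.card G : ℂ) else 0 := by
  classical
  set N : ℕ := Fintype.card G with hN
  set S : H → ℂ := fun u => ∑ x : G, e x u with hS
  have hS0 : S 0 = (N : ℂ) := by
    rw [hS]
    simp only
    rw [Finset.sum_congr rfl (fun x _ => e_zero_right e he2 he3 x)]
    simp [hN]
  have hC : ∑ u : H, (S u) * (starRingEnd ℂ) (S u) = ((N:ℂ))^2 := by
    have expand : ∀ u : H, (S u) * (starRingEnd ℂ) (S u)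
        = ∑ x : G, ∑ y : G, e (x - y) u := by
      intro u
      rw [hS]
      simp only [map_sum]
      rw [Finset.sum_mul_sum]
      refine Finset.sum_congr rfl (fun x _ => Finset.sum_congr rfl (fun y _ => ?_))
      rw [e_conj e he1 he3, sub_eq_add_neg, he1]
    rw [Finset.sum_congr rfl (fun u _ => expand u)]
    rw [Finset.sum_comm]
    have inner : ∀ x : G, ∑ u : H, ∑ y : G, e (x - y) u = (N : ℂ) := by
      intro x
      rw [Finset.sum_comm]
      rw [Finset.sum_congr rfl (fun y _ => he4 (x - y))]
      simp only [sub_eq_zero]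
      simp
    rw [Finset.sum_congr rfl (fun x _ => inner x)]
    simp [sq, hN]
  have hsum : ∑ u : H, Complex.normSq (S u) = (N : ℝ)^2 := by
    have : ∀ u : H, (S u) * (starRingEnd ℂ) (S u) = ((Complex.normSq (S u) : ℝ) : ℂ) := by
      intro u; rw [Complex.mul_conj]
    rw [Finset.sum_congr rfl (fun u _ => this u)] at hC
    have := hC
    push_cast at this
    exact_mod_cast this
  have hrest : ∑ u ∈ (Finset.univ.erase (0 : H)), Complex.normSq (S u) = 0 := by
    have h0 : Complex.normSq (S 0) = (N:ℝ)^2 := by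
      rw [hS0]
      rw [Complex.normSq_natCast]
      push_cast
      ring
    have h := Finset.sum_erase_add Finset.univ (fun u => Complex.normSq (S u))
      (Finset.mem_univ (0 : H))
    rw [hsum] at h
    linarith [h, h0]
  by_cases hu : u = 0
  · rw [hu, if_pos rfl]; exact hS0
  · rw [if_neg hu]
    have hmem : u ∈ Finset.univ.erase (0 : H) := by
      simp [hu]
    have hz : Complex.normSq (S u) = 0 := by
      have hnonneg : ∀ v ∈ Finset.univ.erase (0:H), 0 ≤ Complex.normSq (S v) :=
        fun v _ => Complex.normSq_nonneg _
      exact (Finset.sum_eq_zero_iff_of_nonneg hnonneg).mp hrest u hmem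
    exact Complex.normSq_eq_zero.mp hz

end CharAux

lemma triple_sum_mul {α β γ : Type} [Fintype α] [Fintype β] [Fintype γ]
    (F : α → ℂ) (W : β → ℂ) (Gc : γ → ℂ) :
    (∑ x, F x) * (∑ y, W y) * (∑ z, Gc z) = ∑ x, ∑ y, ∑ z, F x * W y * Gc z := by
  rw [Finset.sum_mul_sum, Finset.sum_mul]
  refine Finset.sum_congr rfl fun x _ => ?_
  rw [Finset.sum_mul]
  refine Finset.sum_congr rfl fun y _ => ?_
  rw [Finset.mul_sum]

section CharAux2

variable {G H : Type} [AddCommGroup G] [Fintype G] [DecidableEq G]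
  [AddCommGroup H] [Fintype H] (e : G → H → ℂ)

variable (he1 : ∀ (x y : G) (ξ : H), e (x + y) ξ = e x ξ * e y ξ)
  (he2 : ∀ (x : G) (ξ η : H), e x (ξ + η) = e x ξ * e x η)
  (he3 : ∀ (x : G) (ξ : H), ‖e x ξ‖ = 1)
  (he4 : ∀ x : G, ∑ ξ : H, e x ξ = if x = 0 then (Fintype.card G : ℂ) else 0)

include he1 he2 he3 in
lemma e_combine (x : G) (ξ η ζ : H) :
    e x ξ * e (-x) η * e (-x) ζ = e x (ξ - η - ζ) := by
  rw [← e_neg_right e he1 he2 he3 x η, ← e_neg_right e he1 he2 he3 x ζ]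
  rw [← he2, ← he2]
  congr 1
  abel

include he1 he2 he3 he4 in
lemma plancherel [DecidableEq H] (g : H → ℝ) :
    ∑ x : G, Complex.normSq (∑ ξ : H, (g ξ : ℂ) * e (-x) ξ)
      = (Fintype.card G : ℝ) * ∑ ξ : H, (g ξ)^2 := by
  classical
  have key : ∑ x : G, (((Complex.normSq (∑ ξ : H, (g ξ : ℂ) * e (-x) ξ)) : ℝ) : ℂ)
      = (((Fintype.card G : ℝ) * ∑ ξ : H, (g ξ)^2 : ℝ) : ℂ) := by
    have expand : ∀ x : G, (((Complex.normSq (∑ ξ : H, (g ξ : ℂ) * e (-x) ξ)) : ℝ) : ℂ)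
        = ∑ ξ : H, ∑ η : H, (g ξ : ℂ) * (g η : ℂ) * e x (η - ξ) := by
      intro x
      rw [← Complex.mul_conj]
      rw [map_sum, Finset.sum_mul_sum]
      refine Finset.sum_congr rfl (fun ξ _ => Finset.sum_congr rfl (fun η _ => ?_))
      rw [map_mul, Complex.conj_ofReal, e_conj e he1 he3, neg_neg]
      have h5 : e (-x) ξ * e x η = e x (η - ξ) := by
        rw [← e_neg_right e he1 he2 he3 x ξ, ← he2]
        congr 1
        abel
      calc (g ξ : ℂ) * e (-x) ξ * ((g η : ℂ) * e x η)
          = (g ξ : ℂ) * (g η : ℂ) * (e (-x) ξ * e x η) := by ring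
        _ = (g ξ : ℂ) * (g η : ℂ) * e x (η - ξ) := by rw [h5]
    rw [Finset.sum_congr rfl (fun x _ => expand x)]
    rw [Finset.sum_comm]
    have inner : ∀ ξ : H, ∑ x : G, ∑ η : H, (g ξ : ℂ) * (g η : ℂ) * e x (η - ξ)
        = (Fintype.card G : ℂ) * (((g ξ)^2 : ℝ) : ℂ) := by
      intro ξ
      rw [Finset.sum_comm]
      have h6 : ∀ η : H, ∑ x : G, (g ξ : ℂ) * (g η : ℂ) * e x (η - ξ)
          = (g ξ : ℂ) * (g η : ℂ) * (if η - ξ = 0 then (Fintype.card G : ℂ) else 0) := by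
        intro η
        rw [← Finset.mul_sum, e_delta_H e he1 he2 he3 he4]
      rw [Finset.sum_congr rfl (fun η _ => h6 η)]
      simp only [sub_eq_zero, mul_ite, mul_zero]
      rw [Finset.sum_ite_eq' Finset.univ ξ]
      simp only [Finset.mem_univ, if_pos]
      push_cast
      ring
    rw [Finset.sum_congr rfl (fun ξ _ => inner ξ)]
    rw [← Finset.mul_sum]
    push_cast
    ring
  exact_mod_cast key

include he1 he2 he3 he4 in
lemma inversion [DecidableEq H] (f wf g : H → ℝ) :
    ((Fintype.card G : ℕ) : ℂ) * (∑ ξ : H, ∑ η : H, (f ξ : ℂ) * (wf η : ℂ) * (g (ξ - η) : ℂ))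
      = ∑ x : G, ((∑ ξ : H, (f ξ : ℂ) * e x ξ) * (∑ η : H, (wf η : ℂ) * e (-x) η)
          * (∑ ζ : H, (g ζ : ℂ) * e (-x) ζ)) := by
  classical
  have expand : ∀ x : G, ((∑ ξ : H, (f ξ : ℂ) * e x ξ) * (∑ η : H, (wf η : ℂ) * e (-x) η)
          * (∑ ζ : H, (g ζ : ℂ) * e (-x) ζ))
      = ∑ ξ : H, ∑ η : H, ∑ ζ : H, (f ξ : ℂ) * (wf η : ℂ) * (g ζ : ℂ) * e x (ξ - η - ζ) := by
    intro x
    rw [triple_sum_mul]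
    refine Finset.sum_congr rfl (fun ξ _ => Finset.sum_congr rfl (fun η _ =>
      Finset.sum_congr rfl (fun ζ _ => ?_)))
    rw [← e_combine e he1 he2 he3 x ξ η ζ]
    ring
  rw [Finset.sum_congr rfl (fun x _ => expand x)]
  have swap : ∑ x : G, ∑ ξ : H, ∑ η : H, ∑ ζ : H,
        (f ξ : ℂ) * (wf η : ℂ) * (g ζ : ℂ) * e x (ξ - η - ζ)
      = ∑ ξ : H, ∑ η : H, ∑ ζ : H, ∑ x : G,
        (f ξ : ℂ) * (wf η : ℂ) * (g ζ : ℂ) * e x (ξ - η - ζ) := by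
    rw [Finset.sum_comm]
    refine Finset.sum_congr rfl fun ξ _ => ?_
    rw [Finset.sum_comm]
    refine Finset.sum_congr rfl fun η _ => ?_
    rw [Finset.sum_comm]
  rw [swap]
  rw [Finset.mul_sum]
  refine Finset.sum_congr rfl fun ξ _ => ?_
  rw [Finset.mul_sum]
  refine Finset.sum_congr rfl fun η _ => ?_
  have inner : ∀ ζ : H, ∑ x : G, (f ξ : ℂ) * (wf η : ℂ) * (g ζ : ℂ) * e x (ξ - η - ζ)
      = (f ξ : ℂ) * (wf η : ℂ) * (g ζ : ℂ)
        * (if ξ - η - ζ = 0 then (Fintype.card G : ℂ) else 0) := by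
    intro ζ
    rw [← Finset.mul_sum, e_delta_H e he1 he2 he3 he4]
  rw [Finset.sum_congr rfl (fun ζ _ => inner ζ)]
  simp only [sub_eq_zero, mul_ite, mul_zero]
  rw [Finset.sum_ite_eq Finset.univ (ξ - η)]
  simp only [Finset.mem_univ, if_pos]
  ring

end CharAux2

lemma cauchy_sqrt {α : Type} [Fintype α] (f g : α → ℝ) (hf : ∀ x, 0 ≤ f x) (hg : ∀ x, 0 ≤ g x) :
    ∑ x : α, f x * g x ≤ Real.sqrt (∑ x : α, (f x)^2) * Real.sqrt (∑ x : α, (g x)^2) := by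
  have h := sum_mul_sq_le_sq_mul_sq Finset.univ f g
  have h1 : ∑ x : α, f x * g x ≤ Real.sqrt ((∑ x : α, (f x)^2) * ∑ x : α, (g x)^2) := by
    have := Real.sqrt_le_sqrt h
    rwa [Real.sqrt_sq (Finset.sum_nonneg fun x _ => mul_nonneg (hf x) (hg x))] at this
  rwa [Real.sqrt_mul (Finset.sum_nonneg fun x _ => sq_nonneg _)] at h1

section CharAux3

variable {G H : Type} [AddCommGroup G] [Fintype G] [DecidableEq G]
  [AddCommGroup H] [Fintype H] (e : G → H → ℂ)

variable (he1 : ∀ (x y : G) (ξ : H), e (x + y) ξ = e x ξ * e y ξ)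
  (he2 : ∀ (x : G) (ξ η : H), e x (ξ + η) = e x ξ * e x η)
  (he3 : ∀ (x : G) (ξ : H), ‖e x ξ‖ = 1)

include he1 he2 he3 in
lemma phi_inversion (φv : G → ℝ) (f wf g : H → ℝ) :
    ∑ x : G, (φv x : ℂ) * ((∑ ξ : H, (f ξ : ℂ) * e x ξ) * (∑ η : H, (wf η : ℂ) * e (-x) η)
        * (∑ ζ : H, (g ζ : ℂ) * e (-x) ζ))
      = ∑ ξ : H, ∑ η : H, ∑ ζ : H, (f ξ : ℂ) * (wf η : ℂ) * (g ζ : ℂ)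
          * (∑ x : G, (φv x : ℂ) * e x (ξ - η - ζ)) := by
  classical
  have expand : ∀ x : G, (φv x : ℂ) * ((∑ ξ : H, (f ξ : ℂ) * e x ξ)
        * (∑ η : H, (wf η : ℂ) * e (-x) η) * (∑ ζ : H, (g ζ : ℂ) * e (-x) ζ))
      = ∑ ξ : H, ∑ η : H, ∑ ζ : H,
          (f ξ : ℂ) * (wf η : ℂ) * (g ζ : ℂ) * ((φv x : ℂ) * e x (ξ - η - ζ)) := by
    intro x
    rw [triple_sum_mul, Finset.mul_sum]
    refine Finset.sum_congr rfl fun ξ _ => ?_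
    rw [Finset.mul_sum]
    refine Finset.sum_congr rfl fun η _ => ?_
    rw [Finset.mul_sum]
    refine Finset.sum_congr rfl fun ζ _ => ?_
    rw [← e_combine e he1 he2 he3 x ξ η ζ]
    ring
  rw [Finset.sum_congr rfl (fun x _ => expand x)]
  rw [Finset.sum_comm]
  refine Finset.sum_congr rfl fun ξ _ => ?_
  rw [Finset.sum_comm]
  refine Finset.sum_congr rfl fun η _ => ?_
  rw [Finset.sum_comm]
  refine Finset.sum_congr rfl fun ζ _ => ?_
  rw [Finset.mul_sum]

end CharAux3
set_option maxHeartbeats 2000000 in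
theorem stmt_5 (n a b : ℝ) (hb : 0 < b) (hba : b ≤ a) (han : a < n) :
    ∃ C : ℝ, 0 < C ∧
      ∀ C₁ C₂ C₃ A B : ℝ, 0 ≤ C₁ → 0 ≤ C₂ → 0 ≤ C₃ → 0 ≤ A → 0 ≤ B →
      ∀ (G H : Type) [AddCommGroup G] [Fintype G] [DecidableEq G]
        [AddCommGroup H] [Fintype H]
        (e : G → H → ℂ) (BG : ℝ → Set G) (BH : ℝ → Set H)
        (φ : ℝ → G → ℝ) (w : H → ℝ),
        (∀ (x y : G) (ξ : H), e (x + y) ξ = e x ξ * e y ξ) →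
        (∀ (x : G) (ξ η : H), e x (ξ + η) = e x ξ * e x η) →
        (∀ (x : G) (ξ : H), ‖e x ξ‖ = 1) →
        (∀ x : G, ∑ ξ : H, e x ξ = if x = 0 then (Fintype.card G : ℂ) else 0) →
        (∀ ρ ρ' : ℝ, 0 < ρ → ρ ≤ ρ' → BG ρ ⊆ BG ρ') →
        (∀ (ρ : ℝ) (x : G), x ∈ BG ρ → -x ∈ BG ρ) →
        (∀ x : G, ∃ ρ : ℝ, 0 < ρ ∧ x ∈ BG ρ) →
        (∀ ρ ρ' : ℝ, 0 < ρ → ρ ≤ ρ' → BH ρ ⊆ BH ρ') →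
        (∀ (ρ : ℝ) (ξ : H), ξ ∈ BH ρ → -ξ ∈ BH ρ) →
        (∀ ξ : H, ∃ ρ : ℝ, 0 < ρ ∧ ξ ∈ BH ρ) →
        (∀ ρ : ℝ, 0 < ρ → ((BG ρ).ncard : ℝ) ≤ C₁ * ρ ^ n) →
        (∀ ρ : ℝ, 0 < ρ → ∀ x ∈ BG ρ, φ ρ x = 1) →
        (∀ ρ : ℝ, 0 < ρ → ∀ x : G, φ ρ x ≠ 0 → x ∈ BG (2 * ρ)) →
        (∀ (ρ : ℝ) (x : G), |φ ρ x| ≤ 1) →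
        (∀ ρ : ℝ, 0 < ρ → ∀ s : ℝ, 1 / ρ ≤ s → ∀ ξ : H, -ξ ∉ BH s →
          ‖∑ x : G, (φ ρ x : ℂ) * e (-x) ξ‖ ≤ C₂ * s ^ (-n)) →
        (∀ ρ : ℝ, 0 < ρ →
          (Fintype.card G : ℝ)⁻¹ *
              ∑ ξ : H, ‖∑ x : G, (φ ρ x : ℂ) * e (-x) ξ‖ ≤ C₃) →
        (∀ ξ : H, 0 ≤ w ξ) →
        (∀ ρ : ℝ, 0 < ρ → ∀ ξ : H,
          ∑ η : H, Set.indicator (BH ρ) (fun _ => (1 : ℝ)) (η - ξ) * w η ≤ A * ρ ^ a) →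
        (∀ ρ : ℝ, 0 < ρ → ∀ x : G, x ∉ BG ρ →
          ‖∑ ξ : H, (w ξ : ℂ) * e x ξ‖ ≤ B * ρ ^ (-b / 2)) →
        (∑ ξ : H, w ξ) = 1 →
        ∀ E F : Set H,
          (Fintype.card G : ℝ)⁻¹ *
              ∑ ξ : H, Set.indicator F (fun _ => (1 : ℝ)) ξ *
                ∑ η : H, w η * Set.indicator E (fun _ => (1 : ℝ)) (ξ - η)
            ≤ C * (C₁ + C₂) ^ (1 - 2 * (n - a) / (2 * (n - a) + b)) *
                A ^ (1 - 2 * (n - a) / (2 * (n - a) + b)) *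
                B ^ (2 * (n - a) / (2 * (n - a) + b)) *
                ((E.ncard : ℝ) / (Fintype.card G : ℝ)) ^ ((n - a + b) / (2 * (n - a) + b)) *
                ((F.ncard : ℝ) / (Fintype.card G : ℝ)) ^ ((n - a + b) / (2 * (n - a) + b)) := by
  have hq1 : (2:ℝ) ^ (a - n) < 1 :=
    Real.rpow_lt_one_of_one_lt_of_neg one_lt_two (by linarith)
  have hq0 : (0:ℝ) < (2:ℝ) ^ (a - n) := Real.rpow_pos_of_pos two_pos _
  set Kone : ℝ := (2:ℝ)^n + (2:ℝ)^a * (1 - (2:ℝ)^(a-n))⁻¹ with hKone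
  have hKonepos : 0 < Kone := by
    have h1 : (0:ℝ) < (2:ℝ)^n := Real.rpow_pos_of_pos two_pos _
    have h2 : (0:ℝ) < (2:ℝ)^a := Real.rpow_pos_of_pos two_pos _
    have h3 : (0:ℝ) < (1 - (2:ℝ)^(a-n))⁻¹ := by
      apply inv_pos.mpr; linarith
    rw [hKone]; positivity
  refine ⟨Kone + 2, by linarith, ?_⟩
  intro C₁ C₂ C₃ A B hC₁ hC₂ hC₃ hA hB G H _iG _iFG _iDG _iH _iFH e BG BH φ w
    he1 he2 he3 he4 hBGm hBGs hBGc hBHm hBHs hBHc hR hφ1 hφs hφle hFd _hC3 hw0 hRmu hFmu hw1 E F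
  classical
  have hn : 0 < n := by linarith
  have hna : 0 < n - a := by linarith
  have hden : 0 < 2*(n-a) + b := by linarith
  have hNnat : 0 < Fintype.card G := @Fintype.card_pos G _ ⟨(0:G)⟩
  have hN : (0:ℝ) < (Fintype.card G : ℝ) := by exact_mod_cast hNnat
  set N : ℝ := (Fintype.card G : ℝ) with hNdef
  set χE : H → ℝ := Set.indicator E (fun _ => (1:ℝ)) with hχE
  set χF : H → ℝ := Set.indicator F (fun _ => (1:ℝ)) with hχF
  have hχE01 : ∀ ξ, χE ξ = 0 ∨ χE ξ = 1 := by
    intro ξ; rw [hχE]; unfold Set.indicator; split <;> simp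
  have hχF01 : ∀ ξ, χF ξ = 0 ∨ χF ξ = 1 := by
    intro ξ; rw [hχF]; unfold Set.indicator; split <;> simp
  have hχEnn : ∀ ξ, 0 ≤ χE ξ := fun ξ => by rcases hχE01 ξ with h | h <;> rw [h] <;> norm_num
  have hχFnn : ∀ ξ, 0 ≤ χF ξ := fun ξ => by rcases hχF01 ξ with h | h <;> rw [h] <;> norm_num
  have hχEle : ∀ ξ, χE ξ ≤ 1 := fun ξ => by rcases hχE01 ξ with h | h <;> rw [h] <;> norm_num
  have hχFle : ∀ ξ, χF ξ ≤ 1 := fun ξ => by rcases hχF01 ξ with h | h <;> rw [h] <;> norm_num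
  have hsum_ind : ∀ S : Set H, ∑ ξ : H, Set.indicator S (fun _ => (1:ℝ)) ξ = (S.ncard : ℝ) := by
    intro S
    have h1 : S = ↑(Finset.univ.filter (· ∈ S)) := by ext ξ; simp
    have h2 : S.ncard = (Finset.univ.filter (· ∈ S)).card := by
      conv_lhs => rw [h1]
      rw [Set.ncard_coe_finset]
    rw [h2]
    rw [Finset.sum_congr rfl (fun ξ _ => Set.indicator_apply S _ ξ)]
    simp [Finset.sum_boole]
  have hsumE : ∑ ξ : H, χE ξ = (E.ncard : ℝ) := hsum_ind E
  have hsumF : ∑ ξ : H, χF ξ = (F.ncard : ℝ) := hsum_ind F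
  -- positivity of the structural constants
  have hC₁pos : 0 < C₁ := by
    obtain ⟨ρ₀, hρ₀, hmem⟩ := hBGc (0:G)
    have h1 : (1:ℝ) ≤ ((BG ρ₀).ncard : ℝ) := by
      have : 0 < (BG ρ₀).ncard := (Set.ncard_pos (Set.toFinite _)).mpr ⟨0, hmem⟩
      exact_mod_cast this
    have h2 := hR ρ₀ hρ₀
    have h3 : (0:ℝ) < ρ₀ ^ n := Real.rpow_pos_of_pos hρ₀ _
    nlinarith
  have hballempty : ∀ ρ : ℝ, 0 < ρ → C₁ * ρ^n < 1 → ∀ x : G, x ∉ BG ρ := by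
    intro ρ hρ hlt x hx
    have h1 : (1:ℝ) ≤ ((BG ρ).ncard : ℝ) := by
      have : 0 < (BG ρ).ncard := (Set.ncard_pos (Set.toFinite _)).mpr ⟨x, hx⟩
      exact_mod_cast this
    have := hR ρ hρ
    linarith
  have hBpos : 0 < B := by
    set ρ₁ : ℝ := ((2*C₁)⁻¹) ^ (n⁻¹) with hρ₁def
    have hρ₁ : 0 < ρ₁ := Real.rpow_pos_of_pos (by positivity) _
    have hρ₁n : ρ₁ ^ n = (2*C₁)⁻¹ := by
      rw [hρ₁def]
      exact Real.rpow_inv_rpow (by positivity) (by linarith)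
    have hsmall : C₁ * ρ₁^n < 1 := by
      rw [hρ₁n, mul_inv, ← mul_assoc, mul_comm C₁ (2:ℝ)⁻¹, mul_assoc,
        mul_inv_cancel₀ (ne_of_gt hC₁pos)]
      norm_num
    have hnot := hballempty ρ₁ hρ₁ hsmall 0
    have h2 := hFmu ρ₁ hρ₁ 0 hnot
    have h3 : ∑ ξ : H, (w ξ : ℂ) * e 0 ξ = 1 := by
      rw [Finset.sum_congr rfl (fun ξ _ => by rw [e_zero_left e he1 he3 ξ, mul_one])]
      rw [← Complex.ofReal_sum]
      rw [hw1]
      norm_num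
    rw [h3] at h2
    simp at h2
    have h4 : (0:ℝ) < ρ₁ ^ (-b/2) := Real.rpow_pos_of_pos hρ₁ _
    nlinarith
  have hApos : 0 < A := by
    have hex : ∃ ξ : H, 0 < w ξ := by
      by_contra hcon
      push_neg at hcon
      have : ∀ ξ : H, w ξ = 0 := fun ξ => le_antisymm (hcon ξ) (hw0 ξ)
      rw [Finset.sum_congr rfl (fun ξ _ => this ξ)] at hw1
      simp at hw1
    obtain ⟨ξ₀, hξ₀⟩ := hex
    obtain ⟨ρ₂, hρ₂, hmem⟩ := hBHc (0:H)
    have h1 := hRmu ρ₂ hρ₂ ξ₀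
    have h2 : w ξ₀ ≤ ∑ η : H, Set.indicator (BH ρ₂) (fun _ => (1:ℝ)) (η - ξ₀) * w η := by
      have heq : Set.indicator (BH ρ₂) (fun _ => (1:ℝ)) (ξ₀ - ξ₀) * w ξ₀ = w ξ₀ := by
        rw [sub_self, Set.indicator_of_mem hmem, one_mul]
      calc w ξ₀ = Set.indicator (BH ρ₂) (fun _ => (1:ℝ)) (ξ₀ - ξ₀) * w ξ₀ := heq.symm
        _ ≤ ∑ η : H, Set.indicator (BH ρ₂) (fun _ => (1:ℝ)) (η - ξ₀) * w η := by
            apply Finset.single_le_sum (f := fun η => Set.indicator (BH ρ₂) (fun _ => (1:ℝ)) (η - ξ₀) * w η)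
              (fun η _ => mul_nonneg (Set.indicator_nonneg (fun _ _ => zero_le_one) _) (hw0 η))
              (Finset.mem_univ ξ₀)
    have h3 : (0:ℝ) < ρ₂ ^ a := Real.rpow_pos_of_pos hρ₂ _
    nlinarith
  have hRHSnn : 0 ≤ (Kone + 2) * (C₁ + C₂) ^ (1 - 2 * (n - a) / (2 * (n - a) + b)) *
                A ^ (1 - 2 * (n - a) / (2 * (n - a) + b)) *
                B ^ (2 * (n - a) / (2 * (n - a) + b)) *
                ((E.ncard : ℝ) / N) ^ ((n - a + b) / (2 * (n - a) + b)) *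
                ((F.ncard : ℝ) / N) ^ ((n - a + b) / (2 * (n - a) + b)) := by
    have h1 : (0:ℝ) ≤ C₁ + C₂ := by linarith
    have h2 : (0:ℝ) ≤ (E.ncard:ℝ)/N := by positivity
    have h3 : (0:ℝ) ≤ (F.ncard:ℝ)/N := by positivity
    have hk : (0:ℝ) ≤ Kone + 2 := by linarith
    exact mul_nonneg (mul_nonneg (mul_nonneg (mul_nonneg (mul_nonneg hk
      (Real.rpow_nonneg h1 _)) (Real.rpow_nonneg hA _)) (Real.rpow_nonneg hB _))
      (Real.rpow_nonneg h2 _)) (Real.rpow_nonneg h3 _)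
  by_cases hE0 : E = ∅
  · have hz : ∀ ξ : H, χE ξ = 0 := by intro ξ; rw [hχE, hE0]; simp
    have hsz : ∑ ξ : H, χF ξ * ∑ η : H, w η * χE (ξ - η) = 0 := by
      apply Finset.sum_eq_zero
      intro ξ _
      have : ∑ η : H, w η * χE (ξ - η) = 0 :=
        Finset.sum_eq_zero (fun η _ => by rw [hz (ξ - η), mul_zero])
      rw [this, mul_zero]
    rw [hsz, mul_zero]
    exact hRHSnn
  by_cases hF0 : F = ∅
  · have hz : ∀ ξ : H, χF ξ = 0 := by intro ξ; rw [hχF, hF0]; simp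
    have hsz : ∑ ξ : H, χF ξ * ∑ η : H, w η * χE (ξ - η) = 0 :=
      Finset.sum_eq_zero (fun ξ _ => by rw [hz ξ, zero_mul])
    rw [hsz, mul_zero]
    exact hRHSnn
  have hEpos : (0:ℝ) < (E.ncard : ℝ) := by
    have : 0 < E.ncard := (Set.ncard_pos (Set.toFinite _)).mpr
      (Set.nonempty_iff_ne_empty.mpr hE0)
    exact_mod_cast this
  have hFpos : (0:ℝ) < (F.ncard : ℝ) := by
    have : 0 < F.ncard := (Set.ncard_pos (Set.toFinite _)).mpr
      (Set.nonempty_iff_ne_empty.mpr hF0)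
    exact_mod_cast this
  set EE : ℝ := (E.ncard : ℝ) with hEE
  set FF : ℝ := (F.ncard : ℝ) with hFF
  set Fh : G → ℂ := fun x => ∑ ξ : H, (χF ξ : ℂ) * e x ξ with hFh
  set Wt : G → ℂ := fun x => ∑ η : H, (w η : ℂ) * e (-x) η with hWt
  set Eh : G → ℂ := fun x => ∑ ζ : H, (χE ζ : ℂ) * e (-x) ζ with hEh
  set LHS0 : ℝ := ∑ ξ : H, χF ξ * ∑ η : H, w η * χE (ξ - η) with hLHS0
  have hLHS0nn : 0 ≤ LHS0 := by
    rw [hLHS0]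
    apply Finset.sum_nonneg
    intro ξ _
    exact mul_nonneg (hχFnn ξ) (Finset.sum_nonneg fun η _ =>
      mul_nonneg (hw0 η) (hχEnn _))
  have habs : N * LHS0 = ‖∑ x : G, Fh x * Wt x * Eh x‖ := by
    have hcast : ((N * LHS0 : ℝ) : ℂ) = ∑ x : G, Fh x * Wt x * Eh x := by
      have h1 : ((N * LHS0 : ℝ) : ℂ)
          = ((Fintype.card G : ℕ) : ℂ) * (∑ ξ : H, ∑ η : H,
              (χF ξ : ℂ) * (w η : ℂ) * (χE (ξ - η) : ℂ)) := by
        rw [hLHS0, hNdef]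
        push_cast
        congr 1
        refine Finset.sum_congr rfl fun ξ _ => ?_
        rw [Finset.mul_sum]
        exact Finset.sum_congr rfl fun η _ => by ring
      rw [h1, inversion e he1 he2 he3 he4 χF w χE]
    rw [← hcast, Complex.norm_real, Real.norm_eq_abs, abs_of_nonneg (by positivity)]

  have main : ∀ ρ : ℝ, 0 < ρ →
      N * LHS0 ≤ Kone * ((C₁+C₂) * (A * ρ^(n-a))) * (EE * FF)
        + 2 * (B * ρ^(-b/2)) * (N * Real.sqrt (EE * FF)) := by
    intro ρ hρ
    have hplE : ∑ x : G, (‖Eh x‖)^2 = N * EE := by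
      have h1 : ∀ x : G, (‖Eh x‖)^2 = Complex.normSq (Eh x) := fun x =>
        Complex.sq_norm _
      rw [Finset.sum_congr rfl fun x _ => h1 x]
      simp only [hEh]
      rw [plancherel e he1 he2 he3 he4 χE]
      have hsq : ∑ ξ : H, (χE ξ)^2 = ∑ ξ : H, χE ξ :=
        Finset.sum_congr rfl fun ξ _ => by rcases hχE01 ξ with h|h <;> rw [h] <;> norm_num
      simp only [hsq, hsumE, ← hNdef, ← hEE]
    have hplF : ∑ x : G, (‖Fh x‖)^2 = N * FF := by
      have hre : ∑ x : G, (‖Fh x‖)^2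
          = ∑ x : G, Complex.normSq (∑ ξ : H, (χF ξ:ℂ) * e (-x) ξ) := by
        rw [← Equiv.sum_comp (Equiv.neg G)
          (fun x => Complex.normSq (∑ ξ : H, (χF ξ:ℂ) * e (-x) ξ))]
        refine Finset.sum_congr rfl fun x _ => ?_
        simp only [Equiv.neg_apply, neg_neg]
        rw [Complex.sq_norm]
      rw [hre, plancherel e he1 he2 he3 he4 χF]
      have hsq : ∑ ξ : H, (χF ξ)^2 = ∑ ξ : H, χF ξ :=
        Finset.sum_congr rfl fun ξ _ => by rcases hχF01 ξ with h|h <;> rw [h] <;> norm_num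
      simp only [hsq, hsumF, ← hNdef, ← hFF]
    have hCS : ∑ x : G, ‖Fh x‖ * ‖Eh x‖ ≤ N * Real.sqrt (EE * FF) := by
      have h := cauchy_sqrt (fun x => ‖Fh x‖) (fun x => ‖Eh x‖)
        (fun x => norm_nonneg _) (fun x => norm_nonneg _)
      rw [hplF, hplE] at h
      have h2 : Real.sqrt (N*FF) * Real.sqrt (N*EE) = N * Real.sqrt (EE*FF) := by
        rw [← Real.sqrt_mul (by positivity)]
        have h3 : N*FF*(N*EE) = N^2 * (EE*FF) := by ring
        rw [h3, Real.sqrt_mul (by positivity), Real.sqrt_sq hN.le]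
      linarith [h, h2.le]
    have hfar : ‖∑ x : G, ((1:ℂ) - (φ ρ x : ℂ)) * (Fh x * Wt x * Eh x)‖
        ≤ 2 * (B * ρ^(-b/2)) * (N * Real.sqrt (EE*FF)) := by
      have hterm : ∀ x : G, ‖((1:ℂ) - (φ ρ x:ℂ)) * (Fh x * Wt x * Eh x)‖
          ≤ (2 * (B * ρ^(-b/2))) * (‖Fh x‖ * ‖Eh x‖) := by
        intro x
        rw [norm_mul, norm_mul, norm_mul]
        have h1 : ‖(1:ℂ) - (φ ρ x:ℂ)‖ * ‖Wt x‖ ≤ 2 * (B * ρ^(-b/2)) := by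
          by_cases hx : x ∈ BG ρ
          · rw [hφ1 ρ hρ x hx]
            simp only [Complex.ofReal_one, sub_self, norm_zero, zero_mul]
            positivity
          · have h2 : ‖(1:ℂ) - (φ ρ x:ℂ)‖ ≤ 2 := by
              have hcast : ((1:ℂ) - (φ ρ x:ℂ)) = (((1 - φ ρ x : ℝ)):ℂ) := by push_cast; ring
              rw [hcast, Complex.norm_real, Real.norm_eq_abs]
              have := hφle ρ x
              rw [abs_le] at this ⊢
              constructor <;> [linarith [this.2]; linarith [this.1]]
            have h3 : ‖Wt x‖ ≤ B * ρ^(-b/2) := by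
              have hnx : -x ∉ BG ρ := fun hmem => hx (by
                have := hBGs ρ (-x) hmem; rwa [neg_neg] at this)
              have h4 := hFmu ρ hρ (-x) hnx
              simp only [hWt]
              exact h4
            exact mul_le_mul h2 h3 (norm_nonneg _) (by norm_num)
        calc ‖(1:ℂ) - (φ ρ x:ℂ)‖ * (‖Fh x‖ * ‖Wt x‖
              * ‖Eh x‖)
            = (‖(1:ℂ) - (φ ρ x:ℂ)‖ * ‖Wt x‖)
              * (‖Fh x‖ * ‖Eh x‖) := by ring
          _ ≤ (2 * (B * ρ^(-b/2))) * (‖Fh x‖ * ‖Eh x‖) :=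
              mul_le_mul_of_nonneg_right h1
                (mul_nonneg (norm_nonneg _) (norm_nonneg _))
      calc ‖∑ x : G, ((1:ℂ) - (φ ρ x : ℂ)) * (Fh x * Wt x * Eh x)‖
          ≤ ∑ x : G, ‖((1:ℂ) - (φ ρ x : ℂ)) * (Fh x * Wt x * Eh x)‖ :=
            norm_sum_le _ _
        _ ≤ ∑ x : G, (2 * (B * ρ^(-b/2))) * (‖Fh x‖ * ‖Eh x‖) :=
            Finset.sum_le_sum fun x _ => hterm x
        _ = (2 * (B * ρ^(-b/2))) * ∑ x : G, ‖Fh x‖ * ‖Eh x‖ := by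
            rw [← Finset.mul_sum]
        _ ≤ 2 * (B * ρ^(-b/2)) * (N * Real.sqrt (EE*FF)) :=
            mul_le_mul_of_nonneg_left hCS (by positivity)
    set Φm : H → ℂ := fun u => ∑ x : G, (φ ρ x : ℂ) * e x u with hΦm
    have hMkey : ∀ v : H, ∑ η : H, w η * ‖Φm (v - η)‖
        ≤ Kone * ((C₁+C₂) * (A * ρ^(n-a))) := by
      intro v
      have hρna : (0:ℝ) ≤ ρ^(n-a) := (Real.rpow_pos_of_pos hρ _).le
      have hΦtriv : ∀ u : H, ‖Φm u‖ ≤ C₁ * ((2:ℝ)^n * ρ^n) := by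
        intro u
        have h1 : ‖Φm u‖ ≤ ∑ x : G, |φ ρ x| := by
          simp only [hΦm]
          refine le_trans (norm_sum_le _ _) (Finset.sum_le_sum fun x _ => ?_)
          rw [norm_mul, he3, mul_one, Complex.norm_real, Real.norm_eq_abs]
        have h2 : ∑ x : G, |φ ρ x| ≤ ((BG (2*ρ)).ncard : ℝ) := by
          have hset : BG (2*ρ) = ↑(Finset.univ.filter (· ∈ BG (2*ρ))) := by ext y; simp
          have hcard : ((BG (2*ρ)).ncard : ℝ)
              = ∑ x : G, (if x ∈ BG (2*ρ) then (1:ℝ) else 0) := by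
            rw [Finset.sum_boole]
            conv_lhs => rw [hset]
            rw [Set.ncard_coe_finset]
          rw [hcard]
          refine Finset.sum_le_sum fun x _ => ?_
          by_cases hx : φ ρ x = 0
          · rw [hx, abs_zero]
            split <;> norm_num
          · rw [if_pos (hφs ρ hρ x hx)]
            exact hφle ρ x
        have h3 := hR (2*ρ) (by linarith)
        have h5 : ((BG (2*ρ)).ncard:ℝ) ≤ C₁ * ((2:ℝ)^n * ρ^n) := by
          rw [← Real.mul_rpow (by norm_num) hρ.le]
          exact h3
        linarith
      have hball : ∀ r : ℝ, 0 < r →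
          ∑ η ∈ Finset.univ.filter (fun η => v - η ∈ BH r), w η ≤ A * r^a := by
        intro r hr
        have h1 : ∑ η ∈ Finset.univ.filter (fun η => v - η ∈ BH r), w η
            = ∑ η ∈ Finset.univ.filter (fun η => v - η ∈ BH r),
                Set.indicator (BH r) (fun _ => (1:ℝ)) (η - v) * w η := by
          refine Finset.sum_congr rfl fun η hη => ?_
          rw [Finset.mem_filter] at hη
          have hmem : η - v ∈ BH r := by
            have := hBHs r (v - η) hη.2
            rwa [neg_sub] at this
          rw [Set.indicator_of_mem hmem, one_mul]
        rw [h1]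
        refine le_trans (Finset.sum_le_sum_of_subset_of_nonneg
          (Finset.filter_subset _ _) fun η _ _ => mul_nonneg
            (Set.indicator_nonneg (fun _ _ => zero_le_one) _) (hw0 η)) ?_
        exact hRmu r hr v
      rw [← Finset.sum_filter_add_sum_filter_not Finset.univ (fun η => v - η ∈ BH (1/ρ))
        (fun η => w η * ‖Φm (v - η)‖)]
      have hpart1 : ∑ η ∈ Finset.univ.filter (fun η => v - η ∈ BH (1/ρ)),
          w η * ‖Φm (v - η)‖ ≤ (2:ℝ)^n * (C₁ * (A * ρ^(n-a))) := by
        have h1 : ∑ η ∈ Finset.univ.filter (fun η => v - η ∈ BH (1/ρ)),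
            w η * ‖Φm (v - η)‖
            ≤ ∑ η ∈ Finset.univ.filter (fun η => v - η ∈ BH (1/ρ)),
              w η * (C₁ * ((2:ℝ)^n * ρ^n)) :=
          Finset.sum_le_sum fun η _ => mul_le_mul_of_nonneg_left (hΦtriv _) (hw0 η)
        have h2 : ∑ η ∈ Finset.univ.filter (fun η => v - η ∈ BH (1/ρ)),
            w η * (C₁ * ((2:ℝ)^n * ρ^n))
            = (∑ η ∈ Finset.univ.filter (fun η => v - η ∈ BH (1/ρ)), w η)
              * (C₁ * ((2:ℝ)^n * ρ^n)) := by
          rw [Finset.sum_mul]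
        have h3 := hball (1/ρ) (by positivity)
        have h4 : (1/ρ)^a = ρ^(-a) := by
          rw [one_div, ← Real.rpow_neg_one ρ, ← Real.rpow_mul hρ.le]
          norm_num
        have hnn : (0:ℝ) ≤ C₁ * ((2:ℝ)^n * ρ^n) := by positivity
        have h5 : (∑ η ∈ Finset.univ.filter (fun η => v - η ∈ BH (1/ρ)), w η)
              * (C₁ * ((2:ℝ)^n * ρ^n)) ≤ (A * ρ^(-a)) * (C₁ * ((2:ℝ)^n * ρ^n)) := by
          refine mul_le_mul_of_nonneg_right ?_ hnn
          rw [← h4]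
          exact h3
        have h6 : ρ^(-a) * ρ^n = ρ^(n-a) := by
          rw [← Real.rpow_add hρ]
          ring_nf
        calc ∑ η ∈ Finset.univ.filter (fun η => v - η ∈ BH (1/ρ)),
              w η * ‖Φm (v - η)‖
            ≤ (A * ρ^(-a)) * (C₁ * ((2:ℝ)^n * ρ^n)) := by linarith
          _ = (2:ℝ)^n * (C₁ * (A * (ρ^(-a) * ρ^n))) := by ring
          _ = (2:ℝ)^n * (C₁ * (A * ρ^(n-a))) := by rw [h6]
      have hpart2 : ∑ η ∈ Finset.univ.filter (fun η => ¬ v - η ∈ BH (1/ρ)),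
          w η * ‖Φm (v - η)‖
          ≤ ((2:ℝ)^a * (1 - (2:ℝ)^(a-n))⁻¹) * (C₂ * (A * ρ^(n-a))) := by
        have exJ : ∀ η : H, ∃ k : ℕ, v - η ∈ BH ((2:ℝ)^(k+1)/ρ) := by
          intro η
          obtain ⟨r', hr', hmem⟩ := hBHc (v - η)
          obtain ⟨k, hk⟩ := pow_unbounded_of_one_lt (r' * ρ) (one_lt_two (α := ℝ))
          refine ⟨k, hBHm r' _ hr' ?_ hmem⟩
          rw [le_div_iff₀ hρ]
          have h2 : (2:ℝ)^k ≤ (2:ℝ)^(k+1) :=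
            pow_le_pow_right₀ one_le_two (Nat.le_succ k)
          linarith
        set jm : H → ℕ := fun η => Nat.find (exJ η) with hjm
        have hjspec : ∀ η : H, v - η ∈ BH ((2:ℝ)^(jm η + 1)/ρ) := fun η => Nat.find_spec (exJ η)
        have hjmin : ∀ η : H, v - η ∉ BH (1/ρ) → v - η ∉ BH ((2:ℝ)^(jm η)/ρ) := by
          intro η hη
          rcases Nat.eq_zero_or_pos (jm η) with h0 | hpos
          · rw [h0]
            simpa using hη
          · have hlt : jm η - 1 < jm η := Nat.sub_lt hpos one_pos
            have hm := Nat.find_min (exJ η) hlt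
            rwa [Nat.sub_add_cancel hpos] at hm
        have hΦd : ∀ η : H, v - η ∉ BH (1/ρ) →
            ‖Φm (v - η)‖ ≤ C₂ * ((2:ℝ)^(jm η)/ρ)^(-n) := by
          intro η hη
          have hs1 : 1/ρ ≤ (2:ℝ)^(jm η)/ρ := by
            have h1 : (1:ℝ) ≤ (2:ℝ)^(jm η) := one_le_pow₀ one_le_two
            gcongr
          have hrw : Φm (v - η) = ∑ x : G, (φ ρ x : ℂ) * e (-x) (η - v) := by
            simp only [hΦm]
            refine Finset.sum_congr rfl fun x _ => ?_
            congr 1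
            have h := e_neg_right e he1 he2 he3 (-x) (v - η)
            rw [neg_neg, neg_sub] at h
            exact h.symm
          rw [hrw]
          refine hFd ρ hρ _ hs1 (η - v) ?_
          rw [neg_sub]
          exact hjmin η hη
        set s₂ : Finset H := Finset.univ.filter (fun η => ¬ v - η ∈ BH (1/ρ)) with hs₂
        set Jm : ℕ := Finset.univ.sup jm with hJm
        have hstep1 : ∑ η ∈ s₂, w η * ‖Φm (v - η)‖
            ≤ ∑ η ∈ s₂, w η * (C₂ * ((2:ℝ)^(jm η)/ρ)^(-n)) := by
          refine Finset.sum_le_sum fun η hη => ?_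
          rw [hs₂, Finset.mem_filter] at hη
          exact mul_le_mul_of_nonneg_left (hΦd η hη.2) (hw0 η)
        have hfib : ∑ k ∈ Finset.range (Jm+1), ∑ η ∈ s₂.filter (fun η => jm η = k),
              w η * (C₂ * ((2:ℝ)^(jm η)/ρ)^(-n))
            = ∑ η ∈ s₂, w η * (C₂ * ((2:ℝ)^(jm η)/ρ)^(-n)) :=
          Finset.sum_fiberwise_of_maps_to
            (fun η _ => Finset.mem_range.mpr (Nat.lt_succ_of_le (Finset.le_sup (Finset.mem_univ η)))) _
        have hfiber : ∀ k : ℕ, ∑ η ∈ s₂.filter (fun η => jm η = k),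
              w η * (C₂ * ((2:ℝ)^(jm η)/ρ)^(-n))
            ≤ (C₂ * ((2:ℝ)^k/ρ)^(-n)) * (A * ((2:ℝ)^(k+1)/ρ)^a) := by
          intro k
          have h1 : ∑ η ∈ s₂.filter (fun η => jm η = k),
                w η * (C₂ * ((2:ℝ)^(jm η)/ρ)^(-n))
              = (∑ η ∈ s₂.filter (fun η => jm η = k), w η) * (C₂ * ((2:ℝ)^k/ρ)^(-n)) := by
            rw [Finset.sum_mul]
            refine Finset.sum_congr rfl fun η hη => ?_
            rw [(Finset.mem_filter.mp hη).2]
          rw [h1]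
          have hsub : s₂.filter (fun η => jm η = k)
              ⊆ Finset.univ.filter (fun η => v - η ∈ BH ((2:ℝ)^(k+1)/ρ)) := by
            intro η hη
            rw [Finset.mem_filter] at hη ⊢
            refine ⟨Finset.mem_univ _, ?_⟩
            have := hjspec η
            rwa [hη.2] at this
          have h2 : ∑ η ∈ s₂.filter (fun η => jm η = k), w η
              ≤ A * ((2:ℝ)^(k+1)/ρ)^a :=
            le_trans (Finset.sum_le_sum_of_subset_of_nonneg hsub fun η _ _ => hw0 η)
              (hball _ (by positivity))
          calc (∑ η ∈ s₂.filter (fun η => jm η = k), w η) * (C₂ * ((2:ℝ)^k/ρ)^(-n))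
              ≤ (A * ((2:ℝ)^(k+1)/ρ)^a) * (C₂ * ((2:ℝ)^k/ρ)^(-n)) :=
                mul_le_mul_of_nonneg_right h2 (by positivity)
            _ = (C₂ * ((2:ℝ)^k/ρ)^(-n)) * (A * ((2:ℝ)^(k+1)/ρ)^a) := by ring
        have hterm : ∀ k : ℕ, ((2:ℝ)^k/ρ)^(-n) * ((2:ℝ)^(k+1)/ρ)^a
            = ((2:ℝ)^a * ρ^(n-a)) * ((2:ℝ)^(a-n))^k := by
          intro k
          have c2k : ((2:ℝ)^k : ℝ) = (2:ℝ)^((k:ℕ):ℝ) := (Real.rpow_natCast 2 k).symm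
          have c2k1 : ((2:ℝ)^(k+1) : ℝ) = (2:ℝ)^(((k:ℕ):ℝ)+1) := by
            rw [show (((k:ℕ):ℝ)+1) = ((k+1 : ℕ):ℝ) by push_cast; ring]
            exact (Real.rpow_natCast 2 (k+1)).symm
          rw [Real.div_rpow (by positivity) hρ.le, Real.div_rpow (by positivity) hρ.le]
          rw [c2k, c2k1, ← Real.rpow_mul (by norm_num : (0:ℝ) ≤ 2),
            ← Real.rpow_mul (by norm_num : (0:ℝ) ≤ 2)]
          rw [Real.rpow_neg hρ.le, div_inv_eq_mul]
          rw [div_eq_mul_inv, ← Real.rpow_neg hρ.le]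
          have hcomb : (2:ℝ)^((k:ℝ)*(-n)) * (2:ℝ)^(((k:ℝ)+1)*a)
              = (2:ℝ)^a * ((2:ℝ)^(a-n))^k := by
            rw [← Real.rpow_add two_pos]
            have hsplit2 : (k:ℝ)*(-n) + ((k:ℝ)+1)*a = a + (a-n)*(k:ℝ) := by ring
            rw [hsplit2, Real.rpow_add two_pos, Real.rpow_mul (by norm_num : (0:ℝ) ≤ 2),
              Real.rpow_natCast]
          have hrho : ρ^n * ρ^(-a) = ρ^(n-a) := by
            rw [← Real.rpow_add hρ]
            ring_nf
          calc (2:ℝ)^((k:ℝ)*(-n)) * ρ^n * ((2:ℝ)^(((k:ℝ)+1)*a) * ρ^(-a))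
              = ((2:ℝ)^((k:ℝ)*(-n)) * (2:ℝ)^(((k:ℝ)+1)*a)) * (ρ^n * ρ^(-a)) := by ring
            _ = ((2:ℝ)^a * ((2:ℝ)^(a-n))^k) * ρ^(n-a) := by rw [hcomb, hrho]
            _ = ((2:ℝ)^a * ρ^(n-a)) * ((2:ℝ)^(a-n))^k := by ring
        have hgeom : ∑ k ∈ Finset.range (Jm+1), ((2:ℝ)^(a-n))^k ≤ (1 - (2:ℝ)^(a-n))⁻¹ := by
          have h1 : ∑ k ∈ Finset.range (Jm+1), ((2:ℝ)^(a-n))^k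
              = (1 - ((2:ℝ)^(a-n))^(Jm+1)) / (1 - (2:ℝ)^(a-n)) := by
            rw [geom_sum_eq (ne_of_lt hq1)]
            rw [div_eq_div_iff (by linarith) (by linarith)]
            ring
          rw [h1]
          rw [div_le_iff₀ (by linarith), inv_mul_cancel₀ (by linarith : (1:ℝ) - (2:ℝ)^(a-n) ≠ 0)]
          have : (0:ℝ) ≤ ((2:ℝ)^(a-n))^(Jm+1) := by positivity
          linarith
        calc ∑ η ∈ s₂, w η * ‖Φm (v - η)‖
            ≤ ∑ η ∈ s₂, w η * (C₂ * ((2:ℝ)^(jm η)/ρ)^(-n)) := hstep1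
          _ = ∑ k ∈ Finset.range (Jm+1), ∑ η ∈ s₂.filter (fun η => jm η = k),
                w η * (C₂ * ((2:ℝ)^(jm η)/ρ)^(-n)) := hfib.symm
          _ ≤ ∑ k ∈ Finset.range (Jm+1), (C₂ * ((2:ℝ)^k/ρ)^(-n)) * (A * ((2:ℝ)^(k+1)/ρ)^a) :=
              Finset.sum_le_sum fun k _ => hfiber k
          _ = ∑ k ∈ Finset.range (Jm+1), (C₂ * (A * ((2:ℝ)^a * ρ^(n-a)))) * ((2:ℝ)^(a-n))^k := by
              refine Finset.sum_congr rfl fun k _ => ?_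
              have := hterm k
              calc (C₂ * ((2:ℝ)^k/ρ)^(-n)) * (A * ((2:ℝ)^(k+1)/ρ)^a)
                  = (C₂ * A) * (((2:ℝ)^k/ρ)^(-n) * ((2:ℝ)^(k+1)/ρ)^a) := by ring
                _ = (C₂ * A) * (((2:ℝ)^a * ρ^(n-a)) * ((2:ℝ)^(a-n))^k) := by rw [this]
                _ = (C₂ * (A * ((2:ℝ)^a * ρ^(n-a)))) * ((2:ℝ)^(a-n))^k := by ring
          _ = (C₂ * (A * ((2:ℝ)^a * ρ^(n-a)))) * ∑ k ∈ Finset.range (Jm+1), ((2:ℝ)^(a-n))^k := by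
              rw [← Finset.mul_sum]
          _ ≤ (C₂ * (A * ((2:ℝ)^a * ρ^(n-a)))) * (1 - (2:ℝ)^(a-n))⁻¹ := by
              refine mul_le_mul_of_nonneg_left hgeom ?_
              have h2a : (0:ℝ) ≤ (2:ℝ)^a := (Real.rpow_pos_of_pos two_pos _).le
              positivity
          _ = ((2:ℝ)^a * (1 - (2:ℝ)^(a-n))⁻¹) * (C₂ * (A * ρ^(n-a))) := by ring
      have hfinal : (2:ℝ)^n * (C₁ * (A * ρ^(n-a)))
          + ((2:ℝ)^a * (1 - (2:ℝ)^(a-n))⁻¹) * (C₂ * (A * ρ^(n-a)))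
          ≤ Kone * ((C₁+C₂) * (A * ρ^(n-a))) := by
        rw [hKone]
        have h2n : (0:ℝ) < (2:ℝ)^n := Real.rpow_pos_of_pos two_pos _
        have h2a : (0:ℝ) < (2:ℝ)^a := Real.rpow_pos_of_pos two_pos _
        have hinv : (0:ℝ) < (1 - (2:ℝ)^(a-n))⁻¹ := by
          apply inv_pos.mpr; linarith
        have hX : (0:ℝ) ≤ A * ρ^(n-a) := mul_nonneg hA hρna
        nlinarith [mul_nonneg (mul_nonneg h2n.le hC₂) hX,
          mul_nonneg (mul_nonneg (mul_nonneg h2a.le hinv.le) hC₁) hX]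
      linarith
    have hnear : ‖∑ x : G, (φ ρ x:ℂ) * (Fh x * Wt x * Eh x)‖
        ≤ Kone * ((C₁+C₂) * (A * ρ^(n-a))) * (EE * FF) := by
      set Mb : ℝ := Kone * ((C₁+C₂) * (A * ρ^(n-a))) with hMb
      have hMbnn : 0 ≤ Mb := by
        rw [hMb]
        have : (0:ℝ) ≤ ρ^(n-a) := Real.rpow_nonneg hρ.le _
        have h1 : (0:ℝ) ≤ C₁ + C₂ := by linarith
        positivity
      have hexp : ∑ x : G, (φ ρ x:ℂ) * (Fh x * Wt x * Eh x)
          = ∑ ξ : H, ∑ η : H, ∑ ζ : H, (χF ξ : ℂ) * (w η : ℂ) * (χE ζ : ℂ)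
              * (Φm (ξ - η - ζ)) := by
        simp only [hFh, hWt, hEh, hΦm]
        exact phi_inversion e he1 he2 he3 (φ ρ) χF w χE
      rw [hexp]
      have habs3 : ‖∑ ξ : H, ∑ η : H, ∑ ζ : H, (χF ξ : ℂ) * (w η : ℂ) * (χE ζ : ℂ)
              * (Φm (ξ - η - ζ))‖
          ≤ ∑ ξ : H, ∑ η : H, ∑ ζ : H, χF ξ * w η * χE ζ
              * ‖Φm (ξ - η - ζ)‖ := by
        refine le_trans (norm_sum_le _ _) (Finset.sum_le_sum fun ξ _ => ?_)
        refine le_trans (norm_sum_le _ _) (Finset.sum_le_sum fun η _ => ?_)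
        refine le_trans (norm_sum_le _ _) (Finset.sum_le_sum fun ζ _ => ?_)
        rw [norm_mul, norm_mul, norm_mul, Complex.norm_real, Complex.norm_real,
          Complex.norm_real, Real.norm_eq_abs, Real.norm_eq_abs, Real.norm_eq_abs, abs_of_nonneg (hχFnn ξ), abs_of_nonneg (hw0 η),
          abs_of_nonneg (hχEnn ζ)]
      refine le_trans habs3 ?_
      have hstep : ∀ ξ ζ : H, ∑ η : H, χF ξ * w η * χE ζ * ‖Φm (ξ - η - ζ)‖
          = χF ξ * χE ζ * ∑ η : H, w η * ‖Φm (ξ - ζ - η)‖ := by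
        intro ξ ζ
        rw [Finset.mul_sum]
        refine Finset.sum_congr rfl fun η _ => ?_
        rw [sub_right_comm]
        ring
      calc ∑ ξ : H, ∑ η : H, ∑ ζ : H, χF ξ * w η * χE ζ * ‖Φm (ξ - η - ζ)‖
          = ∑ ξ : H, ∑ ζ : H, ∑ η : H, χF ξ * w η * χE ζ * ‖Φm (ξ - η - ζ)‖ := by
            exact Finset.sum_congr rfl fun ξ _ => Finset.sum_comm
        _ = ∑ ξ : H, ∑ ζ : H, χF ξ * χE ζ * ∑ η : H, w η * ‖Φm (ξ - ζ - η)‖ := by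
            exact Finset.sum_congr rfl fun ξ _ => Finset.sum_congr rfl fun ζ _ => hstep ξ ζ
        _ ≤ ∑ ξ : H, ∑ ζ : H, χF ξ * χE ζ * Mb := by
            refine Finset.sum_le_sum fun ξ _ => Finset.sum_le_sum fun ζ _ => ?_
            exact mul_le_mul_of_nonneg_left (hMkey (ξ - ζ))
              (mul_nonneg (hχFnn ξ) (hχEnn ζ))
        _ = Mb * (EE * FF) := by
            have h1 : ∀ ξ : H, ∑ ζ : H, χF ξ * χE ζ * Mb = χF ξ * (EE * Mb) := by
              intro ξ
              rw [show ∀ s : Finset H, ∑ ζ ∈ s, χF ξ * χE ζ * Mb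
                  = χF ξ * ∑ ζ ∈ s, χE ζ * Mb from fun s => by
                    rw [Finset.mul_sum]; exact Finset.sum_congr rfl fun ζ _ => by ring]
              rw [← Finset.sum_mul, hsumE]
            rw [Finset.sum_congr rfl fun ξ _ => h1 ξ, ← Finset.sum_mul, hsumF]
            ring
    have hsplit : (∑ x : G, Fh x * Wt x * Eh x)
        = (∑ x : G, (φ ρ x:ℂ) * (Fh x * Wt x * Eh x))
          + (∑ x : G, ((1:ℂ) - (φ ρ x:ℂ)) * (Fh x * Wt x * Eh x)) := by
      rw [← Finset.sum_add_distrib]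
      exact Finset.sum_congr rfl fun x _ => by ring
    calc N * LHS0 = ‖∑ x : G, Fh x * Wt x * Eh x‖ := habs
      _ ≤ ‖∑ x : G, (φ ρ x:ℂ) * (Fh x * Wt x * Eh x)‖
          + ‖∑ x : G, ((1:ℂ) - (φ ρ x:ℂ)) * (Fh x * Wt x * Eh x)‖ := by
          rw [hsplit]; exact norm_add_le _ _
      _ ≤ Kone * ((C₁+C₂) * (A * ρ^(n-a))) * (EE * FF)
          + 2 * (B * ρ^(-b/2)) * (N * Real.sqrt (EE * FF)) := add_le_add hnear hfar

  -- choose the optimal ρ and conclude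
  set θ : ℝ := 2 * (n - a) / (2 * (n - a) + b) with hθ
  set β : ℝ := (n - a + b) / (2 * (n - a) + b) with hβ
  have hγ : (0:ℝ) < n - a + b/2 := by linarith
  have hCCpos : (0:ℝ) < C₁ + C₂ := by linarith
  set sE : ℝ := EE / N with hsE
  set sF : ℝ := FF / N with hsF
  have hsEpos : 0 < sE := by rw [hsE]; exact div_pos hEpos hN
  have hsFpos : 0 < sF := by rw [hsF]; exact div_pos hFpos hN
  have hsqEF : 0 < Real.sqrt (sE * sF) := Real.sqrt_pos.mpr (by positivity)
  set D : ℝ := (C₁ + C₂) * A * Real.sqrt (sE * sF) with hD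
  have hDpos : 0 < D := by rw [hD]; exact mul_pos (mul_pos hCCpos hApos) hsqEF
  set ρ0 : ℝ := (B / D) ^ ((n - a + b/2)⁻¹ : ℝ) with hρ0def
  have hBD : 0 < B / D := div_pos hBpos hDpos
  have hρ0 : 0 < ρ0 := by rw [hρ0def]; exact Real.rpow_pos_of_pos hBD _
  have hkey := main ρ0 hρ0
  -- logarithmic computations
  have hlogρ0 : Real.log ρ0 = (n - a + b/2)⁻¹ * (Real.log B - Real.log D) := by
    rw [hρ0def, Real.log_rpow hBD, Real.log_div (ne_of_gt hBpos) (ne_of_gt hDpos)]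
  have hlogD : Real.log D
      = Real.log (C₁+C₂) + Real.log A + (Real.log sE + Real.log sF)/2 := by
    rw [hD, Real.log_mul (ne_of_gt (mul_pos hCCpos hApos)) (ne_of_gt hsqEF),
      Real.log_mul (ne_of_gt hCCpos) (ne_of_gt hApos),
      Real.log_sqrt (by positivity),
      Real.log_mul (ne_of_gt hsEpos) (ne_of_gt hsFpos)]
  set V : ℝ := (C₁+C₂)^(1-θ) * A^(1-θ) * B^θ * sE^β * sF^β with hV
  have hVpos : 0 < V := by
    rw [hV]
    have h1 := Real.rpow_pos_of_pos hCCpos (1-θ)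
    have h2 := Real.rpow_pos_of_pos hApos (1-θ)
    have h3 := Real.rpow_pos_of_pos hBpos θ
    have h4 := Real.rpow_pos_of_pos hsEpos β
    have h5 := Real.rpow_pos_of_pos hsFpos β
    positivity
  have hlogV : Real.log V = (1-θ) * Real.log (C₁+C₂) + (1-θ) * Real.log A
      + θ * Real.log B + β * Real.log sE + β * Real.log sF := by
    rw [hV, Real.log_mul (by positivity) (ne_of_gt (Real.rpow_pos_of_pos hsFpos β)),
      Real.log_mul (by positivity) (ne_of_gt (Real.rpow_pos_of_pos hsEpos β)),
      Real.log_mul (by positivity) (ne_of_gt (Real.rpow_pos_of_pos hBpos θ)),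
      Real.log_mul (ne_of_gt (Real.rpow_pos_of_pos hCCpos (1-θ)))
        (ne_of_gt (Real.rpow_pos_of_pos hApos (1-θ))),
      Real.log_rpow hCCpos, Real.log_rpow hApos, Real.log_rpow hBpos,
      Real.log_rpow hsEpos, Real.log_rpow hsFpos]
  have hX1 : (C₁+C₂) * (A * ρ0^(n-a)) * (sE*sF) = V := by
    have hρna : 0 < ρ0^(n-a) := Real.rpow_pos_of_pos hρ0 _
    have hXpos : 0 < (C₁+C₂) * (A * ρ0^(n-a)) * (sE*sF) := by
      have := mul_pos hsEpos hsFpos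
      have := mul_pos hApos hρna
      positivity
    have hL : Real.log ((C₁+C₂) * (A * ρ0^(n-a)) * (sE*sF)) = Real.log V := by
      rw [Real.log_mul (ne_of_gt (mul_pos hCCpos (mul_pos hApos hρna)))
          (ne_of_gt (mul_pos hsEpos hsFpos)),
        Real.log_mul (ne_of_gt hCCpos) (ne_of_gt (mul_pos hApos hρna)),
        Real.log_mul (ne_of_gt hApos) (ne_of_gt hρna),
        Real.log_mul (ne_of_gt hsEpos) (ne_of_gt hsFpos),
        Real.log_rpow hρ0, hlogρ0, hlogD, hlogV, hθ, hβ]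
      have hne1 : n - a + b/2 ≠ 0 := ne_of_gt hγ
      have hne2 : 2*(n-a) + b ≠ 0 := ne_of_gt hden
      field_simp
      ring
    have h1 := congrArg Real.exp hL
    rwa [Real.exp_log hXpos, Real.exp_log hVpos] at h1
  have hX2 : B * ρ0^(-b/2) * Real.sqrt (sE*sF) = V := by
    have hρnb : 0 < ρ0^(-b/2) := Real.rpow_pos_of_pos hρ0 _
    have hXpos : 0 < B * ρ0^(-b/2) * Real.sqrt (sE*sF) := by positivity
    have hL : Real.log (B * ρ0^(-b/2) * Real.sqrt (sE*sF)) = Real.log V := by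
      rw [Real.log_mul (ne_of_gt (mul_pos hBpos hρnb)) (ne_of_gt hsqEF),
        Real.log_mul (ne_of_gt hBpos) (ne_of_gt hρnb),
        Real.log_sqrt (by positivity),
        Real.log_mul (ne_of_gt hsEpos) (ne_of_gt hsFpos),
        Real.log_rpow hρ0, hlogρ0, hlogD, hlogV, hθ, hβ]
      have hne1 : n - a + b/2 ≠ 0 := ne_of_gt hγ
      have hne2 : 2*(n-a) + b ≠ 0 := ne_of_gt hden
      field_simp
      ring
    have h1 := congrArg Real.exp hL
    rwa [Real.exp_log hXpos, Real.exp_log hVpos] at h1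
  -- rescale the main estimate
  have hEEeq : EE = sE * N := by rw [hsE]; field_simp
  have hFFeq : FF = sF * N := by rw [hsF]; field_simp
  have hsqrtEF : Real.sqrt (EE * FF) = N * Real.sqrt (sE * sF) := by
    rw [hEEeq, hFFeq, show sE * N * (sF * N) = (sE * sF) * N^2 by ring,
      Real.sqrt_mul (by positivity), Real.sqrt_sq hN.le]
    ring
  have hT1 : Kone * ((C₁+C₂) * (A * ρ0^(n-a))) * (EE*FF) = N^2 * (Kone * V) := by
    rw [hEEeq, hFFeq, ← hX1]
    ring
  have hT2 : 2 * (B * ρ0^(-b/2)) * (N * Real.sqrt (EE*FF)) = N^2 * (2 * V) := by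
    rw [hsqrtEF, ← hX2]
    ring
  rw [hT1, hT2] at hkey
  have hgoal2 : N⁻¹ * LHS0 ≤ (Kone + 2) * V := by
    have h1 : N⁻¹ * LHS0 = (N * LHS0) / N^2 := by
      field_simp
    rw [h1, div_le_iff₀ (by positivity)]
    calc N * LHS0 ≤ N^2 * (Kone * V) + N^2 * (2 * V) := hkey
      _ = (Kone + 2) * V * N^2 := by ring
  calc N⁻¹ * LHS0 ≤ (Kone + 2) * V := hgoal2
    _ = (Kone + 2) * (C₁+C₂)^(1-θ) * A^(1-θ) * B^θ * sE^β * sF^β := by rw [hV]; ring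
end

section
/- Let (G, {B^G_ρ}, {B^{Ĝ}_ρ}, {φ_ρ}) be a Littlewood-Paley system satisfying m(B^G_ρ(0)) ≤ C₁ρⁿ and the Fourier decay condition (F) with constant C₂, and let μ be a measure on Ĝ with μ(B^{Ĝ}_ρ(ξ)) ≤ Aρ^a for all ξ and ρ, where 0 < a < n. Define μ₁ by μ̌₁ = φ_ρ · μ̌ (equivalently μ₁ = φ̂_ρ ∗ μ). Then ‖μ₁‖_{L^∞(Ĝ)} ≤ 2ⁿ (C₁ + (2^{n-a} − 1)^{-1} C₂) A ρ^{n-a}. -/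
open scoped BigOperators

theorem stmt_6 (G H : Type*) [AddCommGroup G] [Fintype G] [DecidableEq G] [AddCommGroup H] [Fintype H]
    (e : G → H → ℂ)
    (he1 : ∀ (x y : G) (ξ : H), e (x + y) ξ = e x ξ * e y ξ)
    (he2 : ∀ (x : G) (ξ η : H), e x (ξ + η) = e x ξ * e x η)
    (heu : ∀ (x : G) (ξ : H), ‖e x ξ‖ = 1)
    (hinv : ∀ x : G, ∑ ξ : H, e x ξ = if x = 0 then (Fintype.card G : ℂ) else 0)
    (BG : ℝ → Set G) (BH : ℝ → Set H)
    (hGnest : ∀ ρ ρ' : ℝ, 0 < ρ → ρ ≤ ρ' → BG ρ ⊆ BG ρ')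
    (hGsym : ∀ (ρ : ℝ) (x : G), x ∈ BG ρ → -x ∈ BG ρ)
    (hGcov : ∀ x : G, ∃ ρ : ℝ, 0 < ρ ∧ x ∈ BG ρ)
    (hHnest : ∀ ρ ρ' : ℝ, 0 < ρ → ρ ≤ ρ' → BH ρ ⊆ BH ρ')
    (hHsym : ∀ (ρ : ℝ) (ξ : H), ξ ∈ BH ρ → -ξ ∈ BH ρ)
    (hHcov : ∀ ξ : H, ∃ ρ : ℝ, 0 < ρ ∧ ξ ∈ BH ρ)
    (n a : ℝ) (ha0 : 0 < a) (han : a < n)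
    (C₁ C₂ A : ℝ) (hC₁ : 0 ≤ C₁) (hC₂ : 0 ≤ C₂) (hA : 0 ≤ A)
    (hR : ∀ ρ : ℝ, 0 < ρ → ((BG ρ).ncard : ℝ) ≤ C₁ * ρ ^ n)
    (φ : ℝ → G → ℝ)
    (hφ1 : ∀ ρ : ℝ, 0 < ρ → ∀ x ∈ BG ρ, φ ρ x = 1)
    (hφs : ∀ ρ : ℝ, 0 < ρ → ∀ x : G, φ ρ x ≠ 0 → x ∈ BG (2 * ρ))
    (hφb : ∀ (ρ : ℝ) (x : G), |φ ρ x| ≤ 1)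
    (hF : ∀ ρ : ℝ, 0 < ρ → ∀ s : ℝ, 1 / ρ ≤ s → ∀ ξ : H, -ξ ∉ BH s →
        ‖∑ x : G, (φ ρ x : ℂ) * e (-x) ξ‖ ≤ C₂ * s ^ (-n))
    (w : H → ℝ) (hw : ∀ ξ : H, 0 ≤ w ξ)
    (hRμ : ∀ ρ : ℝ, 0 < ρ → ∀ ξ : H,
        ∑ η : H, Set.indicator (BH ρ) (fun _ => (1 : ℝ)) (η - ξ) * w η ≤ A * ρ ^ a)
    (ρ : ℝ) (hρ : 0 < ρ) (ξ : H) :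
    ‖∑ η : H, (w η : ℂ) * ∑ x : G, (φ ρ x : ℂ) * e (-x) (ξ - η)‖
      ≤ (2 : ℝ) ^ n * (C₁ + ((2 : ℝ) ^ (n - a) - 1)⁻¹ * C₂) * A * ρ ^ (n - a) := by
  classical
  have h2ρ : (0:ℝ) < 2 * ρ := by linarith
  have h2 : (0:ℝ) < 2 := two_pos
  set Φ : H → ℝ := fun ζ => ‖∑ x : G, (φ ρ x : ℂ) * e (-x) ζ‖ with hΦdef
  have hΦ0 : ∀ ζ, 0 ≤ Φ ζ := fun ζ => norm_nonneg _
  -- Step 1: triangle inequality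
  have step1 : ‖∑ η : H, (w η : ℂ) * ∑ x : G, (φ ρ x : ℂ) * e (-x) (ξ - η)‖
      ≤ ∑ η : H, w η * Φ (ξ - η) := by
    refine le_trans (norm_sum_le _ _) (le_of_eq ?_)
    refine Finset.sum_congr rfl fun η _ => ?_
    rw [norm_mul, Complex.norm_real, Real.norm_eq_abs, abs_of_nonneg (hw η)]
  -- Uniform bound on Φ
  have hb0 : ∀ ζ : H, Φ ζ ≤ C₁ * (2 * ρ) ^ n := by
    intro ζ
    have h1 : Φ ζ ≤ ∑ x : G, |φ ρ x| := by
      refine le_trans (norm_sum_le _ _) (le_of_eq ?_)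
      refine Finset.sum_congr rfl fun x _ => ?_
      rw [norm_mul, Complex.norm_real, Real.norm_eq_abs, heu, mul_one]
    have h2' : ∑ x : G, |φ ρ x| ≤ ((BG (2*ρ)).ncard : ℝ) := by
      rw [Set.ncard_eq_toFinset_card']
      have heq : ∑ x : G, |φ ρ x|
          = ∑ x ∈ Finset.univ.filter (fun x => φ ρ x ≠ 0), |φ ρ x| := by
        refine (Finset.sum_subset (Finset.subset_univ _) ?_).symm
        intro x _ hx
        simp only [Finset.mem_filter, Finset.mem_univ, true_and, not_not] at hx
        simp [hx]
      rw [heq]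
      calc ∑ x ∈ Finset.univ.filter (fun x => φ ρ x ≠ 0), |φ ρ x|
          ≤ ∑ _x ∈ Finset.univ.filter (fun x => φ ρ x ≠ 0), (1:ℝ) :=
            Finset.sum_le_sum fun x _ => hφb ρ x
        _ = ((Finset.univ.filter (fun x => φ ρ x ≠ 0)).card : ℝ) := by simp
        _ ≤ ((BG (2*ρ)).toFinset.card : ℝ) := by
            have hsub : Finset.univ.filter (fun x => φ ρ x ≠ 0) ⊆ (BG (2*ρ)).toFinset := by
              intro x hx
              simp only [Finset.mem_filter, Finset.mem_univ, true_and] at hx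
              exact Set.mem_toFinset.mpr (hφs ρ hρ x hx)
            exact_mod_cast Finset.card_le_card hsub
    exact le_trans h1 (le_trans h2' (hR (2*ρ) h2ρ))
  -- Mass bound
  have hmass : ∀ s : ℝ, 0 < s → ∀ F : Finset H, (∀ η ∈ F, η - ξ ∈ BH s) →
      ∑ η ∈ F, w η ≤ A * s ^ a := by
    intro s hs F hF'
    refine le_trans ?_ (hRμ s hs ξ)
    calc ∑ η ∈ F, w η = ∑ η ∈ F, Set.indicator (BH s) (fun _ => (1:ℝ)) (η - ξ) * w η := by
          refine Finset.sum_congr rfl fun η hη => ?_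
          rw [Set.indicator_of_mem (hF' η hη), one_mul]
      _ ≤ ∑ η : H, Set.indicator (BH s) (fun _ => (1:ℝ)) (η - ξ) * w η := by
          refine Finset.sum_le_sum_of_subset_of_nonneg (Finset.subset_univ F) ?_
          intro η _ _
          exact mul_nonneg (Set.indicator_nonneg (fun _ _ => zero_le_one) _) (hw η)
  -- levels
  have hex : ∀ η : H, ∃ k : ℕ, η - ξ ∈ BH ((2:ℝ) ^ k / ρ) := by
    intro η
    obtain ⟨ρ', hρ'0, hρ'⟩ := hHcov (η - ξ)
    obtain ⟨k, hk⟩ := pow_unbounded_of_one_lt (ρ' * ρ) (one_lt_two (α := ℝ))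
    exact ⟨k, hHnest ρ' ((2:ℝ)^k/ρ) hρ'0 (by rw [le_div_iff₀ hρ]; exact hk.le) hρ'⟩
  set lev : H → ℕ := fun η => Nat.find (hex η) with hlevdef
  have hlev_mem : ∀ η, η - ξ ∈ BH ((2:ℝ) ^ lev η / ρ) := fun η => Nat.find_spec (hex η)
  have hlev_not : ∀ η k, lev η = k + 1 → η - ξ ∉ BH ((2:ℝ) ^ k / ρ) := by
    intro η k hk
    have hk' : k < lev η := by omega
    exact Nat.find_min (hex η) hk'
  set K : ℕ := Finset.univ.sup lev with hKdef
  have hK : ∀ η, lev η ≤ K := fun η => Finset.le_sup (Finset.mem_univ η)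
  set F : ℕ → Finset H := fun k => Finset.univ.filter (fun η => lev η = k) with hFdef
  have hpart : ∑ η : H, w η * Φ (ξ - η)
      = ∑ k ∈ Finset.range (K+1), ∑ η ∈ F k, w η * Φ (ξ - η) :=
    (Finset.sum_fiberwise_of_maps_to
      (fun η _ => Finset.mem_range.mpr (Nat.lt_succ_of_le (hK η))) _).symm
  -- fiber bound
  have hfiber : ∀ k : ℕ, ∀ b : ℝ, 0 ≤ b → (∀ η ∈ F k, Φ (ξ - η) ≤ b) →
      ∑ η ∈ F k, w η * Φ (ξ - η) ≤ b * (A * ((2:ℝ)^k/ρ) ^ a) := by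
    intro k b hb hΦb
    have hsk : (0:ℝ) < (2:ℝ)^k/ρ := by positivity
    calc ∑ η ∈ F k, w η * Φ (ξ - η) ≤ ∑ η ∈ F k, w η * b :=
          Finset.sum_le_sum fun η hη => mul_le_mul_of_nonneg_left (hΦb η hη) (hw η)
      _ = b * ∑ η ∈ F k, w η := by rw [Finset.mul_sum]; exact Finset.sum_congr rfl fun η _ => mul_comm _ _
      _ ≤ b * (A * ((2:ℝ)^k/ρ) ^ a) := by
          refine mul_le_mul_of_nonneg_left (hmass _ hsk _ ?_) hb
          intro η hη
          have : lev η = k := by simpa [hFdef] using hη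
          simpa [this] using hlev_mem η
  -- per-fiber Φ bounds
  have hS0 : ∑ η ∈ F 0, w η * Φ (ξ - η) ≤ (C₁*(2*ρ)^n) * (A * ((2:ℝ)^(0:ℕ)/ρ)^a) :=
    hfiber 0 _ (by positivity) (fun η _ => hb0 _)
  have hSk : ∀ i : ℕ, ∑ η ∈ F (i+1), w η * Φ (ξ - η)
      ≤ (C₂ * ((2:ℝ)^i/ρ)^(-n)) * (A * ((2:ℝ)^(i+1)/ρ)^a) := by
    intro i
    have hCpos : (0:ℝ) ≤ C₂ * ((2:ℝ)^i/ρ)^(-n) := by positivity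
    refine hfiber (i+1) _ hCpos ?_
    intro η hη
    have hlevη : lev η = i + 1 := by simpa [hFdef] using hη
    have hnot := hlev_not η i hlevη
    have hs1 : 1/ρ ≤ (2:ℝ)^i/ρ := by
      gcongr
      exact one_le_pow₀ one_le_two
    exact hF ρ hρ ((2:ℝ)^i/ρ) hs1 (ξ - η) (by rw [neg_sub]; exact hnot)
  -- constants
  set t : ℝ := (2:ℝ)^(n-a) with htdef
  set r : ℝ := (2:ℝ)^(a-n) with hrdef
  have ht1 : 1 < t := Real.one_lt_rpow_iff_of_pos two_pos |>.mpr (Or.inl ⟨one_lt_two, by linarith⟩)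
  have hr0 : 0 ≤ r := Real.rpow_nonneg (by norm_num) _
  have hr1 : r < 1 := Real.rpow_lt_one_of_one_lt_of_neg one_lt_two (by linarith)
  have h1r : (0:ℝ) < 1 - r := by linarith
  have hρn : (0:ℝ) < ρ ^ n := Real.rpow_pos_of_pos hρ n
  have hρa : (0:ℝ) < ρ ^ a := Real.rpow_pos_of_pos hρ a
  have hpow : ∀ (i : ℕ) (c : ℝ), ((2:ℝ)^i : ℝ) ^ c = (2:ℝ) ^ ((i:ℝ)*c) := by
    intro i c
    rw [← Real.rpow_natCast 2 i, ← Real.rpow_mul (by norm_num)]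
  have hE1 : (C₁*(2*ρ)^n) * (A * ((2:ℝ)^(0:ℕ)/ρ)^a) = (2:ℝ)^n*C₁*A*ρ^(n-a) := by
    rw [Real.mul_rpow (by norm_num) hρ.le, pow_zero, one_div, Real.inv_rpow hρ.le,
      Real.rpow_sub hρ]
    field_simp
  have hE2 : ∀ i : ℕ, (C₂ * ((2:ℝ)^i/ρ)^(-n)) * (A * ((2:ℝ)^(i+1)/ρ)^a)
      = (C₂*A*ρ^(n-a)*(2:ℝ)^a) * r^i := by
    intro i
    have hri : r ^ i = (2:ℝ) ^ ((a-n)*(i:ℝ)) := by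
      rw [← Real.rpow_natCast r i, hrdef, ← Real.rpow_mul (by norm_num)]
    have hpow1 : ((2:ℝ)^i : ℝ) ^ (-n) = (2:ℝ) ^ (-((i:ℝ)*n)) := by
      rw [← Real.rpow_natCast 2 i, ← Real.rpow_mul (by norm_num)]
      congr 1
      ring
    have hpow2 : ((2:ℝ)^(i+1) : ℝ) ^ a = (2:ℝ) ^ (((i:ℝ)+1)*a) := by
      rw [← Real.rpow_natCast 2 (i+1), ← Real.rpow_mul (by norm_num)]
      norm_cast
    have hmerge : (2:ℝ)^(-((i:ℝ)*n)) * (2:ℝ)^(((i:ℝ)+1)*a)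
        = (2:ℝ)^a * (2:ℝ)^((a-n)*(i:ℝ)) := by
      rw [← Real.rpow_add two_pos, ← Real.rpow_add two_pos]
      congr 1
      ring
    rw [Real.div_rpow (by positivity) hρ.le, Real.div_rpow (by positivity) hρ.le,
      hpow1, hpow2, Real.rpow_neg hρ.le, Real.rpow_sub hρ, hri]
    field_simp
    have hZ : (2:ℝ)^((a-n)*(i:ℝ)) = (2:ℝ)^((i:ℝ)*(a-n)) := by rw [mul_comm]
    linear_combination (C₂*A) * hmerge + (C₂*A*(2:ℝ)^a) * hZ
  have hgeo : ∑ i ∈ Finset.range K, r ^ i ≤ (1 - r)⁻¹ := by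
    rw [geom_sum_eq (ne_of_lt hr1)]
    have hdiv : (r^K - 1)/(r - 1) = (1 - r^K)/(1 - r) := by
      rw [div_eq_div_iff (sub_ne_zero.mpr (ne_of_lt hr1)) (ne_of_gt h1r)]
      ring
    rw [hdiv, ← one_div]
    gcongr
    nlinarith [pow_nonneg hr0 K]
  have hE3 : (C₂*A*ρ^(n-a)*(2:ℝ)^a) * (1-r)⁻¹ + (2:ℝ)^n*C₁*A*ρ^(n-a)
      = (2:ℝ)^n * (C₁ + ((2:ℝ)^(n-a) - 1)⁻¹ * C₂) * A * ρ^(n-a) := by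
    have hrt : r = t⁻¹ := by
      rw [hrdef, htdef, show a - n = -(n-a) by ring, Real.rpow_neg (by norm_num)]
    have ht0 : (0:ℝ) < t := by linarith
    have h2an : (2:ℝ)^a * t = (2:ℝ)^n := by
      rw [htdef, ← Real.rpow_add two_pos]
      congr 1
      ring
    rw [hrt, ← htdef]
    have htne : t - 1 ≠ 0 := sub_ne_zero.mpr (ne_of_gt ht1)
    have h1r' : (1 - t⁻¹)⁻¹ = t/(t-1) := by
      have hsplit : 1 - t⁻¹ = (t-1)/t := by field_simp
      rw [hsplit, inv_div]
    rw [h1r']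
    field_simp
    linear_combination (A*C₂) * h2an
  calc ‖∑ η : H, (w η : ℂ) * ∑ x : G, (φ ρ x : ℂ) * e (-x) (ξ - η)‖
      ≤ ∑ η : H, w η * Φ (ξ - η) := step1
    _ = ∑ k ∈ Finset.range (K+1), ∑ η ∈ F k, w η * Φ (ξ - η) := hpart
    _ = (∑ i ∈ Finset.range K, ∑ η ∈ F (i+1), w η * Φ (ξ - η))
        + ∑ η ∈ F 0, w η * Φ (ξ - η) := Finset.sum_range_succ' _ K
    _ ≤ (∑ i ∈ Finset.range K, (C₂*A*ρ^(n-a)*(2:ℝ)^a) * r^i) + (2:ℝ)^n*C₁*A*ρ^(n-a) := by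
        refine add_le_add (Finset.sum_le_sum fun i _ => (hSk i).trans_eq (hE2 i))
          (hS0.trans_eq hE1)
    _ = (C₂*A*ρ^(n-a)*(2:ℝ)^a) * (∑ i ∈ Finset.range K, r^i) + (2:ℝ)^n*C₁*A*ρ^(n-a) := by
        rw [Finset.mul_sum]
    _ ≤ (C₂*A*ρ^(n-a)*(2:ℝ)^a) * (1-r)⁻¹ + (2:ℝ)^n*C₁*A*ρ^(n-a) := by
        refine add_le_add_left (mul_le_mul_of_nonneg_left hgeo (by positivity)) _
    _ = (2:ℝ)^n * (C₁ + ((2:ℝ)^(n-a) - 1)⁻¹ * C₂) * A * ρ^(n-a) := hE3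
end

section
/- Let G = 𝔽_q^n with counting Haar measure on G and normalized (total mass 1) Haar measure on Ĝ ≅ 𝔽_q^n. Define balls B^G_ρ(x) = ∅ for ρ < 1, {x} for 1 ≤ ρ < q, and 𝔽_q^n for ρ ≥ q; and B^{Ĝ}_ρ(ξ) = ∅ for ρ < 1/q, {ξ} for 1/q ≤ ρ < 1, and 𝔽_q^n for ρ ≥ 1. Let φ_ρ := χ_{B^G_ρ(0)}. Then (G, {B^G_ρ}, {B^{Ĝ}_ρ}, {φ_ρ}) is a Littlewood-Paley system with constants C₁ = C₂ = C₃ = 1: i.e., m(B^G_ρ(0)) ≤ ρⁿ for all ρ > 0; |φ̂_ρ(ξ)| ≤ s^{-n} whenever -ξ ∉ B^{Ĝ}_s(0) and s ≥ 1/ρ; and ∫_{Ĝ}|φ̂_ρ| dm̂ ≤ 1. -/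
open scoped BigOperators

/-- The balls on `𝔽_q^n`. -/
def ballG (F : Type*) [Zero F] [Fintype F] (n : ℕ) (ρ : ℝ) : Set (Fin n → F) :=
  if ρ < 1 then ∅ else if ρ < (Fintype.card F : ℝ) then {0} else Set.univ

/-- The dual balls on `𝔽_q^n`. -/
def ballH (F : Type*) [Zero F] [Fintype F] (n : ℕ) (ρ : ℝ) : Set (Fin n → F) :=
  if ρ < ((Fintype.card F : ℝ))⁻¹ then ∅ else if ρ < 1 then {0} else Set.univ

/-- The Fourier transform of `φ_ρ = χ_{B^G_ρ(0)}` on `𝔽_q^n`. -/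
noncomputable def phiFT (F : Type*) [Field F] [Fintype F] (n : ℕ) (ψ : AddChar F ℂ)
    (ρ : ℝ) (ξ : Fin n → F) : ℂ :=
  ∑ x : Fin n → F,
    Set.indicator (ballG F n ρ) (fun _ => (1 : ℂ)) x * ψ (-(∑ j, x j * ξ j))

lemma addchar_map_sum {F : Type*} [AddCommMonoid F] (ψ : AddChar F ℂ) {ι : Type*}
    (s : Finset ι) (f : ι → F) : ψ (∑ i ∈ s, f i) = ∏ i ∈ s, ψ (f i) := by
  induction s using Finset.cons_induction with
  | empty => simp
  | cons a s ha ih => simp [Finset.sum_cons, Finset.prod_cons, AddChar.map_add_eq_mul, ih]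

open scoped Classical in
lemma key_sum (F : Type*) [Field F] [Fintype F] (n : ℕ) (ψ : AddChar F ℂ) (hψ : ψ ≠ 1)
    (ξ : Fin n → F) :
    (∑ x : Fin n → F, ψ (-(∑ j, x j * ξ j))) =
      if ξ = 0 then ((Fintype.card F : ℂ)) ^ n else 0 := by
  classical
  have hprim : ψ.IsPrimitive := AddChar.IsPrimitive.of_ne_one hψ
  have h1 : ∀ x : Fin n → F, ψ (-(∑ j, x j * ξ j)) = ∏ j, ψ (x j * (-ξ j)) := by
    intro x
    rw [← Finset.sum_neg_distrib, addchar_map_sum]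
    simp [mul_neg, neg_mul]
  simp_rw [h1]
  rw [show (Finset.univ : Finset (Fin n → F)) = Fintype.piFinset (fun _ => Finset.univ) from
    (Fintype.piFinset_univ).symm, ← Finset.prod_univ_sum (fun _ => (Finset.univ : Finset F)) (fun j y => ψ (y * -ξ j))]
  have h2 : ∀ j : Fin n, (∑ y : F, ψ (y * (-ξ j))) =
      if ξ j = 0 then (Fintype.card F : ℂ) else 0 := by
    intro j
    rw [AddChar.sum_mulShift _ hprim]
    simp
  simp_rw [h2]
  by_cases hz : ξ = 0
  · simp [hz]
  · obtain ⟨j, hj⟩ : ∃ j, ξ j ≠ 0 := by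
      by_contra h
      push_neg at h
      exact hz (funext h)
    rw [if_neg hz]
    exact Finset.prod_eq_zero (Finset.mem_univ j) (by simp [hj])

theorem stmt_8 (F : Type*) [Field F] [Fintype F] (n : ℕ)
    (ψ : AddChar F ℂ) (hψ : ψ ≠ 1) :
    (∀ ρ : ℝ, 0 < ρ → ((ballG F n ρ).ncard : ℝ) ≤ ρ ^ (n : ℝ)) ∧
    (∀ ρ : ℝ, 0 < ρ → ∀ s : ℝ, 1 / ρ ≤ s → ∀ ξ : Fin n → F, -ξ ∉ ballH F n s →
        ‖phiFT F n ψ ρ ξ‖ ≤ s ^ (-(n : ℝ))) ∧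
    (∀ ρ : ℝ, 0 < ρ →
        ((Fintype.card F : ℝ) ^ n)⁻¹ * ∑ ξ : Fin n → F, ‖phiFT F n ψ ρ ξ‖ ≤ 1) := by
  classical
  have hq1 : (1 : ℝ) ≤ (Fintype.card F : ℝ) := by
    exact_mod_cast Nat.one_le_iff_ne_zero.mpr Fintype.card_ne_zero
  have hq0 : (0 : ℝ) < (Fintype.card F : ℝ) := lt_of_lt_of_le one_pos hq1
  -- compute phiFT in the three regimes
  have hFT_small : ∀ ρ : ℝ, ρ < 1 → ∀ ξ, phiFT F n ψ ρ ξ = 0 := by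
    intro ρ hρ ξ
    simp [phiFT, ballG, if_pos hρ]
  have hFT_mid : ∀ ρ : ℝ, 1 ≤ ρ → ρ < (Fintype.card F : ℝ) → ∀ ξ, phiFT F n ψ ρ ξ = 1 := by
    intro ρ hρ1 hρ2 ξ
    have h : ballG F n ρ = {0} := by simp [ballG, not_lt.2 hρ1, hρ2]
    rw [phiFT, h]
    rw [Finset.sum_eq_single (0 : Fin n → F)]
    · simp
    · intro b _ hb
      simp [Set.indicator_of_notMem (by simpa using hb : b ∉ ({0} : Set (Fin n → F)))]
    · simp
  have hFT_big : ∀ ρ : ℝ, (Fintype.card F : ℝ) ≤ ρ → ∀ ξ,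
      phiFT F n ψ ρ ξ = if ξ = 0 then ((Fintype.card F : ℂ)) ^ n else 0 := by
    intro ρ hρ ξ
    have h : ballG F n ρ = Set.univ := by
      simp [ballG, not_lt.2 (le_trans hq1 hρ), not_lt.2 hρ]
    rw [phiFT, h]
    simp only [Set.indicator_univ, one_mul]
    exact key_sum F n ψ hψ ξ
  refine ⟨?_, ?_, ?_⟩
  · -- ball size
    intro ρ hρ
    rw [Real.rpow_natCast]
    rcases lt_or_ge ρ 1 with h1 | h1
    · simp [ballG, if_pos h1]
      positivity
    rcases lt_or_ge ρ (Fintype.card F : ℝ) with h2 | h2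
    · simp only [ballG, not_lt.2 h1, if_false, if_pos h2, Set.ncard_singleton, Nat.cast_one]
      calc (1:ℝ) = 1 ^ n := (one_pow n).symm
        _ ≤ ρ ^ n := pow_le_pow_left₀ zero_le_one h1 n
    · simp only [ballG, not_lt.2 h1, if_false, not_lt.2 h2, Set.ncard_univ, Nat.card_eq_fintype_card]
      rw [Fintype.card_pi]
      simp only [Finset.prod_const, Finset.card_univ, Fintype.card_fin]
      push_cast
      exact pow_le_pow_left₀ (le_of_lt hq0) h2 n
  · -- decay
    intro ρ hρ s hs ξ hξ
    have hs0 : 0 < s := lt_of_lt_of_le (by positivity) hs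
    rcases lt_or_ge ρ 1 with h1 | h1
    · rw [hFT_small ρ h1 ξ]
      simp
      positivity
    rcases lt_or_ge ρ (Fintype.card F : ℝ) with h2 | h2
    · -- phiFT = 1; need s < 1 hence s^{-n} ≥ 1
      rw [hFT_mid ρ h1 h2 ξ]
      have hslt1 : s < 1 := by
        by_contra h
        push_neg at h
        apply hξ
        simp [ballH, not_lt.2 (le_trans (inv_le_one_of_one_le₀ hq1) h), not_lt.2 h]
      simp only [norm_one]
      rw [Real.rpow_neg (le_of_lt hs0), Real.rpow_natCast,
        le_inv_comm₀ one_pos (by positivity), inv_one]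
      exact pow_le_one₀ (le_of_lt hs0) (le_of_lt hslt1)
    · rw [hFT_big ρ h2 ξ]
      by_cases hz : ξ = 0
      · -- then -ξ = 0 ∉ ballH s forces s < q⁻¹
        have hsq : s < ((Fintype.card F : ℝ))⁻¹ := by
          by_contra h
          push_neg at h
          apply hξ
          rcases lt_or_ge s 1 with h3 | h3
          · simp [ballH, not_lt.2 h, if_pos h3, hz]
          · simp [ballH, not_lt.2 h, not_lt.2 h3]
        rw [if_pos hz]
        rw [norm_pow]
        simp only [Complex.norm_natCast]
        rw [Real.rpow_neg (le_of_lt hs0), Real.rpow_natCast,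
          le_inv_comm₀ (by positivity) (by positivity)]
        calc s ^ n ≤ ((Fintype.card F : ℝ)⁻¹) ^ n :=
              pow_le_pow_left₀ (le_of_lt hs0) (le_of_lt hsq) n
          _ = ((Fintype.card F : ℝ) ^ n)⁻¹ := by rw [inv_pow]
      · rw [if_neg hz]
        simp only [norm_zero]
        positivity
  · -- L¹ bound
    intro ρ hρ
    rcases lt_or_ge ρ 1 with h1 | h1
    · simp only [hFT_small ρ h1]
      simp
    rcases lt_or_ge ρ (Fintype.card F : ℝ) with h2 | h2
    · simp only [hFT_mid ρ h1 h2]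
      simp only [norm_one, Finset.sum_const, Finset.card_univ, nsmul_eq_mul, mul_one]
      rw [inv_mul_le_iff₀ (by positivity), mul_one, Fintype.card_pi]
      simp only [Finset.prod_const, Finset.card_univ, Fintype.card_fin]
      push_cast
      exact le_refl _
    · simp only [hFT_big ρ h2]
      rw [Finset.sum_eq_single (0 : Fin n → F) (fun b _ hb => by simp [hb]) (by simp),
        if_pos rfl, norm_pow, Complex.norm_natCast, inv_mul_le_iff₀ (by positivity), mul_one]
end

section
/- Let μ be the pushforward to ℚ_p^n of the Haar probability measure on ℤ_p^{n-1} under ω ↦ (ω, ω₁²+⋯+ω_{n-1}²), where p is an odd prime. Then μ(B_ρ(ξ)) ≤ ρ^{n-1} for all ξ ∈ ℚ_p^n and ρ > 0, where B_ρ(ξ) is the ball of radius ρ in the ℓ^∞ p-adic norm ‖x‖ = max_j |x_j|_p. -/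
open MeasureTheory ENNReal

/-- The graphing map of the paraboloid `ω ↦ (ω, ω₁² + ⋯ + ω_{n-1}²)` over `ℚ_p`. -/
noncomputable def padicParab (p : ℕ) [Fact p.Prime] (n : ℕ)
    (ω : Fin (n - 1) → ℤ_[p]) : Fin n → ℚ_[p] :=
  fun i => if h : (i : ℕ) < n - 1 then (ω ⟨i, h⟩ : ℚ_[p])
    else ∑ j : Fin (n - 1), (ω j : ℚ_[p]) ^ 2

section aux

variable {p : ℕ} [Fact p.Prime]

/-- Discreteness of the `p`-adic norm. -/
lemma padic_aux_norm_le {y : ℚ_[p]} {ρ : ℝ} {k : ℕ}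
    (hk : ∀ t : ℤ, (p : ℝ) ^ t ≤ ρ → t ≤ -(k : ℤ))
    (hy : ‖y‖ ≤ ρ) : ‖y‖ ≤ (p : ℝ) ^ (-(k : ℤ)) := by
  have hp1 : (1 : ℝ) < p := by exact_mod_cast (Fact.out : p.Prime).one_lt
  rcases eq_or_ne y 0 with rfl | h
  · simp only [norm_zero]
    positivity
  · rw [Padic.norm_eq_zpow_neg_valuation h] at hy ⊢
    exact zpow_le_zpow_right₀ hp1.le (hk _ hy)

/-- Measure of the kernel ball in `(ℤ_p)^m`. -/
lemma padic_aux_ker_measure (k m : ℕ) [MeasurableSpace ℤ_[p]] [BorelSpace ℤ_[p]]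
    (μ : Measure (Fin m → ℤ_[p])) [IsProbabilityMeasure μ] [μ.IsAddLeftInvariant] :
    μ {ω : Fin m → ℤ_[p] | ∀ i, ‖ω i‖ ≤ (p : ℝ) ^ (-(k : ℤ))} = ((p : ℝ≥0∞) ^ (k * m))⁻¹ := by
  have hp : p.Prime := Fact.out
  haveI : NeZero (p ^ k) := ⟨pow_ne_zero _ hp.ne_zero⟩
  set H : Set (Fin m → ℤ_[p]) := {ω | ∀ i, ‖ω i‖ ≤ (p : ℝ) ^ (-(k : ℤ))} with hH
  have hmem : ∀ x : ℤ_[p], ‖x‖ ≤ (p : ℝ) ^ (-(k : ℤ)) ↔ PadicInt.toZModPow k x = 0 := by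
    intro x
    rw [PadicInt.norm_le_pow_iff_mem_span_pow, ← PadicInt.ker_toZModPow, RingHom.mem_ker]
  have hHmeas : MeasurableSet H := by
    have : H = ⋂ i, (fun ω : Fin m → ℤ_[p] => ω i) ⁻¹'
        (Metric.closedBall 0 ((p : ℝ) ^ (-(k : ℤ)))) := by
      ext ω
      simp [hH, Metric.mem_closedBall, dist_zero_right]
    rw [this]
    exact MeasurableSet.iInter fun i => (measurable_pi_apply i) measurableSet_closedBall
  set f : (Fin m → ℤ_[p]) → (Fin m → ZMod (p ^ k)) :=
    fun ω i => PadicInt.toZModPow k (ω i) with hf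
  have hH0 : H = f ⁻¹' {0} := by
    ext ω
    simp only [hH, Set.mem_setOf_eq, Set.mem_preimage, Set.mem_singleton_iff, hf, funext_iff,
      Pi.zero_apply]
    exact forall_congr' fun i => hmem (ω i)
  have key : ∀ c : Fin m → ZMod (p ^ k),
      f ⁻¹' {c} = (fun x => (-(fun i => ((c i).val : ℤ_[p]))) + x) ⁻¹' H := by
    intro c
    ext x
    simp only [Set.mem_preimage, Set.mem_singleton_iff, hH0, hf, funext_iff, Pi.zero_apply,
      Pi.add_apply, Pi.neg_apply, map_add, map_neg, map_natCast, ZMod.natCast_zmod_val]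
    exact forall_congr' fun i => by rw [neg_add_eq_zero, eq_comm]
  have keymeas : ∀ c : Fin m → ZMod (p ^ k), MeasurableSet (f ⁻¹' {c}) := by
    intro c
    rw [key c]
    exact (measurable_const_add _) hHmeas
  have keymu : ∀ c : Fin m → ZMod (p ^ k), μ (f ⁻¹' {c}) = μ H := by
    intro c
    rw [key c]
    exact measure_preimage_add μ _ H
  have hdisj : Pairwise (Function.onFun Disjoint
      fun c : Fin m → ZMod (p ^ k) => f ⁻¹' {c}) := by
    intro a b hab
    refine Set.disjoint_left.mpr fun x hxa hxb => hab ?_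
    rw [Set.mem_preimage, Set.mem_singleton_iff] at hxa hxb
    rw [← hxa, ← hxb]
  have hcover : (⋃ c : Fin m → ZMod (p ^ k), f ⁻¹' {c}) = Set.univ := by
    ext x
    simp
  have h1 : (1 : ℝ≥0∞) = (Fintype.card (Fin m → ZMod (p ^ k)) : ℝ≥0∞) * μ H := by
    calc (1 : ℝ≥0∞) = μ Set.univ := (measure_univ).symm
      _ = μ (⋃ c : Fin m → ZMod (p ^ k), f ⁻¹' {c}) := by rw [hcover]
      _ = ∑' c : Fin m → ZMod (p ^ k), μ (f ⁻¹' {c}) := measure_iUnion hdisj keymeas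
      _ = ∑ c : Fin m → ZMod (p ^ k), μ (f ⁻¹' {c}) := tsum_fintype _
      _ = ∑ _c : Fin m → ZMod (p ^ k), μ H := by simp only [keymu]
      _ = (Fintype.card (Fin m → ZMod (p ^ k)) : ℝ≥0∞) * μ H := by
          rw [Finset.sum_const, Finset.card_univ, nsmul_eq_mul]
  have hcard : (Fintype.card (Fin m → ZMod (p ^ k)) : ℝ≥0∞) = (p : ℝ≥0∞) ^ (k * m) := by
    rw [Fintype.card_fun, ZMod.card, Fintype.card_fin]
    push_cast
    rw [← pow_mul]
  rw [hcard] at h1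
  have hne : ((p : ℝ≥0∞)) ^ (k * m) ≠ 0 :=
    pow_ne_zero _ (by exact_mod_cast hp.ne_zero)
  have hnt : ((p : ℝ≥0∞)) ^ (k * m) ≠ ⊤ := pow_ne_top (natCast_ne_top p)
  calc μ H = ((p : ℝ≥0∞) ^ (k * m))⁻¹ * ((p : ℝ≥0∞) ^ (k * m) * μ H) := by
        rw [← mul_assoc, ENNReal.inv_mul_cancel hne hnt, one_mul]
    _ = ((p : ℝ≥0∞) ^ (k * m))⁻¹ := by rw [← h1, mul_one]

end aux

theorem stmt_11 (p : ℕ) [Fact p.Prime] (hodd : Odd p) (n : ℕ) (hn : 2 ≤ n)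
    [MeasurableSpace ℚ_[p]] [BorelSpace ℚ_[p]]
    [MeasurableSpace ℤ_[p]] [BorelSpace ℤ_[p]]
    (mZ : Measure (Fin (n - 1) → ℤ_[p])) [IsProbabilityMeasure mZ] [mZ.IsAddLeftInvariant]
    (ξ : Fin n → ℚ_[p]) (ρ : ℝ) (hρ : 0 < ρ) :
    mZ.map (padicParab p n) {x : Fin n → ℚ_[p] | ‖x - ξ‖ ≤ ρ}
      ≤ ENNReal.ofReal (ρ ^ ((n : ℝ) - 1)) := by
  have hp : p.Prime := Fact.out
  have hp1 : (1 : ℝ) < p := by exact_mod_cast hp.one_lt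
  have hmn : ((n - 1 : ℕ) : ℝ) = (n : ℝ) - 1 := by
    have h1 : (1 : ℕ) ≤ n := le_trans one_le_two hn
    push_cast [Nat.cast_sub h1]
    ring
  rw [← hmn, Real.rpow_natCast]
  have hcont : Continuous (padicParab p n) := by
    apply continuous_pi
    intro i
    unfold padicParab
    by_cases h : (i : ℕ) < n - 1
    · simp only [dif_pos h]
      exact continuous_subtype_val.comp (continuous_apply _)
    · simp only [dif_neg h]
      exact continuous_finset_sum _ fun j _ =>
        (continuous_subtype_val.comp (continuous_apply j)).pow 2
  have hmeasf : Measurable (padicParab p n) := hcont.measurable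
  have hsmeas : MeasurableSet {x : Fin n → ℚ_[p] | ‖x - ξ‖ ≤ ρ} := by
    have : {x : Fin n → ℚ_[p] | ‖x - ξ‖ ≤ ρ} = Metric.closedBall ξ ρ := by
      ext x
      simp [Metric.mem_closedBall, dist_eq_norm]
    rw [this]
    exact measurableSet_closedBall
  rw [Measure.map_apply hmeasf hsmeas]
  by_cases hρ1 : 1 ≤ ρ
  · calc mZ _ ≤ 1 := prob_le_one
      _ ≤ ENNReal.ofReal (ρ ^ (n - 1)) := by
          rw [ENNReal.one_le_ofReal]
          exact one_le_pow₀ hρ1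
  · push_neg at hρ1
    set k : ℕ := (-⌊Real.logb p ρ⌋).toNat with hkdef
    have hlog : Real.logb p ρ < 0 := Real.logb_neg hp1 hρ hρ1
    have hfl : ⌊Real.logb p ρ⌋ < 0 := Int.floor_lt.mpr (by exact_mod_cast hlog)
    have hkz : (k : ℤ) = -⌊Real.logb p ρ⌋ := Int.toNat_of_nonneg (by omega)
    have hk1 : (p : ℝ) ^ (-(k : ℤ)) ≤ ρ := by
      have hle : ((-(k : ℤ) : ℤ) : ℝ) ≤ Real.logb p ρ := by
        rw [hkz, neg_neg]
        exact_mod_cast Int.floor_le _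
      calc (p : ℝ) ^ (-(k : ℤ)) = (p : ℝ) ^ ((-(k : ℤ) : ℤ) : ℝ) :=
            (Real.rpow_intCast _ _).symm
        _ ≤ (p : ℝ) ^ Real.logb p ρ :=
            Real.rpow_le_rpow_left_iff hp1 |>.mpr hle
        _ = ρ := Real.rpow_logb (by positivity) (ne_of_gt hp1) hρ
    have hk2 : ∀ t : ℤ, (p : ℝ) ^ t ≤ ρ → t ≤ -(k : ℤ) := by
      intro t ht
      have h1 : ((t : ℤ) : ℝ) ≤ Real.logb p ρ := by
        rw [Real.le_logb_iff_rpow_le hp1 hρ, Real.rpow_intCast]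
        exact ht
      have h2 : t ≤ ⌊Real.logb p ρ⌋ := Int.le_floor.mpr h1
      omega
    set S := padicParab p n ⁻¹' {x : Fin n → ℚ_[p] | ‖x - ξ‖ ≤ ρ} with hS
    rcases Set.eq_empty_or_nonempty S with hSe | ⟨ω₀, hω₀⟩
    · rw [hSe, measure_empty]
      exact zero_le
    · have hpos : (0 : ℝ) < (p : ℝ) ^ (-(k : ℤ)) := by positivity
      have hsub : S ⊆ (fun x => (-ω₀) + x) ⁻¹'
          {ω : Fin (n - 1) → ℤ_[p] | ∀ i, ‖ω i‖ ≤ (p : ℝ) ^ (-(k : ℤ))} := by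
        intro ω hω
        intro i
        have hi : (i : ℕ) < n - 1 := i.2
        set j : Fin n := ⟨(i : ℕ), lt_of_lt_of_le hi (Nat.sub_le n 1)⟩ with hj
        have hval : ∀ τ : Fin (n - 1) → ℤ_[p], padicParab p n τ j = (τ i : ℚ_[p]) := by
          intro τ
          show (if h : ((j : ℕ)) < n - 1 then (τ ⟨j, h⟩ : ℚ_[p])
            else ∑ l : Fin (n - 1), (τ l : ℚ_[p]) ^ 2) = (τ i : ℚ_[p])
          rw [dif_pos hi]
        have hb : ∀ τ : Fin (n - 1) → ℤ_[p], τ ∈ S → ‖(τ i : ℚ_[p]) - ξ j‖ ≤ ρ := by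
          intro τ hτ
          have h1 : ‖(padicParab p n τ - ξ) j‖ ≤ ‖padicParab p n τ - ξ‖ :=
            norm_le_pi_norm _ j
          have h2 : ‖padicParab p n τ - ξ‖ ≤ ρ := hτ
          rw [Pi.sub_apply, hval τ] at h1
          exact le_trans h1 h2
        have hq : ‖((ω i : ℚ_[p]) - ξ j) + (ξ j - (ω₀ i : ℚ_[p]))‖ ≤ ρ := by
          refine le_trans (Padic.nonarchimedean _ _) ?_
          refine max_le (hb ω hω) ?_
          rw [← norm_neg, neg_sub]
          exact hb ω₀ hω₀
        have hq2 : ‖((ω i - ω₀ i : ℤ_[p]) : ℚ_[p])‖ ≤ (p : ℝ) ^ (-(k : ℤ)) := by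
          apply padic_aux_norm_le hk2
          convert hq using 2
          push_cast
          ring
        show ‖(-ω₀ + ω) i‖ ≤ (p : ℝ) ^ (-(k : ℤ))
        have : (-ω₀ + ω) i = ω i - ω₀ i := by
          simp [sub_eq_neg_add]
        rw [this, PadicInt.norm_def]
        exact hq2
      calc mZ S ≤ mZ ((fun x => (-ω₀) + x) ⁻¹'
            {ω : Fin (n - 1) → ℤ_[p] | ∀ i, ‖ω i‖ ≤ (p : ℝ) ^ (-(k : ℤ))}) :=
            measure_mono hsub
        _ = mZ {ω : Fin (n - 1) → ℤ_[p] | ∀ i, ‖ω i‖ ≤ (p : ℝ) ^ (-(k : ℤ))} :=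
            measure_preimage_add mZ _ _
        _ = ((p : ℝ≥0∞) ^ (k * (n - 1)))⁻¹ := padic_aux_ker_measure k (n - 1) mZ
        _ = ENNReal.ofReal (((p : ℝ) ^ (-(k : ℤ))) ^ (n - 1)) := by
            rw [ENNReal.ofReal_pow hpos.le]
            have h3 : ENNReal.ofReal ((p : ℝ) ^ (-(k : ℤ))) = ((p : ℝ≥0∞) ^ k)⁻¹ := by
              rw [zpow_neg, zpow_natCast, ENNReal.ofReal_inv_of_pos (by positivity),
                ENNReal.ofReal_pow (by positivity), ENNReal.ofReal_natCast]
            rw [h3, ← ENNReal.inv_pow, ← pow_mul]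
        _ ≤ ENNReal.ofReal (ρ ^ (n - 1)) := by
            apply ENNReal.ofReal_le_ofReal
            exact pow_le_pow_left₀ hpos.le hk1 _
end
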